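/- arXiv:2406.03693 — 5 statements merged into one kernel-verified Lean document; each statement's English description precedes it below -/
import Mathlib

section
/- The code C_k(A,v) with v = (1,…,1) is the extended code of C_4 with respect to the vector w: explicitly, C_k(A,1) = { (c_1, …, c_{n+1}, Σ_{i=1}^{n+1} w_i c_i) : (c_1,…,c_{n+1}) ∈ C_4 }, where w_i = α_i^{n−k+1} · Π_{1≤j≤n, j≠i} (α_i − α_j)^{−1} for 1 ≤ i ≤ n, and w_{n+1} = δ − (Σ_{i=1}^n α_i)^2 + Σ_{1≤i<j≤n} α_i α_j. -/
/-- The k×(n+1) matrix `G_4`: for `1 ≤ i ≤ k-1` the `i`-th row is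
`(α_1^{i-1}, …, α_n^{i-1}, 0)`, and the `k`-th row is `(α_1^k, …, α_n^k, 1)`. -/
noncomputable def G4mat (F : Type*) [Field F] (n k : ℕ) (α : Fin n → F) :
    Fin k → Fin (n + 1) → F := fun i j =>
  if hj : (j : ℕ) < n then α ⟨j, hj⟩ ^ (if (i : ℕ) = k - 1 then k else (i : ℕ))
  else if (i : ℕ) = k - 1 then 1 else 0

/-- The k×(n+2) matrix `G_k` with all multipliers `v_i = 1`: for `1 ≤ i ≤ k-2` the `i`-th row is
`(α_1^{i-1}, …, α_n^{i-1}, 0, 0)`, the `(k-1)`-th row is `(α_1^{k-2}, …, α_n^{k-2}, 0, 1)`,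
and the `k`-th row is `(α_1^k, …, α_n^k, 1, δ)`. -/
noncomputable def Gkmat1 (F : Type*) [Field F] (n k : ℕ) (α : Fin n → F) (δ : F) :
    Fin k → Fin (n + 2) → F := fun i j =>
  if hj : (j : ℕ) < n then α ⟨j, hj⟩ ^ (if (i : ℕ) = k - 1 then k else (i : ℕ))
  else if (j : ℕ) = n then (if (i : ℕ) = k - 1 then 1 else 0)
  else if (i : ℕ) = k - 2 then 1 else if (i : ℕ) = k - 1 then δ else 0

/-- The extension vector `w`: `w_i = α_i^{n-k+1} · ∏_{j ≠ i} (α_i - α_j)⁻¹` for `1 ≤ i ≤ n`,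
and `w_{n+1} = δ - (∑ α_i)² + ∑_{i<j} α_i α_j`. -/
noncomputable def wvec (F : Type*) [Field F] (n k : ℕ) (α : Fin n → F) (δ : F) :
    Fin (n + 1) → F := fun i =>
  if hi : (i : ℕ) < n then
    α ⟨i, hi⟩ ^ (n - k + 1) * ∏ j ∈ Finset.univ.erase ⟨i, hi⟩, (α ⟨i, hi⟩ - α j)⁻¹
  else δ - (∑ i, α i) ^ 2 + ∑ i, ∑ j ∈ Finset.Ioi i, α i * α j

section ExtAux
open Polynomial Finset
variable {F : Type*} [Field F]

theorem ioi_castSucc_sum {n : ℕ} {M : Type*} [AddCommMonoid M] (i : Fin n) (f : Fin (n+1) → M) :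
    ∑ j ∈ Ioi (Fin.castSucc i), f j = f (Fin.last n) + ∑ j ∈ Ioi i, f (Fin.castSucc j) := by
  have h : Ioi (Fin.castSucc i) =
      insert (Fin.last n) ((Ioi i).map (Fin.castSuccEmb)) := by
    ext j
    refine Fin.lastCases ?_ (fun j0 => ?_) j
    · simp [Fin.castSucc_lt_last]
    · simp only [mem_Ioi, mem_insert, mem_map, Fin.castSuccEmb, Fin.castSucc_lt_castSucc_iff]
      constructor
      · intro hlt
        exact Or.inr ⟨j0, hlt, rfl⟩
      · rintro (he | ⟨a, ha, he⟩)
        · exact absurd he (Fin.castSucc_lt_last j0).ne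
        · rcases Fin.castSucc_injective n he with rfl; exact ha
  rw [h, sum_insert, sum_map]
  · rfl
  · simp only [mem_map, Fin.castSuccEmb, not_exists]
    rintro x ⟨_, he⟩
    exact (Fin.castSucc_lt_last x).ne he

theorem ioi_last_empty {n : ℕ} : (Ioi (Fin.last n)) = ∅ := by
  ext j; simp [Fin.le_last j, not_lt.mpr]

theorem double_ioi_snoc {n : ℕ} (β : Fin (n+1) → F) :
    ∑ i, ∑ j ∈ Ioi i, β i * β j
      = (∑ i : Fin n, ∑ j ∈ Ioi i, β (Fin.castSucc i) * β (Fin.castSucc j))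
        + (∑ i : Fin n, β (Fin.castSucc i)) * β (Fin.last n) := by
  rw [Fin.sum_univ_castSucc, ioi_last_empty, sum_empty, add_zero, sum_mul,
    ← Finset.sum_add_distrib]
  refine sum_congr rfl fun i _ => ?_
  rw [ioi_castSucc_sum, add_comm]
theorem ioi_last_empty' {n : ℕ} : (Ioi (Fin.last n)) = ∅ := by
  ext j; simp [Fin.le_last j, not_lt.mpr]

theorem nodal_coeff_two : ∀ (m : ℕ) (β : Fin (m+2) → F),
    (∏ i, (X - C (β i))).coeff m = ∑ i, ∑ j ∈ Ioi i, β i * β j := by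
  intro m
  induction m with
  | zero =>
    intro β
    rw [Fin.prod_univ_two, mul_coeff_zero]
    simp only [coeff_sub, coeff_X_zero, coeff_C_zero, zero_sub, neg_mul_neg]
    rw [Fin.sum_univ_two]
    have h0 : Ioi (0 : Fin 2) = {1} := by decide
    have h1 : Ioi (1 : Fin 2) = ∅ := by decide
    simp [h0, h1]
  | succ m ih =>
    intro β
    rw [Fin.prod_univ_castSucc]
    set Q : F[X] := ∏ i : Fin (m+2), (X - C (β (Fin.castSucc i))) with hQ
    have hQcoeff : Q.coeff (m+1) = -∑ i : Fin (m+2), β (Fin.castSucc i) := by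
      have := prod_X_sub_C_coeff_card_pred (univ : Finset (Fin (m+2)))
        (fun i => β (Fin.castSucc i)) (by simp)
      simpa using this
    have hexp : Q * (X - C (β (Fin.last (m+2)))) = Q * X - C (β (Fin.last (m+2))) * Q := by
      ring
    rw [hexp, coeff_sub, coeff_mul_X, coeff_C_mul, ih, hQcoeff]
    conv_rhs => rw [double_ioi_snoc]
    ring

theorem coeff_basis' (n : ℕ) (α : Fin n → F) (j : Fin n) :
    (Lagrange.basis Finset.univ α j).coeff (n-1) = Lagrange.nodalWeight Finset.univ α j := by
  rw [Lagrange.basis_eq_prod_sub_inv_mul_nodal_div (mem_univ j),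
    ← Lagrange.nodal_erase_eq_nodal_div (mem_univ j), coeff_C_mul]
  have h : (Lagrange.nodal (univ.erase j) α).natDegree = n - 1 := by
    simp [Lagrange.natDegree_nodal, card_erase_of_mem]
  rw [← h, Polynomial.Monic.coeff_natDegree Lagrange.nodal_monic, mul_one]

theorem coeff_interp (n : ℕ) (α : Fin n → F) (r : Fin n → F) :
    (Lagrange.interpolate Finset.univ α r).coeff (n-1)
      = ∑ j, r j * Lagrange.nodalWeight Finset.univ α j := by
  rw [Lagrange.interpolate_apply, finset_sum_coeff]
  exact Finset.sum_congr rfl fun j _ => by rw [coeff_C_mul, coeff_basis']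

theorem sum_low (n : ℕ) (α : Fin n → F) (hα : Function.Injective α) (t : ℕ) (ht : t < n) :
    ∑ j, α j ^ t * Lagrange.nodalWeight Finset.univ α j = if t = n - 1 then 1 else 0 := by
  have hdeg : (X ^ t : F[X]).degree < (Finset.univ : Finset (Fin n)).card := by
    simpa [degree_X_pow] using (by exact_mod_cast ht : ((t:ℕ) : WithBot ℕ) < (n : WithBot ℕ))
  have h := Lagrange.eq_interpolate (f := (X ^ t : F[X])) hα.injOn hdeg
  have h2 := congrArg (fun p => Polynomial.coeff p (n-1)) h
  simp only [coeff_interp] at h2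
  simp only [eval_pow, eval_X] at h2
  rw [← h2, coeff_X_pow]
  by_cases h3 : t = n - 1 <;> simp [h3, eq_comm]

set_option maxHeartbeats 1000000 in
theorem sum_high (m : ℕ) (α : Fin (m+3) → F) (hα : Function.Injective α) :
    ∑ j, α j ^ (m+4) * Lagrange.nodalWeight Finset.univ α j
      = (∑ i, α i)^2 - ∑ i, ∑ j ∈ Ioi i, α i * α j := by
  have hPmonic : (∏ i : Fin (m+3), (X - C (α i))).Monic :=
    monic_prod_of_monic _ _ fun i _ => monic_X_sub_C (α i)
  have hPdeg : (∏ i : Fin (m+3), (X - C (α i))).natDegree = m + 3 := by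
    rw [natDegree_prod_of_monic _ _ fun i _ => monic_X_sub_C (α i)]
    simp
  have hPn : (∏ i : Fin (m+3), (X - C (α i))).coeff (m+3) = 1 := by
    have h := hPmonic.coeff_natDegree
    rwa [hPdeg] at h
  have hPn1 : (∏ i : Fin (m+3), (X - C (α i))).coeff (m+2) = -∑ i, α i := by
    have := prod_X_sub_C_coeff_card_pred (univ : Finset (Fin (m+3))) α (by simp)
    simpa using this
  have hPn2 : (∏ i : Fin (m+3), (X - C (α i))).coeff (m+1) = ∑ i, ∑ j ∈ Ioi i, α i * α j := by
    exact nodal_coeff_two (m+1) α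
  have hPhigh : ∀ l, m + 3 < l → (∏ i : Fin (m+3), (X - C (α i))).coeff l = 0 := by
    intro l hl
    exact
    coeff_eq_zero_of_natDegree_lt (by rw [hPdeg]; exact hl)
  have hgcoeff : ∀ l : ℕ, 1 ≤ l → ((X + C (∑ i, α i)) * ∏ i : Fin (m+3), (X - C (α i))).coeff l
      = (∏ i : Fin (m+3), (X - C (α i))).coeff (l-1)
        + (∑ i, α i) * (∏ i : Fin (m+3), (X - C (α i))).coeff l := by
    intro l hl
    obtain ⟨l', rfl⟩ := Nat.exists_eq_add_of_le hl
    rw [add_mul, coeff_add, coeff_C_mul, add_comm 1 l', coeff_X_mul]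
    simp
  have hfcoeff : ∀ l, m + 3 ≤ l →
      (X^(m+4) - (X + C (∑ i, α i)) * ∏ i : Fin (m+3), (X - C (α i))).coeff l = 0 := by
    intro l hl
    rw [coeff_sub, coeff_X_pow, hgcoeff l (by omega)]
    by_cases h1 : l = m + 3
    · subst h1
      rw [if_neg (by omega)]
      have : m + 3 - 1 = m + 2 := by omega
      rw [this, hPn1, hPn]
      ring
    · by_cases h2 : l = m + 4
      · subst h2
        rw [if_pos rfl]
        have : m + 4 - 1 = m + 3 := by omega
        rw [this, hPn, hPhigh (m+4) (by omega)]
        ring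
      · rw [if_neg (by omega), hPhigh (l-1) (by omega), hPhigh l (by omega)]
        ring
  have hfdeg : (X^(m+4) - (X + C (∑ i, α i)) * ∏ i : Fin (m+3), (X - C (α i))).degree
      < (((univ : Finset (Fin (m+3))).card : ℕ) : WithBot ℕ) := by
    rw [card_univ, Fintype.card_fin]
    exact (degree_lt_iff_coeff_zero _ _).mpr fun l hl => hfcoeff l (by exact_mod_cast hl)
  have heval : ∀ i : Fin (m+3),
      (X^(m+4) - (X + C (∑ i, α i)) * ∏ i : Fin (m+3), (X - C (α i))).eval (α i)
        = α i ^ (m+4) := by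
    intro i
    have hP0 : (∏ i : Fin (m+3), (X - C (α i))).eval (α i) = 0 := by
      rw [eval_prod]
      exact prod_eq_zero (mem_univ i) (by simp)
    simp [hP0]
  have hinterp := Lagrange.eq_interpolate
    (f := X^(m+4) - (X + C (∑ i, α i)) * ∏ i : Fin (m+3), (X - C (α i))) hα.injOn hfdeg
  have h2 := congrArg (fun p => Polynomial.coeff p (m+3-1)) hinterp
  rw [coeff_interp] at h2
  have hcl : (X^(m+4) - (X + C (∑ i, α i)) * ∏ i : Fin (m+3), (X - C (α i))).coeff (m+3-1)
      = (∑ i, α i)^2 - ∑ i, ∑ j ∈ Ioi i, α i * α j := by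
    have h3 : m + 3 - 1 = m + 2 := by omega
    rw [h3, coeff_sub, coeff_X_pow, if_neg (by omega), hgcoeff _ (by omega)]
    have h4 : m + 2 - 1 = m + 1 := by omega
    rw [h4, hPn2, hPn1]
    ring
  rw [← hcl, h2]
  refine sum_congr rfl fun j _ => ?_
  rw [heval j]

/-- the extension linear map -/
noncomputable def extMap (F : Type*) [Field F] (n : ℕ) (w : Fin (n+1) → F) :
    (Fin (n + 1) → F) →ₗ[F] (Fin (n + 2) → F) where
  toFun c := Fin.snoc c (∑ i, w i * c i)
  map_add' c d := by
    funext j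
    refine Fin.lastCases ?_ (fun j0 => ?_) j
    · simp [Fin.snoc_last, mul_add, Finset.sum_add_distrib]
    · simp [Fin.snoc_castSucc]
  map_smul' a c := by
    funext j
    refine Fin.lastCases ?_ (fun j0 => ?_) j
    · simp only [Fin.snoc_last, Pi.smul_apply, smul_eq_mul, RingHom.id_apply, Finset.mul_sum]
      exact Finset.sum_congr rfl fun i _ => by ring
    · simp [Fin.snoc_castSucc]

theorem row_eq (m k : ℕ) (hk : 3 ≤ k) (hkn : k ≤ m + 3) (α : Fin (m+3) → F)
    (hα : Function.Injective α) (δ : F) (i : Fin k) :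
    Gkmat1 F (m+3) k α δ i = extMap F (m+3) (wvec F (m+3) k α δ) (G4mat F (m+3) k α i) := by
  have hsum : ∑ j, wvec F (m+3) k α δ j * G4mat F (m+3) k α i j
      = (if (i:ℕ) = k-2 then 1 else if (i:ℕ) = k-1 then δ else 0) := by
    rw [Fin.sum_univ_castSucc]
    have hwc : ∀ j0 : Fin (m+3), wvec F (m+3) k α δ (Fin.castSucc j0)
        = α j0 ^ (m+3-k+1) * Lagrange.nodalWeight univ α j0 := by
      intro j0
      simp only [wvec, Fin.coe_castSucc, dif_pos j0.isLt, Fin.eta]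
      rfl
    have hwl : wvec F (m+3) k α δ (Fin.last (m+3))
        = δ - (∑ i, α i)^2 + ∑ i, ∑ j ∈ Ioi i, α i * α j := by
      simp [wvec]
    have hg4c : ∀ j0 : Fin (m+3), G4mat F (m+3) k α i (Fin.castSucc j0)
        = α j0 ^ (if (i:ℕ) = k-1 then k else (i:ℕ)) := by
      intro j0
      simp only [G4mat, Fin.coe_castSucc, dif_pos j0.isLt, Fin.eta]
    have hg4l : G4mat F (m+3) k α i (Fin.last (m+3)) = if (i:ℕ) = k-1 then 1 else 0 := by
      simp [G4mat]
    by_cases hik : (i:ℕ) = k-1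
    · have hterm : ∀ j0 : Fin (m+3),
          wvec F (m+3) k α δ (Fin.castSucc j0) * G4mat F (m+3) k α i (Fin.castSucc j0)
            = α j0 ^ (m+4) * Lagrange.nodalWeight univ α j0 := by
        intro j0
        rw [hwc, hg4c, if_pos hik]
        have he : m + 4 = k + (m+3-k+1) := by omega
        rw [he, pow_add]
        ring
      rw [Finset.sum_congr rfl fun j0 _ => hterm j0, sum_high m α hα, hwl, hg4l,
        if_pos hik, if_neg (by omega), if_pos hik]
      ring
    · have hterm : ∀ j0 : Fin (m+3),
          wvec F (m+3) k α δ (Fin.castSucc j0) * G4mat F (m+3) k α i (Fin.castSucc j0)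
            = α j0 ^ ((i:ℕ) + (m+3-k+1)) * Lagrange.nodalWeight univ α j0 := by
        intro j0
        rw [hwc, hg4c, if_neg hik, pow_add]
        ring
      have hlt : (i:ℕ) + (m+3-k+1) < m + 3 := by
        have := i.isLt
        omega
      rw [Finset.sum_congr rfl fun j0 _ => hterm j0, sum_low (m+3) α hα _ hlt, hg4l,
        if_neg hik, if_neg hik, mul_zero, add_zero]
      have hiff : ((i:ℕ) + (m+3-k+1) = m + 3 - 1) ↔ ((i:ℕ) = k - 2) := by
        have := i.isLt
        omega
      by_cases h2 : (i:ℕ) = k - 2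
      · rw [if_pos (hiff.mpr h2), if_pos h2]
      · rw [if_neg (fun h => h2 (hiff.mp h)), if_neg h2]
  have hL : extMap F (m+3) (wvec F (m+3) k α δ) (G4mat F (m+3) k α i)
      = Fin.snoc (G4mat F (m+3) k α i)
          (∑ j, wvec F (m+3) k α δ j * G4mat F (m+3) k α i j) := rfl
  rw [hL]
  funext j
  refine Fin.lastCases ?_ (fun j1 => ?_) j
  · rw [Fin.snoc_last, hsum]
    have : ((Fin.last (m+3+1) : Fin (m+3+2)) : ℕ) = m + 4 := rfl
    simp only [Gkmat1, this]
    rw [dif_neg (by omega), if_neg (by omega)]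
  · rw [Fin.snoc_castSucc]
    by_cases h : (j1:ℕ) < m+3
    · simp only [Gkmat1, G4mat, Fin.coe_castSucc, dif_pos h]
    · have hj : (j1:ℕ) = m+3 := by have := j1.isLt; omega
      simp only [Gkmat1, G4mat, Fin.coe_castSucc, dif_neg h, if_pos hj]


end ExtAux

/-- `C_k(A,1)` is the extended code of `C_4` with respect to the vector `w`. -/
theorem stmt_0 (F : Type*) [Field F] [Fintype F] (n k : ℕ)
    (hk : 3 ≤ k) (hkn : k ≤ n) (hnq : n ≤ Fintype.card F)
    (α : Fin n → F) (hα : Function.Injective α) (δ : F) :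
    (Submodule.span F (Set.range (Gkmat1 F n k α δ)) : Set (Fin (n + 2) → F)) =
      { y : Fin (n + 2) → F | ∃ c ∈ Submodule.span F (Set.range (G4mat F n k α)),
          y = Fin.snoc c (∑ i, wvec F n k α δ i * c i) } := by
  obtain ⟨m, rfl⟩ : ∃ m, n = m + 3 := ⟨n - 3, by omega⟩
  have hrange : Set.range (Gkmat1 F (m+3) k α δ)
      = extMap F (m+3) (wvec F (m+3) k α δ) '' Set.range (G4mat F (m+3) k α) := by
    rw [← Set.range_comp]
    exact congrArg Set.range (funext fun i : Fin k => row_eq m k hk hkn α hα δ i)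
  rw [hrange, ← Submodule.map_span]
  ext y
  simp only [SetLike.mem_coe, Submodule.mem_map, Set.mem_setOf_eq]
  constructor
  · rintro ⟨c, hc, rfl⟩
    exact ⟨c, hc, rfl⟩
  · rintro ⟨c, hc, rfl⟩
    exact ⟨c, hc, rfl⟩
end

section
/- Let u_i = Π_{1≤j≤n, j≠i}(α_i − α_j)^{−1}, v_i' = u_i v_i^{−1} for 1 ≤ i ≤ n, a = −Σ_{i=1}^n α_i, and b = δ + Σ_{1≤i<j≤n} α_i α_j − (Σ_{i=1}^n α_i)^2. Then the (n−k+2)×(n+2) matrix H whose t-th row, for 1 ≤ t ≤ n−k−1, is (v_1' α_1^{t−1}, …, v_n' α_n^{t−1}, 0, 0), whose (n−k)-th row is (v_1' α_1^{n−k−1}, …, v_n' α_n^{n−k−1}, −1, 0), whose (n−k+1)-th row is (v_1' α_1^{n−k}, …, v_n' α_n^{n−k}, a, 0), and whose (n−k+2)-th row is (v_1' α_1^{n−k+1}, …, v_n' α_n^{n−k+1}, b, −1), is a parity-check matrix of C_k(A,v): H has rank n−k+2 and the row space of H equals the Euclidean dual code C_k(A,v)^⊥. -/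
/-- The Euclidean dual of a code `C ⊆ F^N`. -/
def dualCode {F : Type*} [Field F] {N : ℕ} (C : Submodule F (Fin N → F)) :
    Submodule F (Fin N → F) where
  carrier := { y | ∀ x ∈ C, ∑ i, x i * y i = 0 }
  zero_mem' := fun x _ => by simp
  add_mem' := fun {a b} ha hb x hx => by
    have h : ∑ i, x i * (a + b) i = (∑ i, x i * a i) + ∑ i, x i * b i := by
      rw [← Finset.sum_add_distrib]
      exact Finset.sum_congr rfl fun i _ => by simp [mul_add]
    rw [h, ha x hx, hb x hx, add_zero]
  smul_mem' := fun c {a} ha x hx => by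
    have h : ∑ i, x i * (c • a) i = c * ∑ i, x i * a i := by
      rw [Finset.mul_sum]
      exact Finset.sum_congr rfl fun i _ => by
        simp only [Pi.smul_apply, smul_eq_mul]; ring
    rw [h, ha x hx, mul_zero]

/-- The k×(n+2) generator matrix `G_k` of `C_k(A,v)`. -/
noncomputable def Gkmat (F : Type*) [Field F] (n k : ℕ) (α v : Fin n → F) (δ : F) :
    Fin k → Fin (n + 2) → F := fun i j =>
  if hj : (j : ℕ) < n then v ⟨j, hj⟩ * α ⟨j, hj⟩ ^ (if (i : ℕ) = k - 1 then k else (i : ℕ))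
  else if (j : ℕ) = n then (if (i : ℕ) = k - 1 then 1 else 0)
  else if (i : ℕ) = k - 2 then 1 else if (i : ℕ) = k - 1 then δ else 0

/-- The (n-k+2)×(n+2) matrix `H` of the theorem: its `t`-th row (1-based), for
`1 ≤ t ≤ n-k-1`, is `(v'_1 α_1^{t-1}, …, v'_n α_n^{t-1}, 0, 0)`; the `(n-k)`-th row is
`(v'_1 α_1^{n-k-1}, …, v'_n α_n^{n-k-1}, -1, 0)`; the `(n-k+1)`-th row is
`(v'_1 α_1^{n-k}, …, v'_n α_n^{n-k}, a, 0)`; and the `(n-k+2)`-th row is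
`(v'_1 α_1^{n-k+1}, …, v'_n α_n^{n-k+1}, b, -1)`, where `v'_i = u_i v_i⁻¹`,
`u_i = ∏_{j≠i}(α_i - α_j)⁻¹`, `a = -∑ α_i` and `b = δ + ∑_{i<j} α_i α_j - (∑ α_i)²`.
(The indexing is expressed additively to avoid truncated subtraction.) -/
noncomputable def Hmat (F : Type*) [Field F] (n k : ℕ) (α v : Fin n → F) (δ : F) :
    Fin (n - k + 2) → Fin (n + 2) → F := fun t j =>
  if hj : (j : ℕ) < n then
    (∏ l ∈ Finset.univ.erase ⟨j, hj⟩, (α ⟨j, hj⟩ - α l)⁻¹) * (v ⟨j, hj⟩)⁻¹ * α ⟨j, hj⟩ ^ (t : ℕ)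
  else if (j : ℕ) = n then
    (if (t : ℕ) + k + 1 = n then -1
     else if (t : ℕ) + k = n then -(∑ i, α i)
     else if (t : ℕ) + k = n + 1 then
       δ + (∑ i, ∑ l ∈ Finset.Ioi i, α i * α l) - (∑ i, α i) ^ 2
     else 0)
  else (if (t : ℕ) + k = n + 1 then -1 else 0)


namespace ParityCheckAux

open Polynomial Finset

variable {F : Type*} [Field F]

lemma E2_insert {n : ℕ} (f : Fin n → F) (s : Finset (Fin n)) (a : Fin n) (ha : a ∉ s) :
    ∑ i ∈ insert a s, ∑ l ∈ (insert a s).filter (fun l => i < l), f i * f l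
      = (∑ i ∈ s, ∑ l ∈ s.filter (fun l => i < l), f i * f l) + f a * ∑ l ∈ s, f l := by
  rw [Finset.sum_insert ha]
  have h1 : (insert a s).filter (fun l => a < l) = s.filter (fun l => a < l) := by
    rw [Finset.filter_insert, if_neg (lt_irrefl a)]
  have h2 : ∀ i ∈ s, ∑ l ∈ (insert a s).filter (fun l => i < l), f i * f l
      = (∑ l ∈ s.filter (fun l => i < l), f i * f l) + (if i < a then f i * f a else 0) := by
    intro i hi
    rw [Finset.filter_insert]
    by_cases hia : i < a
    · rw [if_pos hia, Finset.sum_insert (fun hmem => ha (Finset.mem_of_mem_filter a hmem)),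
        if_pos hia]; ring
    · rw [if_neg hia, if_neg hia, add_zero]
  rw [Finset.sum_congr rfl h2, Finset.sum_add_distrib, h1]
  have h3 : ∑ i ∈ s, (if i < a then f i * f a else 0)
      = ∑ i ∈ s.filter (fun i => i < a), f i * f a := (Finset.sum_filter _ _).symm
  rw [h3]
  have h4 : (∑ l ∈ s.filter (fun l => a < l), f a * f l)
      + ∑ i ∈ s.filter (fun i => i < a), f i * f a = f a * ∑ l ∈ s, f l := by
    have : ∑ i ∈ s.filter (fun i => i < a), f i * f a
        = ∑ i ∈ s.filter (fun i => ¬ a < i), f a * f i := by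
      apply Finset.sum_congr _ (fun i _ => mul_comm _ _)
      apply Finset.filter_congr
      intro i hi
      have hne : i ≠ a := fun h => ha (h ▸ hi)
      simp only [Fin.lt_def, eq_iff_iff]
      have : (i:ℕ) ≠ (a:ℕ) := fun h => hne (Fin.ext h)
      omega
    rw [this, Finset.sum_filter_add_sum_filter_not s (fun l => a < l), Finset.mul_sum]
  linear_combination h4

lemma prodXsubC_monic {n : ℕ} (f : Fin n → F) (s : Finset (Fin n)) :
    (∏ i ∈ s, (X - C (f i))).Monic :=
  monic_prod_of_monic _ _ (fun i _ => monic_X_sub_C (f i))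

lemma prodXsubC_natDegree {n : ℕ} (f : Fin n → F) (s : Finset (Fin n)) :
    (∏ i ∈ s, (X - C (f i))).natDegree = s.card := by
  rw [natDegree_prod_of_monic _ _ (fun i _ => monic_X_sub_C (f i))]
  simp [natDegree_X_sub_C]

lemma prodXsubC_coeff_top {n : ℕ} (f : Fin n → F) (s : Finset (Fin n)) :
    (∏ i ∈ s, (X - C (f i))).coeff s.card = 1 := by
  have := (prodXsubC_monic f s).coeff_natDegree
  rwa [prodXsubC_natDegree] at this

lemma coeff_XsubC_mul (c : F) (P : F[X]) (j : ℕ) :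
    ((X - C c) * P).coeff (j + 1) = P.coeff j - c * P.coeff (j + 1) := by
  rw [sub_mul, coeff_sub, coeff_X_mul, coeff_C_mul]

lemma coeff_XsubC_mul_zero (c : F) (P : F[X]) :
    ((X - C c) * P).coeff 0 = -c * P.coeff 0 := by
  rw [mul_coeff_zero]
  simp

lemma prodXsubC_coeffs {n : ℕ} (f : Fin n → F) (s : Finset (Fin n)) :
    (1 ≤ s.card → (∏ i ∈ s, (X - C (f i))).coeff (s.card - 1) = -∑ i ∈ s, f i)
    ∧ (2 ≤ s.card → (∏ i ∈ s, (X - C (f i))).coeff (s.card - 2)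
        = ∑ i ∈ s, ∑ l ∈ s.filter (fun l => i < l), f i * f l) := by
  induction s using Finset.induction_on with
  | empty => exact ⟨fun h => by simp at h, fun h => by simp at h⟩
  | @insert a s ha ih =>
    rw [Finset.prod_insert ha, Finset.card_insert_of_notMem ha]
    constructor
    · intro _
      rcases Nat.eq_zero_or_pos s.card with h0 | h1
      · have hs : s = ∅ := Finset.card_eq_zero.mp h0
        subst hs
        rw [Finset.prod_empty, mul_one, Finset.sum_insert ha, Finset.sum_empty, add_zero]
        simp
      · have e1 : s.card + 1 - 1 = (s.card - 1) + 1 := by omega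
        have e2 : (s.card - 1) + 1 = s.card := by omega
        rw [e1, coeff_XsubC_mul, e2, prodXsubC_coeff_top, ih.1 h1, Finset.sum_insert ha]
        ring
    · intro htwo
      rw [E2_insert f s a ha]
      rcases Nat.lt_or_ge s.card 2 with h1 | h2
      · rcases Nat.eq_zero_or_pos s.card with h0 | hp
        · exact absurd htwo (by omega)
        · have hc1 : s.card = 1 := by omega
          obtain ⟨b, hb⟩ := Finset.card_eq_one.mp hc1
          subst hb
          rw [Finset.prod_singleton, Finset.sum_singleton]
          rw [Finset.card_singleton]
          have h0 : Finset.filter (fun l => b < l) ({b} : Finset (Fin n)) = ∅ := by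
            rw [Finset.filter_singleton, if_neg (lt_irrefl b)]
          norm_num [coeff_XsubC_mul_zero, h0]
      · have e1 : s.card + 1 - 2 = (s.card - 2) + 1 := by omega
        have e2 : (s.card - 2) + 1 = s.card - 1 := by omega
        rw [e1, coeff_XsubC_mul, e2, ih.1 (by omega), ih.2 h2]
        ring

lemma basis_coeff {n : ℕ} (α : Fin n → F) (j : Fin n) :
    (Lagrange.basis Finset.univ α j).coeff (n - 1)
      = ∏ l ∈ Finset.univ.erase j, (α j - α l)⁻¹ := by
  have hcard : (Finset.univ.erase j).card = n - 1 := by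
    rw [Finset.card_erase_of_mem (Finset.mem_univ j), Finset.card_univ, Fintype.card_fin]
  rw [Lagrange.basis]
  have : ∀ l ∈ Finset.univ.erase j, Lagrange.basisDivisor (α j) (α l)
      = C ((α j - α l)⁻¹) * (X - C (α l)) := fun l _ => rfl
  rw [Finset.prod_congr rfl this, Finset.prod_mul_distrib, ← map_prod, ← hcard,
    coeff_C_mul, prodXsubC_coeff_top, mul_one]

lemma sum_wt_eval {n : ℕ} (α : Fin n → F) (hα : Function.Injective α)
    (p : F[X]) (hp : p.degree < (n : ℕ)) :
    ∑ j, (∏ l ∈ Finset.univ.erase j, (α j - α l)⁻¹) * p.eval (α j) = p.coeff (n - 1) := by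
  have hinj : Set.InjOn α ↑(Finset.univ : Finset (Fin n)) := fun x _ y _ h => hα h
  have hdeg : p.degree < (#(Finset.univ : Finset (Fin n)) : ℕ) := by
    rwa [Finset.card_univ, Fintype.card_fin]
  conv_rhs => rw [Lagrange.eq_interpolate hinj hdeg]
  rw [Lagrange.interpolate_apply, finset_sum_coeff]
  exact Finset.sum_congr rfl fun j _ => by rw [coeff_C_mul, basis_coeff, mul_comm]

section
variable {n : ℕ} (α : Fin n → F)

lemma cardU : (Finset.univ : Finset (Fin n)).card = n := by
  rw [Finset.card_univ, Fintype.card_fin]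

lemma nodal_eval_zero (j : Fin n) : (∏ i, (X - C (α i))).eval (α j) = 0 := by
  rw [eval_prod]
  apply Finset.prod_eq_zero (Finset.mem_univ j)
  simp

lemma nodal_degree : (∏ i, (X - C (α i))).degree = (n : WithBot ℕ) := by
  rw [degree_eq_natDegree (prodXsubC_monic α Finset.univ).ne_zero, prodXsubC_natDegree, cardU]

lemma wtsum_lt (hα : Function.Injective α) (m : ℕ) (hm : m + 1 < n) :
    ∑ j, (∏ l ∈ Finset.univ.erase j, (α j - α l)⁻¹) * α j ^ m = 0 := by
  have h := sum_wt_eval α hα (X ^ m) (by rw [degree_X_pow]; exact_mod_cast (by omega : m < n))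
  simp only [eval_pow, eval_X] at h
  rw [h, coeff_X_pow, if_neg (by omega)]

lemma wtsum_top (hα : Function.Injective α) (hn : 1 ≤ n) :
    ∑ j, (∏ l ∈ Finset.univ.erase j, (α j - α l)⁻¹) * α j ^ (n - 1) = 1 := by
  have h := sum_wt_eval α hα (X ^ (n - 1))
    (by rw [degree_X_pow]; exact_mod_cast (by omega : n - 1 < n))
  simp only [eval_pow, eval_X] at h
  rw [h, coeff_X_pow, if_pos rfl]

lemma q_spec (hn : 1 ≤ n) :
    (X ^ n - ∏ i, (X - C (α i))).degree < (n : WithBot ℕ)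
    ∧ (X ^ n - ∏ i, (X - C (α i))).coeff (n - 1) = ∑ i, α i := by
  constructor
  · have hX : (X ^ n : F[X]).degree = (n : WithBot ℕ) := degree_X_pow n
    have := degree_sub_lt (p := (X ^ n : F[X])) (q := ∏ i, (X - C (α i)))
      (by rw [hX, nodal_degree]) (pow_ne_zero n X_ne_zero)
      (by rw [leadingCoeff_X_pow, (prodXsubC_monic α _).leadingCoeff])
    rwa [hX] at this
  · rw [coeff_sub, coeff_X_pow, if_neg (by omega)]
    have h1 := (prodXsubC_coeffs α Finset.univ).1 (by rw [cardU]; omega)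
    rw [cardU] at h1
    rw [h1]
    ring

lemma wtsum_n (hα : Function.Injective α) (hn : 1 ≤ n) :
    ∑ j, (∏ l ∈ Finset.univ.erase j, (α j - α l)⁻¹) * α j ^ n = ∑ i, α i := by
  obtain ⟨hdeg, hcoeff⟩ := q_spec α hn
  have h := sum_wt_eval α hα _ hdeg
  rw [← hcoeff, ← h]
  apply Finset.sum_congr rfl
  intro j _
  rw [eval_sub, eval_pow, eval_X, nodal_eval_zero, sub_zero]

lemma wtsum_succ (hα : Function.Injective α) (hn : 3 ≤ n) :
    ∑ j, (∏ l ∈ Finset.univ.erase j, (α j - α l)⁻¹) * α j ^ (n + 1)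
      = (∑ i, α i) ^ 2 - ∑ i, ∑ l ∈ Finset.Ioi i, α i * α l := by
  set N : F[X] := ∏ i, (X - C (α i)) with hN
  set q : F[X] := X ^ n - N with hq
  obtain ⟨hdeg, hcoeff⟩ := q_spec α (by omega)
  set p : F[X] := X * q - C (∑ i, α i) * N with hp
  have hNdeg : N.natDegree = n := by rw [hN, prodXsubC_natDegree, cardU]
  have hNtop : N.coeff n = 1 := by
    have := prodXsubC_coeff_top α (Finset.univ : Finset (Fin n))
    rwa [cardU] at this
  have hpdeg : p.degree < (n : WithBot ℕ) := by
    rw [degree_lt_iff_coeff_zero]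
    intro m hm
    have hm' : n ≤ m := by exact_mod_cast hm
    obtain ⟨j, rfl⟩ : ∃ j, m = j + 1 := ⟨m - 1, by omega⟩
    rw [hp, coeff_sub, coeff_X_mul, coeff_C_mul]
    rcases Nat.eq_or_lt_of_le hm' with he | hl
    · have hj : j = n - 1 := by omega
      rw [← he, hNtop, hj, hcoeff, mul_one, sub_self]
    · rw [coeff_eq_zero_of_degree_lt (lt_of_lt_of_le hdeg (by exact_mod_cast (by omega : n ≤ j))),
        coeff_eq_zero_of_natDegree_lt (by omega : N.natDegree < j + 1), mul_zero, sub_zero]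
  have hN1 : N.coeff (n - 1) = -∑ i, α i := by
    have h1 := (prodXsubC_coeffs α Finset.univ).1 (by rw [cardU]; omega)
    rwa [cardU] at h1
  have hN2 : N.coeff (n - 2) = ∑ i, ∑ l ∈ Finset.Ioi i, α i * α l := by
    have h2 := (prodXsubC_coeffs α Finset.univ).2 (by rw [cardU]; omega)
    rw [cardU] at h2
    rw [h2]
    apply Finset.sum_congr rfl
    intro i _
    apply Finset.sum_congr _ (fun _ _ => rfl)
    ext l
    simp [Finset.mem_filter, Finset.mem_Ioi]
  have hqc : q.coeff (n - 2) = -∑ i, ∑ l ∈ Finset.Ioi i, α i * α l := by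
    rw [hq, coeff_sub, coeff_X_pow, if_neg (by omega), hN2]
    ring
  have hpcoeff : p.coeff (n - 1)
      = (∑ i, α i) ^ 2 - ∑ i, ∑ l ∈ Finset.Ioi i, α i * α l := by
    obtain ⟨j, hj⟩ : ∃ j, n - 1 = j + 1 := ⟨n - 2, by omega⟩
    have hj2 : j = n - 2 := by omega
    have hj3 : n - 2 + 1 = n - 1 := by omega
    rw [hp, coeff_sub, hj, coeff_X_mul, coeff_C_mul, hj2, hj3, hqc, hN1]
    ring
  have h := sum_wt_eval α hα p hpdeg
  rw [← hpcoeff, ← h]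
  apply Finset.sum_congr rfl
  intro j _
  rw [hp, eval_sub, eval_mul, eval_mul, eval_X, eval_C]
  rw [hq, eval_sub, eval_pow, eval_X, hN, nodal_eval_zero, sub_zero, mul_zero, sub_zero, pow_succ]
  ring

lemma wt_ne_zero (hα : Function.Injective α) (j : Fin n) :
    (∏ l ∈ Finset.univ.erase j, (α j - α l)⁻¹) ≠ 0 := by
  rw [Finset.prod_ne_zero_iff]
  intro l hl
  have : l ≠ j := (Finset.mem_erase.mp hl).1
  exact inv_ne_zero (sub_ne_zero.mpr (fun h => this (hα h.symm)))

end

lemma sum_fin_two_ext {M : Type*} [AddCommMonoid M] {n : ℕ} (f : Fin (n + 2) → M) :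
    ∑ j, f j = (∑ j : Fin n, f ⟨(j : ℕ), by omega⟩) + f ⟨n, by omega⟩ + f ⟨n + 1, by omega⟩ := by
  rw [Fin.sum_univ_castSucc, Fin.sum_univ_castSucc]
  rfl

/-- A "dot with `y` on the right" linear functional. -/
def dotR {F : Type*} [Field F] {N : ℕ} (y : Fin N → F) : (Fin N → F) →ₗ[F] F where
  toFun x := ∑ i, x i * y i
  map_add' a b := by
    simp only [Pi.add_apply, add_mul]
    rw [Finset.sum_add_distrib]
  map_smul' c a := by
    simp only [Pi.smul_apply, smul_eq_mul, RingHom.id_apply]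
    rw [Finset.mul_sum]
    exact Finset.sum_congr rfl fun i _ => by ring


lemma coeff_extract {F : Type*} [Field F] {k' : ℕ} (g : Fin k' → F) (s : Finset (Fin k'))
    (t : Fin k') (ht : t ∈ s) :
    (∑ i ∈ s, C (g i) * X ^ (i : ℕ)).coeff (t : ℕ) = g t := by
  rw [finset_sum_coeff, Finset.sum_eq_single_of_mem t ht]
  · rw [coeff_C_mul, coeff_X_pow, if_pos rfl, mul_one]
  · intro b _ hb
    rw [coeff_C_mul, coeff_X_pow, if_neg (fun h => hb (Fin.ext h).symm), mul_zero]

end ParityCheckAux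

namespace ParityCheckAux2

open Polynomial Finset Submodule ParityCheckAux

variable {F : Type*} [Field F] {n k : ℕ}

lemma orth (hk : 3 ≤ k) (hkn : k ≤ n)
    (α v : Fin n → F) (hα : Function.Injective α) (hv : ∀ i, v i ≠ 0) (δ : F)
    (i : Fin k) (t : Fin (n - k + 2)) :
    ∑ j, Gkmat F n k α v δ i j * Hmat F n k α v δ t j = 0 := by
  have hii : (i : ℕ) < k := i.isLt
  have hti : (t : ℕ) < n - k + 2 := t.isLt
  have hn3 : 3 ≤ n := le_trans hk hkn
  set e1 := ∑ x, α x with he1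
  set e2 := ∑ x, ∑ l ∈ Finset.Ioi x, α x * α l with he2
  have p1 : (∑ j : Fin n, Gkmat F n k α v δ i ⟨(j : ℕ), by omega⟩
        * Hmat F n k α v δ t ⟨(j : ℕ), by omega⟩)
      = ∑ j, (∏ l ∈ Finset.univ.erase j, (α j - α l)⁻¹)
          * α j ^ ((if (i : ℕ) = k - 1 then k else (i : ℕ)) + (t : ℕ)) := by
    apply Finset.sum_congr rfl
    intro j _
    simp only [Gkmat, Hmat]
    rw [dif_pos (show ((⟨(j : ℕ), by omega⟩ : Fin (n + 2)) : ℕ) < n from j.isLt),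
      dif_pos (show ((⟨(j : ℕ), by omega⟩ : Fin (n + 2)) : ℕ) < n from j.isLt)]
    show (v j * α j ^ _) * ((∏ l ∈ Finset.univ.erase j, (α j - α l)⁻¹) * (v j)⁻¹ * α j ^ (t : ℕ)) = _
    rw [pow_add]
    have hvj := hv j
    field_simp
  have hGn : Gkmat F n k α v δ i ⟨n, by omega⟩ = (if (i : ℕ) = k - 1 then (1 : F) else 0) := by
    simp only [Gkmat]
    rw [dif_neg (lt_irrefl n)]
    norm_num
  have hGd : Gkmat F n k α v δ i ⟨n + 1, by omega⟩
      = (if (i : ℕ) = k - 2 then (1 : F) else if (i : ℕ) = k - 1 then δ else 0) := by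
    simp only [Gkmat]
    rw [dif_neg (show ¬(n + 1 < n) by omega), if_neg (show ¬(n + 1 = n) by omega)]
  have hHn : Hmat F n k α v δ t ⟨n, by omega⟩
      = (if (t : ℕ) + k + 1 = n then (-1 : F) else if (t : ℕ) + k = n then -e1
         else if (t : ℕ) + k = n + 1 then δ + e2 - e1 ^ 2 else 0) := by
    simp only [Hmat]
    rw [dif_neg (lt_irrefl n)]
    norm_num
    rw [he1, he2]
  have hHd : Hmat F n k α v δ t ⟨n + 1, by omega⟩
      = (if (t : ℕ) + k = n + 1 then (-1 : F) else 0) := by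
    simp only [Hmat]
    rw [dif_neg (show ¬(n + 1 < n) by omega), if_neg (show ¬(n + 1 = n) by omega)]
  rw [sum_fin_two_ext (fun j => Gkmat F n k α v δ i j * Hmat F n k α v δ t j)]
  rw [p1, hGn, hGd, hHn, hHd]
  by_cases hi1 : (i : ℕ) = k - 1
  · simp only [hi1, eq_self_iff_true, if_true, if_neg (show ¬(k - 1 = k - 2) by omega)]
    by_cases h1 : (t : ℕ) + k + 1 < n
    · rw [wtsum_lt α hα _ (by omega), if_neg (show ¬((t : ℕ) + k + 1 = n) by omega),
        if_neg (show ¬((t : ℕ) + k = n) by omega),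
        if_neg (show ¬((t : ℕ) + k = n + 1) by omega),
        if_neg (show ¬((t : ℕ) + k = n + 1) by omega)]
      ring
    · by_cases h2 : (t : ℕ) + k + 1 = n
      · have hexp : k + (t : ℕ) = n - 1 := by omega
        rw [hexp, wtsum_top α hα (by omega), if_pos h2,
          if_neg (show ¬((t : ℕ) + k = n + 1) by omega)]
        ring
      · by_cases h3 : (t : ℕ) + k = n
        · have hexp : k + (t : ℕ) = n := by omega
          rw [hexp, wtsum_n α hα (by omega), if_neg (show ¬((t : ℕ) + k + 1 = n) by omega),
            if_pos h3, if_neg (show ¬((t : ℕ) + k = n + 1) by omega)]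
          ring
        · have h4 : (t : ℕ) + k = n + 1 := by omega
          have hexp : k + (t : ℕ) = n + 1 := by omega
          rw [hexp, wtsum_succ α hα hn3, if_neg (show ¬((t : ℕ) + k + 1 = n) by omega),
            if_neg (show ¬((t : ℕ) + k = n) by omega), if_pos h4, if_pos h4]
          ring
  · by_cases hi2 : (i : ℕ) = k - 2
    · simp only [hi2, if_neg (show ¬(k - 2 = k - 1) by omega), eq_self_iff_true, if_true]
      by_cases h4 : (t : ℕ) + k = n + 1
      · have hexp : k - 2 + (t : ℕ) = n - 1 := by omega
        rw [hexp, wtsum_top α hα (by omega), if_neg (show ¬((t : ℕ) + k + 1 = n) by omega),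
          if_neg (show ¬((t : ℕ) + k = n) by omega), if_pos h4, if_pos h4]
        ring
      · rw [wtsum_lt α hα _ (by omega), if_neg h4, if_neg h4]
        ring
    · rw [if_neg hi1, if_neg hi1, if_neg hi2, if_neg hi1, wtsum_lt α hα _ (by omega)]
      ring

lemma linIndepH (hk : 3 ≤ k) (hkn : k ≤ n)
    (α v : Fin n → F) (hα : Function.Injective α) (hv : ∀ i, v i ≠ 0) (δ : F) :
    LinearIndependent F (Hmat F n k α v δ) := by
  rw [Fintype.linearIndependent_iff]
  intro g hg
  set p : F[X] := ∑ s : Fin (n - k + 2), C (g s) * X ^ (s : ℕ) with hp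
  have hdeg : p.natDegree < n := by
    have hb : p.natDegree ≤ n - k + 1 :=
      Polynomial.natDegree_sum_le_of_forall_le _ _ (fun s _ =>
        le_trans (natDegree_C_mul_le _ _) (by rw [natDegree_X_pow]; omega))
    omega
  have heval : ∀ j : Fin n, p.eval (α j) = 0 := by
    intro j
    have hcoord := congrFun hg ⟨(j : ℕ), by omega⟩
    rw [Finset.sum_apply, Pi.zero_apply] at hcoord
    have hterm : ∀ s : Fin (n - k + 2), (g s • Hmat F n k α v δ s) (⟨(j : ℕ), by omega⟩ : Fin (n + 2))
        = ((∏ l ∈ Finset.univ.erase j, (α j - α l)⁻¹) * (v j)⁻¹) * (g s * α j ^ (s : ℕ)) := by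
      intro s
      rw [Pi.smul_apply, smul_eq_mul]
      simp only [Hmat]
      rw [dif_pos (show ((⟨(j : ℕ), by omega⟩ : Fin (n + 2)) : ℕ) < n from j.isLt)]
      show g s * ((∏ l ∈ Finset.univ.erase j, (α j - α l)⁻¹) * (v j)⁻¹ * α j ^ (s : ℕ)) = _
      ring
    rw [Finset.sum_congr rfl (fun s _ => hterm s), ← Finset.mul_sum] at hcoord
    have hw : ((∏ l ∈ Finset.univ.erase j, (α j - α l)⁻¹) * (v j)⁻¹) ≠ 0 :=
      mul_ne_zero (wt_ne_zero α hα j) (inv_ne_zero (hv j))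
    have hsum : ∑ s : Fin (n - k + 2), g s * α j ^ (s : ℕ) = 0 :=
      (mul_eq_zero.mp hcoord).resolve_left hw
    rw [hp, eval_finset_sum]
    rw [Finset.sum_congr rfl (fun s _ => by
      rw [eval_mul, eval_C, eval_pow, eval_X] : ∀ s ∈ _, _ = g s * α j ^ (s:ℕ))]
    exact hsum
  have hp0 : p = 0 := eq_zero_of_natDegree_lt_card_of_eval_eq_zero p hα heval
    (by rwa [Fintype.card_fin])
  intro t
  have h := coeff_extract g Finset.univ t (Finset.mem_univ t)
  rw [← hp, hp0, coeff_zero] at h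
  exact h.symm

lemma linIndepG (hk : 3 ≤ k) (hkn : k ≤ n)
    (α v : Fin n → F) (hα : Function.Injective α) (hv : ∀ i, v i ≠ 0) (δ : F) :
    LinearIndependent F (Gkmat F n k α v δ) := by
  rw [Fintype.linearIndependent_iff]
  intro g hg
  have hk1 : k - 1 < k := by omega
  have hk2 : k - 2 < k := by omega
  have hGn' : ∀ i : Fin k, Gkmat F n k α v δ i ⟨n, by omega⟩
      = (if (i : ℕ) = k - 1 then (1 : F) else 0) := fun i => by
    simp only [Gkmat]
    rw [dif_neg (lt_irrefl n)]
    norm_num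
  have hGd' : ∀ i : Fin k, Gkmat F n k α v δ i ⟨n + 1, by omega⟩
      = (if (i : ℕ) = k - 2 then (1 : F) else if (i : ℕ) = k - 1 then δ else 0) := fun i => by
    simp only [Gkmat]
    rw [dif_neg (show ¬(n + 1 < n) by omega), if_neg (show ¬(n + 1 = n) by omega)]
  have hA : g ⟨k - 1, hk1⟩ = 0 := by
    have hcoord := congrFun hg ⟨n, by omega⟩
    rw [Finset.sum_apply, Pi.zero_apply] at hcoord
    rw [Finset.sum_eq_single_of_mem (⟨k - 1, hk1⟩ : Fin k) (Finset.mem_univ _)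
      (fun b _ hb => by
        rw [Pi.smul_apply, smul_eq_mul, hGn' b, if_neg (fun h => hb (Fin.ext h)), mul_zero])]
      at hcoord
    rw [Pi.smul_apply, smul_eq_mul, hGn' _, if_pos (show (((⟨k - 1, hk1⟩ : Fin k)) : ℕ) = k - 1 from rfl), mul_one] at hcoord
    exact hcoord
  have hB : g ⟨k - 2, hk2⟩ = 0 := by
    have hcoord := congrFun hg ⟨n + 1, by omega⟩
    rw [Finset.sum_apply, Pi.zero_apply] at hcoord
    rw [Finset.sum_eq_single_of_mem (⟨k - 2, hk2⟩ : Fin k) (Finset.mem_univ _)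
      (fun b _ hb => by
        rw [Pi.smul_apply, smul_eq_mul, hGd' b]
        by_cases hb2 : (b : ℕ) = k - 2
        · exact absurd (Fin.ext hb2) hb
        · by_cases hb1 : (b : ℕ) = k - 1
          · rw [if_neg hb2, if_pos hb1, (show b = ⟨k - 1, hk1⟩ from Fin.ext hb1), hA, zero_mul]
          · rw [if_neg hb2, if_neg hb1, mul_zero])] at hcoord
    rw [Pi.smul_apply, smul_eq_mul, hGd' _, if_pos (show (((⟨k - 2, hk2⟩ : Fin k)) : ℕ) = k - 2 from rfl), mul_one] at hcoord
    exact hcoord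
  set p : F[X] := ∑ i ∈ Finset.univ.erase (⟨k - 1, hk1⟩ : Fin k), C (g i) * X ^ (i : ℕ) with hp
  have hdeg : p.natDegree < n := by
    have hb : p.natDegree ≤ k - 1 :=
      Polynomial.natDegree_sum_le_of_forall_le _ _ (fun s _ =>
        le_trans (natDegree_C_mul_le _ _) (by rw [natDegree_X_pow]; omega))
    omega
  have heval : ∀ j : Fin n, p.eval (α j) = 0 := by
    intro j
    have hcoord := congrFun hg ⟨(j : ℕ), by omega⟩
    rw [Finset.sum_apply, Pi.zero_apply] at hcoord
    have hterm : ∀ i : Fin k, (g i • Gkmat F n k α v δ i) (⟨(j : ℕ), by omega⟩ : Fin (n + 2))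
        = g i * (v j * α j ^ (if (i : ℕ) = k - 1 then k else (i : ℕ))) := by
      intro i
      rw [Pi.smul_apply, smul_eq_mul]
      simp only [Gkmat]
      rw [dif_pos (show ((⟨(j : ℕ), by omega⟩ : Fin (n + 2)) : ℕ) < n from j.isLt)]
    rw [Finset.sum_congr rfl (fun i _ => hterm i),
      ← Finset.sum_erase_add _ _ (Finset.mem_univ (⟨k - 1, hk1⟩ : Fin k)), hA, zero_mul,
      add_zero] at hcoord
    rw [Finset.sum_congr rfl (fun i hi => by
      rw [if_neg (fun h => (Finset.mem_erase.mp hi).1 (Fin.ext h))]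
      ring : ∀ i ∈ Finset.univ.erase (⟨k - 1, hk1⟩ : Fin k),
        g i * (v j * α j ^ (if (i : ℕ) = k - 1 then k else (i : ℕ)))
          = v j * (g i * α j ^ (i : ℕ))), ← Finset.mul_sum] at hcoord
    have hsum : ∑ i ∈ Finset.univ.erase (⟨k - 1, hk1⟩ : Fin k), g i * α j ^ (i : ℕ) = 0 :=
      (mul_eq_zero.mp hcoord).resolve_left (hv j)
    rw [hp, eval_finset_sum]
    rw [Finset.sum_congr rfl (fun s _ => by
      rw [eval_mul, eval_C, eval_pow, eval_X] : ∀ s ∈ _, _ = g s * α j ^ (s : ℕ))]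
    exact hsum
  have hp0 : p = 0 := eq_zero_of_natDegree_lt_card_of_eval_eq_zero p hα heval
    (by rwa [Fintype.card_fin])
  intro t
  by_cases ht : t = ⟨k - 1, hk1⟩
  · rw [ht]; exact hA
  · have h := coeff_extract g (Finset.univ.erase (⟨k - 1, hk1⟩ : Fin k)) t
      (Finset.mem_erase.mpr ⟨ht, Finset.mem_univ t⟩)
    rw [← hp, hp0, coeff_zero] at h
    exact h.symm

end ParityCheckAux2

/-- `H` is a parity-check matrix of `C_k(A,v)`: it has rank `n-k+2` and its row space is
the Euclidean dual code `C_k(A,v)^⊥`. -/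
theorem stmt_2 (F : Type*) [Field F] [Fintype F] (n k : ℕ)
    (hk : 3 ≤ k) (hkn : k ≤ n) (hnq : n ≤ Fintype.card F)
    (α v : Fin n → F) (hα : Function.Injective α) (hv : ∀ i, v i ≠ 0) (δ : F) :
    (Matrix.of (Hmat F n k α v δ)).rank = n - k + 2 ∧
      Submodule.span F (Set.range (Hmat F n k α v δ)) =
        dualCode (Submodule.span F (Set.range (Gkmat F n k α v δ)))  := by
  classical
  have LIH := ParityCheckAux2.linIndepH hk hkn α v hα hv δ
  have LIG := ParityCheckAux2.linIndepG hk hkn α v hα hv δ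
  have horth := ParityCheckAux2.orth hk hkn α v hα hv δ
  have hfinH : Module.finrank F (Submodule.span F (Set.range (Hmat F n k α v δ))) = n - k + 2 := by
    rw [finrank_span_eq_card LIH, Fintype.card_fin]
  have hfinG : Module.finrank F (Submodule.span F (Set.range (Gkmat F n k α v δ))) = k := by
    rw [finrank_span_eq_card LIG, Fintype.card_fin]
  have hrankH : (Matrix.of (Hmat F n k α v δ)).rank = n - k + 2 := by
    rw [← Matrix.rank_transpose, Matrix.rank_eq_finrank_span_cols]
    exact hfinH
  have hrankG : (Matrix.of (Gkmat F n k α v δ)).rank = k := by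
    rw [← Matrix.rank_transpose, Matrix.rank_eq_finrank_span_cols]
    exact hfinG
  have hmemdual : ∀ y : Fin (n + 2) → F,
      (y ∈ dualCode (Submodule.span F (Set.range (Gkmat F n k α v δ))) ↔
        ∀ x ∈ Submodule.span F (Set.range (Gkmat F n k α v δ)), ∑ i, x i * y i = 0) :=
    fun y => Iff.rfl
  have hdualker : dualCode (Submodule.span F (Set.range (Gkmat F n k α v δ)))
      = LinearMap.ker (Matrix.of (Gkmat F n k α v δ)).mulVecLin := by
    ext y
    rw [hmemdual y, LinearMap.mem_ker]
    constructor
    · intro hy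
      funext i
      show ∑ j, Gkmat F n k α v δ i j * y j = 0
      exact hy (Gkmat F n k α v δ i) (Submodule.subset_span ⟨i, rfl⟩)
    · intro hy x hx
      have hker : ∀ i, ∑ j, Gkmat F n k α v δ i j * y j = 0 := fun i => congrFun hy i
      have hsub : Submodule.span F (Set.range (Gkmat F n k α v δ))
          ≤ LinearMap.ker (ParityCheckAux.dotR y) := by
        rw [Submodule.span_le]
        rintro _ ⟨i, rfl⟩
        exact LinearMap.mem_ker.mpr (hker i)
      exact hsub hx
  have hkerdim : Module.finrank F (LinearMap.ker (Matrix.of (Gkmat F n k α v δ)).mulVecLin)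
      = n + 2 - k := by
    have h1 := LinearMap.finrank_range_add_finrank_ker (Matrix.of (Gkmat F n k α v δ)).mulVecLin
    rw [Module.finrank_fin_fun] at h1
    have h2 : Module.finrank F (LinearMap.range (Matrix.of (Gkmat F n k α v δ)).mulVecLin) = k :=
      hrankG
    omega
  have hle : Submodule.span F (Set.range (Hmat F n k α v δ))
      ≤ LinearMap.ker (Matrix.of (Gkmat F n k α v δ)).mulVecLin := by
    rw [Submodule.span_le]
    rintro _ ⟨t, rfl⟩
    rw [SetLike.mem_coe, LinearMap.mem_ker]
    funext i
    show ∑ j, Gkmat F n k α v δ i j * Hmat F n k α v δ t j = 0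
    exact horth i t
  refine ⟨hrankH, ?_⟩
  rw [hdualker]
  exact Submodule.eq_of_le_of_finrank_eq hle (by rw [hfinH, hkerdim]; omega)
end

section
/- The code C_k(A,v) is MDS (i.e., its minimum Hamming distance equals n−k+3) if and only if both of the following hold: (1) for every subset K ⊆ {1,…,n} of size k, Σ_{i∈K} α_i ≠ 0; and (2) for every subset I ⊆ {1,…,n} of size k−1, (Σ_{i∈I} α_i)^2 − Σ_{i<j, i,j∈I} α_i α_j ≠ δ. -/
/-- `minDist C d` : the minimum Hamming distance (= minimum Hamming weight) of the
linear code `C` equals `d`. -/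
def minDist {F : Type*} [Field F] [DecidableEq F] {N : ℕ}
    (C : Submodule F (Fin N → F)) (d : ℕ) : Prop :=
  (∃ c ∈ C, c ≠ 0 ∧ hammingNorm c = d) ∧ ∀ c ∈ C, c ≠ 0 → d ≤ hammingNorm c

open Polynomial Finset in
private lemma e2_eq {ι : Type*} {R : Type*} [CommRing R] [LinearOrder ι] [DecidableEq ι]
    (g : ι → R) (I : Finset ι) :
    ∑ t ∈ I.powersetCard 2, ∏ i ∈ t, g i
      = ∑ i ∈ I, ∑ j ∈ I.filter (fun j => i < j), g i * g j := by
  induction I using Finset.induction with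
  | empty =>
    rw [Finset.powersetCard_eq_empty.mpr (by simp)]; simp
  | @insert a I ha ih =>
    have hinj : ∀ x ∈ I.powersetCard 1, ∀ y ∈ I.powersetCard 1,
        insert a x = insert a y → x = y := by
      intro x hx y hy h
      have hxa : a ∉ x := fun hc => ha ((Finset.mem_powersetCard.1 hx).1 hc)
      have hya : a ∉ y := fun hc => ha ((Finset.mem_powersetCard.1 hy).1 hc)
      rw [← Finset.erase_insert hxa, ← Finset.erase_insert hya, h]
    rw [Finset.powersetCard_succ_insert ha, Finset.sum_union ?disj, ih,
      Finset.sum_image hinj]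
    case disj =>
      rw [Finset.disjoint_left]
      intro t ht htim
      obtain ⟨x, hx, rfl⟩ := Finset.mem_image.1 htim
      exact ha ((Finset.mem_powersetCard.1 ht).1 (Finset.mem_insert_self a x))
    have h1 : ∀ x ∈ I.powersetCard 1, ∏ i ∈ insert a x, g i = g a * ∏ i ∈ x, g i := by
      intro x hx
      have hxa : a ∉ x := fun hc => ha ((Finset.mem_powersetCard.1 hx).1 hc)
      rw [Finset.prod_insert hxa]
    rw [Finset.sum_congr rfl h1, Finset.powersetCard_one, Finset.sum_map]
    simp only [Function.Embedding.coeFn_mk, Finset.prod_singleton]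
    rw [Finset.sum_insert ha]
    have key : ∀ i ∈ I, ∑ j ∈ (insert a I).filter (fun j => i < j), g i * g j
        = (if i < a then g i * g a else 0) + ∑ j ∈ I.filter (fun j => i < j), g i * g j := by
      intro i hi
      rw [Finset.filter_insert]
      by_cases h : i < a
      · rw [if_pos h, Finset.sum_insert (by simp [Finset.mem_filter, ha]), if_pos h]
      · rw [if_neg h, if_neg h, zero_add]
    rw [Finset.sum_congr rfl key, Finset.sum_add_distrib]
    have split : (∑ i ∈ I, if i < a then g i * g a else 0)
          + ∑ j ∈ (insert a I).filter (fun j => a < j), g a * g j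
        = ∑ i ∈ I, g a * g i := by
      rw [Finset.filter_insert, if_neg (lt_irrefl a), Finset.sum_filter,
        ← Finset.sum_add_distrib]
      refine Finset.sum_congr rfl fun i hi => ?_
      have hne : i ≠ a := fun h => ha (h ▸ hi)
      rcases lt_or_gt_of_ne hne with h | h
      · rw [if_pos h, if_neg (not_lt.2 h.le), add_zero, mul_comm]
      · rw [if_neg (not_lt.2 h.le), if_pos h, zero_add]
    rw [← split]; ring

section Helpers
open Polynomial Finset

private lemma prodXsubC_monic {ι R : Type*} [CommRing R] (f : ι → R) (s : Finset ι) :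
    (∏ i ∈ s, (X - C (f i))).Monic :=
  monic_prod_of_monic _ _ fun i _ => monic_X_sub_C _

private lemma prodXsubC_natDegree {ι R : Type*} [CommRing R] [Nontrivial R]
    (f : ι → R) (s : Finset ι) :
    (∏ i ∈ s, (X - C (f i))).natDegree = s.card := by
  rw [natDegree_prod_of_monic _ _ fun i _ => monic_X_sub_C _]
  simp [natDegree_X_sub_C]

private lemma prodXsubC_coeff_sub_two {ι R : Type*} [CommRing R] [LinearOrder ι]
    (f : ι → R) (s : Finset ι) (hs : 2 ≤ s.card) :
    (∏ i ∈ s, (X - C (f i))).coeff (s.card - 2)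
      = ∑ i ∈ s, ∑ j ∈ s.filter (fun j => i < j), f i * f j := by
  classical
  have h1 : (∏ i ∈ s, (X - C (f i))) = ((s.1.map f).map fun t => X - C t).prod := by
    rw [Multiset.map_map]; rfl
  have hcard : Multiset.card (s.1.map f) = s.card := by simp
  have h2 := Multiset.prod_X_sub_C_coeff (s.1.map f)
    (k := s.card - 2) (by rw [hcard]; omega)
  rw [h1, h2, hcard, show s.card - (s.card - 2) = 2 by omega, Finset.esymm_map_val,
    neg_one_sq, one_mul, e2_eq]

private lemma prodXsubC_coeff_sub_one {ι R : Type*} [CommRing R]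
    (f : ι → R) (s : Finset ι) (hs : 1 ≤ s.card) :
    (∏ i ∈ s, (X - C (f i))).coeff (s.card - 1) = -∑ i ∈ s, f i :=
  prod_X_sub_C_coeff_card_pred s f hs

def expo (k : ℕ) (i : Fin k) : ℕ := if (i : ℕ) = k - 1 then k else (i : ℕ)

private lemma expo_le {k : ℕ} (i : Fin k) : expo k i ≤ k := by
  unfold expo; split <;> [rfl; exact i.isLt.le]

private lemma expo_inj {k : ℕ} : Function.Injective (expo k) := by
  intro i j h
  have hi := i.isLt; have hj := j.isLt
  unfold expo at h
  ext
  split at h <;> split at h <;> omega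

private lemma expo_ne_pred {k : ℕ} (hk : 1 ≤ k) (i : Fin k) : expo k i ≠ k - 1 := by
  unfold expo; split <;> omega

private lemma expo_surj {k m : ℕ} (h1 : m ≤ k) (h2 : m ≠ k - 1) (hk : 1 ≤ k) :
    ∃ i : Fin k, expo k i = m := by
  by_cases hm : m = k
  · exact ⟨⟨k - 1, by omega⟩, by simp [expo, hm]⟩
  · exact ⟨⟨m, by omega⟩, by simp only [expo]; rw [if_neg (by simpa using h2)]⟩

noncomputable def Pa {F : Type*} [Field F] {k : ℕ} (a : Fin k → F) : F[X] :=
  ∑ i : Fin k, C (a i) * X ^ (expo k i)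

private lemma Pa_coeff {F : Type*} [Field F] {k : ℕ} (a : Fin k → F) (m : ℕ) :
    (Pa a).coeff m = ∑ i : Fin k, if expo k i = m then a i else 0 := by
  rw [Pa, finset_sum_coeff]
  refine Finset.sum_congr rfl fun i _ => ?_
  rw [coeff_C_mul, coeff_X_pow]
  by_cases h : expo k i = m
  · simp [h]
  · rw [if_neg h, if_neg (fun hc => h hc.symm), mul_zero]

private lemma Pa_coeff_expo {F : Type*} [Field F] {k : ℕ} (a : Fin k → F) (i : Fin k) :
    (Pa a).coeff (expo k i) = a i := by
  rw [Pa_coeff]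
  rw [Finset.sum_eq_single i (fun j _ hj => by
    rw [if_neg (fun h => hj (expo_inj h))]) (by simp)]
  simp

private lemma Pa_coeff_of_ne {F : Type*} [Field F] {k : ℕ} (a : Fin k → F) (m : ℕ)
    (h : ∀ i : Fin k, expo k i ≠ m) : (Pa a).coeff m = 0 := by
  rw [Pa_coeff]
  exact Finset.sum_eq_zero fun i _ => if_neg (h i)

private lemma Pa_natDegree_le {F : Type*} [Field F] {k : ℕ} (a : Fin k → F) :
    (Pa a).natDegree ≤ k := by
  refine natDegree_le_iff_coeff_eq_zero.2 fun m hm => Pa_coeff_of_ne a m fun i h => ?_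
  have := expo_le i; omega

private lemma Pa_ne_zero {F : Type*} [Field F] {k : ℕ} (a : Fin k → F) (ha : a ≠ 0) :
    Pa a ≠ 0 := by
  obtain ⟨i, hi⟩ := Function.ne_iff.1 ha
  intro h
  exact hi (by rw [← Pa_coeff_expo a i, h, coeff_zero]; rfl)

private lemma Pa_spec {F : Type*} [Field F] {k : ℕ} (hk : 1 ≤ k) (Q : F[X])
    (hdeg : Q.natDegree ≤ k) (h1 : Q.coeff (k - 1) = 0) :
    Pa (fun i => Q.coeff (expo k i)) = Q := by
  ext m
  by_cases hm : ∃ i : Fin k, expo k i = m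
  · obtain ⟨i, rfl⟩ := hm
    exact Pa_coeff_expo _ i
  · push_neg at hm
    rw [Pa_coeff_of_ne _ m hm]
    by_cases hmk : m ≤ k
    · by_cases hmp : m = k - 1
      · rw [hmp, h1]
      · exact absurd (expo_surj hmk hmp hk) (by push_neg; exact hm)
    · exact (coeff_eq_zero_of_natDegree_lt (by omega)).symm

private lemma Pa_coeff_k {F : Type*} [Field F] {k : ℕ} (hk : 3 ≤ k) (a : Fin k → F) :
    (Pa a).coeff k = a ⟨k - 1, by omega⟩ := by
  have h := Pa_coeff_expo a ⟨k - 1, by omega⟩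
  rwa [show expo k ⟨k - 1, by omega⟩ = k by simp [expo]] at h

private lemma Pa_coeff_k2 {F : Type*} [Field F] {k : ℕ} (hk : 3 ≤ k) (a : Fin k → F) :
    (Pa a).coeff (k - 2) = a ⟨k - 2, by omega⟩ := by
  have h := Pa_coeff_expo a ⟨k - 2, by omega⟩
  rwa [show expo k ⟨k - 2, by omega⟩ = k - 2 by unfold expo; rw [if_neg (show ¬(k - 2 = k - 1) by omega)]] at h

private lemma Pa_natDegree_le_sub2 {F : Type*} [Field F] {k : ℕ} (hk : 3 ≤ k) (a : Fin k → F)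
    (h1 : a ⟨k - 1, by omega⟩ = 0) : (Pa a).natDegree ≤ k - 2 := by
  refine natDegree_le_iff_coeff_eq_zero.2 fun m hm => ?_
  rw [Pa_coeff]
  refine Finset.sum_eq_zero fun i _ => ?_
  by_cases h : expo k i = m
  · rw [if_pos h]
    have hle := expo_le i
    have : (i : ℕ) = k - 1 := by unfold expo at h; split at h <;> omega
    have : i = ⟨k - 1, by omega⟩ := by ext; exact this
    rw [this, h1]
  · rw [if_neg h]

private lemma Pa_natDegree_le_sub3 {F : Type*} [Field F] {k : ℕ} (hk : 3 ≤ k) (a : Fin k → F)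
    (h1 : a ⟨k - 1, by omega⟩ = 0) (h2 : a ⟨k - 2, by omega⟩ = 0) :
    (Pa a).natDegree ≤ k - 3 := by
  refine natDegree_le_iff_coeff_eq_zero.2 fun m hm => ?_
  rw [Pa_coeff]
  refine Finset.sum_eq_zero fun i _ => ?_
  by_cases h : expo k i = m
  · rw [if_pos h]
    have hle := expo_le i
    have hik : (i : ℕ) = k - 1 ∨ (i : ℕ) = k - 2 := by unfold expo at h; split at h <;> omega
    rcases hik with hik | hik
    · have : i = ⟨k - 1, by omega⟩ := by ext; exact hik
      rw [this, h1]
    · have : i = ⟨k - 2, by omega⟩ := by ext; exact hik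
      rw [this, h2]
  · rw [if_neg h]

private lemma Pa_eval {F : Type*} [Field F] {k : ℕ} (a : Fin k → F) (x : F) :
    (Pa a).eval x = ∑ i : Fin k, a i * x ^ (expo k i) := by
  rw [Pa, eval_finset_sum]; simp

-- counting lemmas
private lemma hammingNorm_add_zcount {F : Type*} [Field F] [DecidableEq F] {N : ℕ}
    (c : Fin N → F) :
    hammingNorm c + #(univ.filter fun j => c j = 0) = N := by
  rw [add_comm, hammingNorm]
  simpa using Finset.card_filter_add_card_filter_not
    (s := (univ : Finset (Fin N))) (p := fun j => c j = 0)

private lemma zcount_decomp {F : Type*} [Field F] [DecidableEq F] {n : ℕ}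
    (c : Fin (n + 2) → F) :
    #(univ.filter fun j => c j = 0)
      = #(univ.filter fun j : Fin n => c ⟨j, by omega⟩ = 0)
        + (if c ⟨n, by omega⟩ = 0 then 1 else 0)
        + (if c ⟨n + 1, by omega⟩ = 0 then 1 else 0) := by
  rw [Finset.card_filter, Finset.card_filter, Fin.sum_univ_castSucc, Fin.sum_univ_castSucc]
  rfl

private lemma card_roots_among {F : Type*} [Field F] [DecidableEq F] {n : ℕ}
    (P : F[X]) (hP : P ≠ 0) (α : Fin n → F) (hα : Function.Injective α)
    (S : Finset (Fin n)) (hS : ∀ j ∈ S, P.eval (α j) = 0) : S.card ≤ P.natDegree := by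
  calc S.card = (S.image α).card := (Finset.card_image_of_injective S hα).symm
    _ ≤ P.roots.toFinset.card := by
        refine Finset.card_le_card fun x hx => ?_
        obtain ⟨j, hj, rfl⟩ := Finset.mem_image.1 hx
        rw [Multiset.mem_toFinset, mem_roots hP]
        exact hS j hj
    _ ≤ Multiset.card P.roots := P.roots.toFinset_card_le
    _ ≤ P.natDegree := P.card_roots'

private lemma eq_of_eval_eq_on {F : Type*} [Field F] {n : ℕ}
    (P Q : F[X]) (α : Fin n → F) (hα : Function.Injective α)
    (S : Finset (Fin n)) (h : ∀ j ∈ S, P.eval (α j) = Q.eval (α j))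
    (hdeg : (P - Q).natDegree < S.card) : P = Q := by
  classical
  have := Polynomial.eq_zero_of_natDegree_lt_card_of_eval_eq_zero' (P - Q) (S.image α)
    (fun x hx => by
      obtain ⟨j, hj, rfl⟩ := Finset.mem_image.1 hx
      rw [eval_sub, h j hj, sub_self])
    (by rwa [Finset.card_image_of_injective S hα])
  exact sub_eq_zero.1 this

-- the QI polynomial
noncomputable def QI {F : Type*} [Field F] {n : ℕ} (α : Fin n → F) (I : Finset (Fin n)) : F[X] :=
  (X - C (-∑ i ∈ I, α i)) * ∏ i ∈ I, (X - C (α i))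

private lemma QI_monic {F : Type*} [Field F] {n : ℕ} (α : Fin n → F) (I : Finset (Fin n)) :
    (QI α I).Monic :=
  (monic_X_sub_C _).mul (prodXsubC_monic _ _)

private lemma QI_natDegree {F : Type*} [Field F] {n : ℕ} (α : Fin n → F) (I : Finset (Fin n)) :
    (QI α I).natDegree = I.card + 1 := by
  rw [QI, Monic.natDegree_mul (monic_X_sub_C _) (prodXsubC_monic _ _),
    natDegree_X_sub_C, prodXsubC_natDegree]
  omega

private lemma QI_coeff_top {F : Type*} [Field F] {n k : ℕ} (α : Fin n → F) (I : Finset (Fin n))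
    (hk : 3 ≤ k) (hcard : I.card = k - 1) : (QI α I).coeff k = 1 := by
  have := (QI_monic α I).coeff_natDegree
  rwa [QI_natDegree, hcard, show k - 1 + 1 = k by omega] at this

private lemma QI_coeff_mid {F : Type*} [Field F] {n k : ℕ} (α : Fin n → F) (I : Finset (Fin n))
    (hk : 3 ≤ k) (hcard : I.card = k - 1) : (QI α I).coeff (k - 1) = 0 := by
  rw [QI, sub_mul, coeff_sub, coeff_C_mul,
    show k - 1 = (k - 2) + 1 by omega, coeff_X_mul]
  have h1 : (∏ i ∈ I, (X - C (α i))).coeff (k - 2) = -∑ i ∈ I, α i := by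
    have := prodXsubC_coeff_sub_one α I (by omega)
    rwa [hcard, show k - 1 - 1 = k - 2 by omega] at this
  have h2 : (∏ i ∈ I, (X - C (α i))).coeff (k - 2 + 1) = 1 := by
    have := (prodXsubC_monic α I).coeff_natDegree
    rwa [prodXsubC_natDegree, hcard, show k - 1 = k - 2 + 1 by omega] at this
  rw [h1, h2]
  ring

private lemma QI_coeff_low {F : Type*} [Field F] {n k : ℕ} (α : Fin n → F) (I : Finset (Fin n))
    (hk : 3 ≤ k) (hcard : I.card = k - 1) :
    (QI α I).coeff (k - 2)
      = (∑ i ∈ I, ∑ j ∈ I.filter (fun j => i < j), α i * α j) - (∑ i ∈ I, α i) ^ 2 := by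
  rw [QI, sub_mul, coeff_sub, coeff_C_mul,
    show k - 2 = (k - 3) + 1 by omega, coeff_X_mul]
  have h1 := prodXsubC_coeff_sub_two α I (by omega : 2 ≤ I.card)
  rw [hcard, show k - 1 - 2 = k - 3 by omega] at h1
  have h2 : (∏ i ∈ I, (X - C (α i))).coeff (k - 3 + 1) = -∑ i ∈ I, α i := by
    have := prodXsubC_coeff_sub_one α I (by omega)
    rwa [hcard, show k - 1 - 1 = k - 3 + 1 by omega] at this
  rw [h1, h2]
  ring

private lemma QI_eval_zero {F : Type*} [Field F] {n : ℕ} (α : Fin n → F) (I : Finset (Fin n))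
    (j : Fin n) (hj : j ∈ I) : (QI α I).eval (α j) = 0 := by
  rw [QI, eval_mul, eval_prod]
  rw [Finset.prod_eq_zero hj (by simp)]
  ring

end Helpers

-- codeword lemmas
section CW
open Polynomial Finset
variable {F : Type*} [Field F] {n k : ℕ} (α v : Fin n → F) (δ : F)

noncomputable def cw (α v : Fin n → F) (δ : F) (a : Fin k → F) : Fin (n + 2) → F :=
  fun j => ∑ i : Fin k, a i * Gkmat F n k α v δ i j

private lemma cw_mem_span (a : Fin k → F) :
    cw α v δ a ∈ Submodule.span F (Set.range (Gkmat F n k α v δ)) := by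
  have : cw α v δ a = ∑ i : Fin k, a i • Gkmat F n k α v δ i := by
    ext j; rw [Finset.sum_apply]; rfl
  rw [this]
  exact Submodule.sum_mem _ fun i _ =>
    Submodule.smul_mem _ _ (Submodule.subset_span (Set.mem_range_self i))

private lemma span_elem_eq_cw {c : Fin (n + 2) → F}
    (hc : c ∈ Submodule.span F (Set.range (Gkmat F n k α v δ))) :
    ∃ a : Fin k → F, c = cw α v δ a := by
  obtain ⟨a, ha⟩ := (Submodule.mem_span_range_iff_exists_fun F).1 hc
  exact ⟨a, by rw [← ha]; ext j; rw [Finset.sum_apply]; rfl⟩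

private lemma cw_zero : cw α v δ (0 : Fin k → F) = 0 := by
  ext j; simp [cw]

private lemma cw_eval (a : Fin k → F) (j : Fin n) :
    cw α v δ a ⟨(j : ℕ), by omega⟩ = v j * (Pa a).eval (α j) := by
  rw [cw, Pa_eval, Finset.mul_sum]
  refine Finset.sum_congr rfl fun i _ => ?_
  rw [Gkmat, expo]
  rw [dif_pos j.isLt]
  ring

private lemma cw_coord_n (hk : 3 ≤ k) (a : Fin k → F) :
    cw α v δ a ⟨n, by omega⟩ = a ⟨k - 1, by omega⟩ := by
  rw [cw, Finset.sum_eq_single (⟨k - 1, by omega⟩ : Fin k)]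
  · rw [Gkmat, dif_neg (by simp), if_pos rfl, if_pos rfl, mul_one]
  · intro i _ hi
    rw [Gkmat, dif_neg (by simp), if_pos rfl,
      if_neg (fun h => hi (by ext; simpa using h)), mul_zero]
  · simp

private lemma cw_coord_last (hk : 3 ≤ k) (a : Fin k → F) :
    cw α v δ a ⟨n + 1, by omega⟩ = a ⟨k - 2, by omega⟩ + a ⟨k - 1, by omega⟩ * δ := by
  have hG : ∀ i : Fin k, Gkmat F n k α v δ i ⟨n + 1, by omega⟩
      = (if (i : ℕ) = k - 2 then (1:F) else 0) + (if (i : ℕ) = k - 1 then δ else 0) := by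
    intro i
    rw [Gkmat, dif_neg (by simp), if_neg (by simp)]
    by_cases h2 : (i : ℕ) = k - 2
    · rw [if_pos h2, if_pos h2, if_neg (by omega), add_zero]
    · rw [if_neg h2, if_neg h2, zero_add]
  rw [cw]
  simp only [hG, mul_add]
  rw [Finset.sum_add_distrib]
  congr 1
  · rw [Finset.sum_eq_single (⟨k - 2, by omega⟩ : Fin k)
      (fun i _ hi => by rw [if_neg (fun h => hi (by ext; simpa using h)), mul_zero]) (by simp)]
    simp
  · rw [Finset.sum_eq_single (⟨k - 1, by omega⟩ : Fin k)
      (fun i _ hi => by rw [if_neg (fun h => hi (by ext; simpa using h)), mul_zero]) (by simp)]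
    simp
end CW

section CW2
open Polynomial Finset
variable {F : Type*} [Field F] [DecidableEq F] {n k : ℕ} (α v : Fin n → F) (δ : F)

private lemma ite01_le {p : Prop} [Decidable p] : (if p then (1:ℕ) else 0) ≤ 1 := by
  split <;> omega

private lemma cw_norm (hk : 3 ≤ k) (hv : ∀ i, v i ≠ 0) (a : Fin k → F) :
    hammingNorm (cw α v δ a)
      + (#(univ.filter fun j : Fin n => (Pa a).eval (α j) = 0)
         + (if a ⟨k - 1, by omega⟩ = 0 then 1 else 0)
         + (if a ⟨k - 2, by omega⟩ + a ⟨k - 1, by omega⟩ * δ = 0 then 1 else 0)) = n + 2 := by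
  have h := hammingNorm_add_zcount (cw α v δ a)
  rw [zcount_decomp (cw α v δ a), cw_coord_n α v δ hk a, cw_coord_last α v δ hk a] at h
  have hfil : (univ.filter fun j : Fin n => cw α v δ a ⟨j, by omega⟩ = 0)
      = univ.filter fun j : Fin n => (Pa a).eval (α j) = 0 := by
    refine Finset.filter_congr fun j _ => ?_
    rw [cw_eval]
    constructor
    · intro hh
      rcases mul_eq_zero.1 hh with hh | hh
      · exact absurd hh (hv j)
      · exact hh
    · intro hh
      rw [hh, mul_zero]
  rw [hfil] at h
  exact h

end CW2

set_option maxHeartbeats 1000000 in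
open Polynomial Finset in
/-- `C_k(A,v)` is MDS (its minimum distance equals `(n+2) - k + 1 = n - k + 3`) iff
(1) no `k` of the `α_i` sum to `0`, and (2) for every `(k-1)`-subset `I`,
`(∑_{i∈I} α_i)² - ∑_{i<j∈I} α_i α_j ≠ δ`. -/
theorem stmt_4 (F : Type*) [Field F] [Fintype F] [DecidableEq F] (n k : ℕ)
    (hk : 3 ≤ k) (hkn : k ≤ n) (hnq : n ≤ Fintype.card F)
    (α v : Fin n → F) (hα : Function.Injective α) (hv : ∀ i, v i ≠ 0) (δ : F) :
    minDist (Submodule.span F (Set.range (Gkmat F n k α v δ))) (n - k + 3) ↔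
      ((∀ K : Finset (Fin n), K.card = k → ∑ i ∈ K, α i ≠ 0) ∧
        (∀ I : Finset (Fin n), I.card = k - 1 →
          (∑ i ∈ I, α i) ^ 2 - (∑ i ∈ I, ∑ j ∈ I.filter (fun j => i < j), α i * α j) ≠ δ)) := by
  have hk1 : (1 : ℕ) ≤ k := by omega
  constructor
  · rintro ⟨-, hlb⟩
    constructor
    · -- condition (1)
      intro K hK hsum
      have hQdeg : (∏ i ∈ K, (X - C (α i))).natDegree = k :=
        (prodXsubC_natDegree α K).trans hK
      have hQmid : (∏ i ∈ K, (X - C (α i))).coeff (k - 1) = 0 := by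
        have h := prodXsubC_coeff_sub_one α K (by omega)
        rw [hK] at h
        rw [h, hsum, neg_zero]
      set a : Fin k → F := fun i => (∏ i ∈ K, (X - C (α i))).coeff (expo k i) with ha
      have hPa : Pa a = ∏ i ∈ K, (X - C (α i)) := Pa_spec hk1 _ (le_of_eq hQdeg) hQmid
      have hA1 : a ⟨k - 1, by omega⟩ = 1 := by
        rw [ha]
        simp only
        rw [show expo k ⟨k - 1, by omega⟩ = k from by simp [expo], ← hQdeg]
        exact (prodXsubC_monic α K).coeff_natDegree
      have hcn : cw α v δ a ⟨n, by omega⟩ = 1 := by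
        rw [cw_coord_n α v δ hk a, hA1]
      have hc0 : cw α v δ a ≠ 0 := fun h => one_ne_zero (α := F) (by rw [← hcn, h]; rfl)
      have hfirst : #K ≤ #(univ.filter fun j : Fin n => (Pa a).eval (α j) = 0) := by
        refine Finset.card_le_card fun j hj => ?_
        rw [Finset.mem_filter]
        exact ⟨Finset.mem_univ _,
          by rw [hPa, eval_prod, Finset.prod_eq_zero hj (by simp)]⟩
      have hdec := cw_norm α v δ hk hv a
      rw [if_neg (show a ⟨k - 1, by omega⟩ ≠ 0 from by rw [hA1]; exact one_ne_zero)] at hdec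
      have h2le : (if a ⟨k - 2, by omega⟩ + a ⟨k - 1, by omega⟩ * δ = 0 then (1:ℕ) else 0) ≤ 1 :=
        ite01_le
      have := hlb _ (cw_mem_span α v δ a) hc0
      omega
    · -- condition (2)
      intro I hI hδeq
      have hQdeg : (QI α I).natDegree = k := by rw [QI_natDegree, hI]; omega
      set a : Fin k → F := fun i => (QI α I).coeff (expo k i) with ha
      have hPa : Pa a = QI α I := Pa_spec hk1 _ (le_of_eq hQdeg) (QI_coeff_mid α I hk hI)
      have hA1 : a ⟨k - 1, by omega⟩ = 1 := by
        rw [ha]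
        simp only
        rw [show expo k ⟨k - 1, by omega⟩ = k from by simp [expo]]
        exact QI_coeff_top α I hk hI
      have hA2 : a ⟨k - 2, by omega⟩
          = (∑ i ∈ I, ∑ j ∈ I.filter (fun j => i < j), α i * α j) - (∑ i ∈ I, α i) ^ 2 := by
        rw [ha]
        simp only
        rw [show expo k ⟨k - 2, by omega⟩ = k - 2 from by
          unfold expo; rw [if_neg (show ¬(k - 2 = k - 1) by omega)]]
        exact QI_coeff_low α I hk hI
      have hcn : cw α v δ a ⟨n, by omega⟩ = 1 := by
        rw [cw_coord_n α v δ hk a, hA1]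
      have hc0 : cw α v δ a ≠ 0 := fun h => one_ne_zero (α := F) (by rw [← hcn, h]; rfl)
      have hfirst : #I ≤ #(univ.filter fun j : Fin n => (Pa a).eval (α j) = 0) := by
        refine Finset.card_le_card fun j hj => ?_
        rw [Finset.mem_filter]
        exact ⟨Finset.mem_univ _, by rw [hPa, QI_eval_zero α I j hj]⟩
      have hdec := cw_norm α v δ hk hv a
      rw [if_pos (show a ⟨k - 2, by omega⟩ + a ⟨k - 1, by omega⟩ * δ = 0 from by
        rw [hA1, hA2, ← hδeq]; ring)] at hdec
      have := hlb _ (cw_mem_span α v δ a) hc0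
      omega
  · rintro ⟨h1, h2⟩
    constructor
    · -- existence of a weight-(n-k+3) codeword
      obtain ⟨S, -, hS⟩ := Finset.exists_subset_card_eq (s := (univ : Finset (Fin n))) (n := k - 2)
        (by rw [Finset.card_univ, Fintype.card_fin]; omega)
      have hQdeg : (∏ i ∈ S, (X - C (α i))).natDegree = k - 2 :=
        (prodXsubC_natDegree α S).trans hS
      have hQmid : (∏ i ∈ S, (X - C (α i))).coeff (k - 1) = 0 :=
        coeff_eq_zero_of_natDegree_lt (by omega)
      set a : Fin k → F := fun i => (∏ i ∈ S, (X - C (α i))).coeff (expo k i) with ha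
      have hPa : Pa a = ∏ i ∈ S, (X - C (α i)) :=
        Pa_spec hk1 _ (le_trans (le_of_eq hQdeg) (by omega)) hQmid
      have hA1 : a ⟨k - 1, by omega⟩ = 0 := by
        rw [ha]
        simp only
        rw [show expo k ⟨k - 1, by omega⟩ = k from by simp [expo]]
        exact coeff_eq_zero_of_natDegree_lt (by omega)
      have hA2 : a ⟨k - 2, by omega⟩ = 1 := by
        rw [ha]
        simp only
        rw [show expo k ⟨k - 2, by omega⟩ = k - 2 from by
          unfold expo; rw [if_neg (show ¬(k - 2 = k - 1) by omega)], ← hQdeg]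
        exact (prodXsubC_monic α S).coeff_natDegree
      have hcl : cw α v δ a ⟨n + 1, by omega⟩ = 1 := by
        rw [cw_coord_last α v δ hk a, hA1, hA2]
        ring
      have hc0 : cw α v δ a ≠ 0 := fun h => one_ne_zero (α := F) (by rw [← hcl, h]; rfl)
      refine ⟨cw α v δ a, cw_mem_span α v δ a, hc0, ?_⟩
      have hfil : (univ.filter fun j : Fin n => (Pa a).eval (α j) = 0) = S := by
        ext j
        simp only [Finset.mem_filter, Finset.mem_univ, true_and]
        rw [hPa]
        constructor
        · intro h
          rw [eval_prod] at h
          obtain ⟨i, hi, hzero⟩ := Finset.prod_eq_zero_iff.1 h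
          simp only [eval_sub, eval_X, eval_C] at hzero
          have : α j = α i := by rwa [sub_eq_zero] at hzero
          rwa [hα this]
        · intro hj
          rw [eval_prod, Finset.prod_eq_zero hj (by simp)]
      have hdec := cw_norm α v δ hk hv a
      rw [hfil, hS, if_pos hA1,
        if_neg (show a ⟨k - 2, by omega⟩ + a ⟨k - 1, by omega⟩ * δ ≠ 0 from by
          rw [hA1, hA2]; simpa using one_ne_zero)] at hdec
      omega
    · -- lower bound
      intro c hmem hc0
      obtain ⟨a, rfl⟩ := span_elem_eq_cw α v δ hmem
      have ha0 : a ≠ 0 := fun h => hc0 (h ▸ cw_zero α v δ)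
      have hPane := Pa_ne_zero a ha0
      have hdec := cw_norm α v δ hk hv a
      have hroots := card_roots_among (Pa a) hPane α hα
        (univ.filter fun j : Fin n => (Pa a).eval (α j) = 0)
        (fun j hj => (Finset.mem_filter.1 hj).2)
      by_cases hA1 : a ⟨k - 1, by omega⟩ = 0
      · by_cases hA2 : a ⟨k - 2, by omega⟩ = 0
        · have hdeg := Pa_natDegree_le_sub3 hk a hA1 hA2
          have e1 : (if a ⟨k - 1, by omega⟩ = 0 then (1:ℕ) else 0) ≤ 1 := ite01_le
          have e2 : (if a ⟨k - 2, by omega⟩ + a ⟨k - 1, by omega⟩ * δ = 0 then (1:ℕ) else 0) ≤ 1 :=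
            ite01_le
          omega
        · have hdeg := Pa_natDegree_le_sub2 hk a hA1
          rw [if_neg (show a ⟨k - 2, by omega⟩ + a ⟨k - 1, by omega⟩ * δ ≠ 0 from by
            rw [hA1, zero_mul, add_zero]; exact hA2)] at hdec
          have e1 : (if a ⟨k - 1, by omega⟩ = 0 then (1:ℕ) else 0) ≤ 1 := ite01_le
          omega
      · rw [if_neg hA1] at hdec
        have hdeg : (Pa a).natDegree = k :=
          le_antisymm (Pa_natDegree_le a)
            (le_natDegree_of_ne_zero (by rw [Pa_coeff_k hk a]; exact hA1))
        rw [hdeg] at hroots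
        set W := univ.filter fun j : Fin n => (Pa a).eval (α j) = 0 with hWdef
        have hWroots : ∀ j ∈ W, (Pa a).eval (α j) = 0 := fun j hj =>
          (Finset.mem_filter.1 hj).2
        by_cases hWsmall : #W ≤ k - 2
        · have e2 : (if a ⟨k - 2, by omega⟩ + a ⟨k - 1, by omega⟩ * δ = 0 then (1:ℕ) else 0) ≤ 1 :=
            ite01_le
          omega
        · have hWne : #W ≠ k := by
            intro hWk
            apply h1 W hWk
            have heq : Pa a = C (a ⟨k - 1, by omega⟩) * ∏ j ∈ W, (X - C (α j)) := by
              apply eq_of_eval_eq_on _ _ α hα W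
              · intro j hj
                rw [hWroots j hj, eval_mul, eval_prod,
                  Finset.prod_eq_zero hj (by simp), mul_zero]
              · have hctop : (∏ j ∈ W, (X - C (α j))).coeff k = 1 := by
                  have h := (prodXsubC_monic α W).coeff_natDegree
                  rwa [prodXsubC_natDegree, hWk] at h
                have hle : (Pa a - C (a ⟨k - 1, by omega⟩) * ∏ j ∈ W, (X - C (α j))).natDegree
                    ≤ k - 1 := by
                  refine natDegree_le_iff_coeff_eq_zero.2 fun m hm => ?_
                  rw [coeff_sub, coeff_C_mul]
                  rcases eq_or_lt_of_le (show k ≤ m by omega) with rfl | hmk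
                  · rw [Pa_coeff_k hk a, hctop]
                    ring
                  · rw [coeff_eq_zero_of_natDegree_lt (lt_of_le_of_lt (Pa_natDegree_le a) hmk),
                      coeff_eq_zero_of_natDegree_lt
                        (by rw [prodXsubC_natDegree, hWk]; exact hmk),
                      mul_zero, sub_zero]
                omega
            have hcmid : (∏ j ∈ W, (X - C (α j))).coeff (k - 1) = -∑ j ∈ W, α j := by
              have h := prodXsubC_coeff_sub_one α W (by omega)
              rwa [hWk] at h
            have h0 := Pa_coeff_of_ne a (k - 1) (expo_ne_pred hk1)
            rw [heq, coeff_C_mul, hcmid] at h0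
            rcases mul_eq_zero.1 h0 with h | h
            · exact absurd h hA1
            · exact neg_eq_zero.1 h
          have hWcard : #W = k - 1 := by omega
          have heq : Pa a = C (a ⟨k - 1, by omega⟩) * QI α W := by
            apply eq_of_eval_eq_on _ _ α hα W
            · intro j hj
              rw [hWroots j hj, eval_mul, QI_eval_zero α W j hj, mul_zero]
            · have hQdeg : (QI α W).natDegree = k := by rw [QI_natDegree, hWcard]; omega
              have hle : (Pa a - C (a ⟨k - 1, by omega⟩) * QI α W).natDegree ≤ k - 2 := by
                refine natDegree_le_iff_coeff_eq_zero.2 fun m hm => ?_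
                rw [coeff_sub, coeff_C_mul]
                by_cases hm1 : m = k - 1
                · rw [hm1, Pa_coeff_of_ne a (k - 1) (expo_ne_pred hk1),
                    QI_coeff_mid α W hk hWcard, mul_zero, sub_zero]
                · rcases eq_or_lt_of_le (show k ≤ m by omega) with rfl | hmk
                  · rw [Pa_coeff_k hk a, QI_coeff_top α W hk hWcard]
                    ring
                  · rw [coeff_eq_zero_of_natDegree_lt (lt_of_le_of_lt (Pa_natDegree_le a) hmk),
                      coeff_eq_zero_of_natDegree_lt (by rw [hQdeg]; exact hmk),
                      mul_zero, sub_zero]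
              omega
          have hA2val : a ⟨k - 2, by omega⟩
              = a ⟨k - 1, by omega⟩
                * ((∑ i ∈ W, ∑ j ∈ W.filter (fun j => i < j), α i * α j)
                    - (∑ i ∈ W, α i) ^ 2) := by
            have hc2 := Pa_coeff_k2 hk a
            rw [heq, coeff_C_mul, QI_coeff_low α W hk hWcard] at hc2
            exact hc2.symm
          rw [if_neg (show a ⟨k - 2, by omega⟩ + a ⟨k - 1, by omega⟩ * δ ≠ 0 from by
            intro hzero
            apply h2 W hWcard
            rw [hA2val] at hzero
            have hfac : a ⟨k - 1, by omega⟩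
                * (((∑ i ∈ W, ∑ j ∈ W.filter (fun j => i < j), α i * α j)
                  - (∑ i ∈ W, α i) ^ 2) + δ) = 0 := by linear_combination hzero
            rcases mul_eq_zero.1 hfac with h | h
            · exact absurd h hA1
            · linear_combination -h)] at hdec
          omega
end

section
/- The Euclidean dual code C_k(A,v)^⊥ is AMDS (i.e., since it has length n+2 and dimension n+2−k, its minimum Hamming distance equals k) if and only if at least one of the following holds: (1) there exists a subset L ⊆ {1,…,n} of size k with Σ_{i∈L} α_i = 0; or (2) there exists a subset M ⊆ {1,…,n} of size k−1 with δ = (Σ_{i∈M} α_i)^2 − Σ_{i<j, i,j∈M} α_i α_j. -/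
open Polynomial Finset

section Infra
variable {F : Type*} [Field F] {ι : Type*} [DecidableEq ι]

def embJ (n : ℕ) (j : Fin n) : Fin (n + 2) := ⟨(j : ℕ), by omega⟩
def colA (n : ℕ) : Fin (n + 2) := ⟨n, by omega⟩
def colB (n : ℕ) : Fin (n + 2) := ⟨n + 1, by omega⟩

lemma sum_split {M : Type*} [AddCommMonoid M] {n : ℕ} (f : Fin (n + 2) → M) :
    ∑ j, f j = (∑ j : Fin n, f (embJ n j)) + f (colA n) + f (colB n) := by
  rw [Fin.sum_univ_castSucc, Fin.sum_univ_castSucc]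
  rfl

lemma fin_cases3 {n : ℕ} (x : Fin (n + 2)) :
    (∃ j : Fin n, x = embJ n j) ∨ x = colA n ∨ x = colB n := by
  rcases lt_trichotomy (x : ℕ) n with h | h | h
  · exact Or.inl ⟨⟨(x : ℕ), h⟩, Fin.ext rfl⟩
  · exact Or.inr (Or.inl (Fin.ext h))
  · refine Or.inr (Or.inr (Fin.ext ?_))
    have := x.isLt
    simp only [colB]
    omega

lemma mem_dual_span_iff {k N : ℕ} (G : Fin k → Fin N → F) (y : Fin N → F) :
    y ∈ dualCode (Submodule.span F (Set.range G)) ↔ ∀ i, ∑ j, G i j * y j = 0 := by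
  have φdef : ∃ φ : (Fin N → F) →ₗ[F] F, ∀ x, φ x = ∑ j, x j * y j := by
    refine ⟨{ toFun := fun x => ∑ j, x j * y j, map_add' := ?_, map_smul' := ?_ }, fun _ => rfl⟩
    · intro a b
      rw [← Finset.sum_add_distrib]
      exact Finset.sum_congr rfl fun j _ => by simp [add_mul]
    · intro m a
      simp only [RingHom.id_apply, smul_eq_mul, Pi.smul_apply]
      rw [Finset.mul_sum]
      exact Finset.sum_congr rfl fun j _ => by ring
  obtain ⟨φ, hφ⟩ := φdef
  constructor
  · intro hy i
    exact hy (G i) (Submodule.subset_span ⟨i, rfl⟩)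
  · intro h x hx
    have hle : Submodule.span F (Set.range G) ≤ LinearMap.ker φ := by
      rw [Submodule.span_le]
      rintro _ ⟨i, rfl⟩
      simp only [SetLike.mem_coe, LinearMap.mem_ker, hφ]
      exact h i
    have := hle hx
    rw [LinearMap.mem_ker, hφ] at this
    exact this

end Infra

section Gk
variable {F : Type*} [Field F] [DecidableEq F] {n k : ℕ} {α v : Fin n → F} {δ : F}

lemma Gk_emb (i : Fin k) (j : Fin n) :
    Gkmat F n k α v δ i (embJ n j) = v j * α j ^ (if (i : ℕ) = k - 1 then k else (i : ℕ)) := by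
  have hj : ((embJ n j : Fin (n+2)) : ℕ) < n := j.isLt
  rw [Gkmat, dif_pos hj]
  rfl

lemma Gk_cA (i : Fin k) :
    Gkmat F n k α v δ i (colA n) = if (i : ℕ) = k - 1 then 1 else 0 := by
  have h : ((colA n : Fin (n+2)) : ℕ) = n := rfl
  rw [Gkmat, h, dif_neg (lt_irrefl n), if_pos rfl]

lemma Gk_cB (i : Fin k) :
    Gkmat F n k α v δ i (colB n)
      = if (i : ℕ) = k - 2 then 1 else if (i : ℕ) = k - 1 then δ else 0 := by
  have h : ((colB n : Fin (n+2)) : ℕ) = n + 1 := rfl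
  rw [Gkmat, h, dif_neg (by omega : ¬ n + 1 < n), if_neg (by omega : ¬ n + 1 = n)]

lemma rowsum (y : Fin (n + 2) → F) (i : Fin k) :
    ∑ j, Gkmat F n k α v δ i j * y j
      = (∑ j : Fin n, (v j * y (embJ n j)) * α j ^ (if (i : ℕ) = k - 1 then k else (i : ℕ)))
        + (if (i : ℕ) = k - 1 then 1 else 0) * y (colA n)
        + (if (i : ℕ) = k - 2 then 1 else if (i : ℕ) = k - 1 then δ else 0) * y (colB n) := by
  rw [sum_split (fun j => Gkmat F n k α v δ i j * y j)]
  congr 1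
  · congr 1
    · exact Finset.sum_congr rfl fun j _ => by rw [Gk_emb]; ring
    · rw [Gk_cA]
  · rw [Gk_cB]

lemma memD_iff (hk : 3 ≤ k) (y : Fin (n + 2) → F) :
    y ∈ dualCode (Submodule.span F (Set.range (Gkmat F n k α v δ))) ↔
      (∀ e, e < k - 2 → ∑ j : Fin n, (v j * y (embJ n j)) * α j ^ e = 0) ∧
      (∑ j : Fin n, (v j * y (embJ n j)) * α j ^ (k - 2)) + y (colB n) = 0 ∧
      (∑ j : Fin n, (v j * y (embJ n j)) * α j ^ k) + y (colA n) + δ * y (colB n) = 0 := by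
  rw [mem_dual_span_iff]
  have hval : ∀ (e : ℕ) (he : e < k), ((⟨e, he⟩ : Fin k) : ℕ) = e := fun e he => rfl
  constructor
  · intro h
    refine ⟨?_, ?_, ?_⟩
    · intro e he
      have h5 := h ⟨e, by omega⟩
      rw [rowsum] at h5
      simp only [hval e (by omega), if_neg (show ¬ e = k - 1 by omega),
        if_neg (show ¬ e = k - 2 by omega)] at h5
      simpa using h5
    · have h5 := h ⟨k - 2, by omega⟩
      rw [rowsum] at h5
      simp only [hval (k-2) (by omega), if_neg (show ¬ k - 2 = k - 1 by omega),
        eq_self_iff_true, if_true] at h5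
      simpa using h5
    · have h5 := h ⟨k - 1, by omega⟩
      rw [rowsum] at h5
      simp only [hval (k-1) (by omega), if_neg (show ¬ k - 1 = k - 2 by omega),
        eq_self_iff_true, if_true] at h5
      simpa using h5
  · rintro ⟨h1, h2, h3⟩ i
    rw [rowsum]
    rcases eq_or_ne ((i : ℕ)) (k - 1) with hi | hi
    · simp only [hi, eq_self_iff_true, if_true, if_neg (show ¬ k - 1 = k - 2 by omega)]
      simpa using h3
    · rcases eq_or_ne ((i : ℕ)) (k - 2) with hi2 | hi2
      · simp only [hi2, if_neg (show ¬ k - 2 = k - 1 by omega), eq_self_iff_true, if_true]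
        simpa using h2
      · have hlt : (i : ℕ) < k - 2 := by have := i.isLt; omega
        simp only [if_neg hi, if_neg hi2]
        simpa using h1 _ hlt

lemma norm_split (y : Fin (n + 2) → F) :
    hammingNorm y = (Finset.univ.filter (fun j : Fin n => y (embJ n j) ≠ 0)).card
      + (if y (colA n) ≠ 0 then 1 else 0) + (if y (colB n) ≠ 0 then 1 else 0) := by
  have h0 : hammingNorm y = (Finset.univ.filter (fun x => y x ≠ 0)).card := by
    rfl
  rw [h0, Finset.card_filter, sum_split (fun x => if y x ≠ 0 then 1 else 0),
    ← Finset.card_filter]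

lemma eq_zero_of_parts (y : Fin (n + 2) → F) (h1 : ∀ j : Fin n, y (embJ n j) = 0)
    (h2 : y (colA n) = 0) (h3 : y (colB n) = 0) : y = 0 := by
  funext x
  rcases fin_cases3 x with ⟨j, rfl⟩ | rfl | rfl
  · exact h1 j
  · exact h2
  · exact h3

end Gk

section Poly
open Polynomial Finset

lemma pair_min' {ι : Type*} [LinearOrder ι] {a b : ι} (h : a < b) (hne : ({a,b} : Finset ι).Nonempty) :
    ({a, b} : Finset ι).min' hne = a := by
  apply le_antisymm (Finset.min'_le _ _ (by simp))
  apply Finset.le_min'; intro y hy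
  rcases Finset.mem_insert.mp hy with hh | hh
  · exact hh ▸ le_refl _
  · exact (Finset.mem_singleton.mp hh) ▸ le_of_lt h

lemma pair_max' {ι : Type*} [LinearOrder ι] {a b : ι} (h : a < b) (hne : ({a,b} : Finset ι).Nonempty) :
    ({a, b} : Finset ι).max' hne = b := by
  apply le_antisymm
  · apply Finset.max'_le; intro y hy
    rcases Finset.mem_insert.mp hy with hh | hh
    · exact hh ▸ le_of_lt h
    · exact (Finset.mem_singleton.mp hh) ▸ le_refl _
  · exact Finset.le_max' _ _ (by simp)

lemma psum2 {F : Type*} [CommRing F] {ι : Type*} [LinearOrder ι]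
    (s : Finset ι) (f : ι → F) :
    ∑ u ∈ s.powersetCard 2, ∏ i ∈ u, f i
      = ∑ i ∈ s, ∑ j ∈ s.filter (fun j => i < j), f i * f j := by
  classical
  have key : ∑ i ∈ s, ∑ j ∈ s.filter (fun j => i < j), f i * f j
      = ∑ p ∈ (s ×ˢ s).filter (fun p => p.1 < p.2), f p.1 * f p.2 := by
    rw [Finset.sum_filter, Finset.sum_product]
    simp [Finset.sum_filter]
  rw [key]
  have hne : ∀ u ∈ s.powersetCard 2, u.Nonempty := fun u hu =>
    Finset.card_pos.mp (by rw [(Finset.mem_powersetCard.mp hu).2]; omega)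
  refine (Finset.sum_bij' (fun (p : ι × ι) (_ : p ∈ (s ×ˢ s).filter (fun p => p.1 < p.2)) => ({p.1, p.2} : Finset ι))
    (fun u hu => (u.min' (hne u hu), u.max' (hne u hu))) ?_ ?_ ?_ ?_ ?_).symm
  · intro p hp
    simp only [Finset.mem_filter, Finset.mem_product] at hp
    refine Finset.mem_powersetCard.mpr ⟨?_, Finset.card_pair (ne_of_lt hp.2)⟩
    intro x hx
    rcases Finset.mem_insert.mp hx with h | h
    · exact h ▸ hp.1.1
    · exact (Finset.mem_singleton.mp h) ▸ hp.1.2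
  · intro u hu
    obtain ⟨hsub, hcard⟩ := Finset.mem_powersetCard.mp hu
    simp only [Finset.mem_filter, Finset.mem_product]
    refine ⟨⟨hsub (Finset.min'_mem _ _), hsub (Finset.max'_mem _ _)⟩, ?_⟩
    obtain ⟨a, b, hab, rfl⟩ := Finset.card_eq_two.mp hcard
    exact Finset.min'_lt_max' _ (by simp) (by simp [Finset.mem_insert]) hab
  · intro p hp
    simp only [Finset.mem_filter, Finset.mem_product] at hp
    exact Prod.ext (pair_min' hp.2 (Finset.insert_nonempty _ _)) (pair_max' hp.2 (Finset.insert_nonempty _ _))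
  · intro u hu
    obtain ⟨hsub, hcard⟩ := Finset.mem_powersetCard.mp hu
    obtain ⟨a, b, hab, rfl⟩ := Finset.card_eq_two.mp hcard
    dsimp only
    rcases lt_or_gt_of_ne hab with h | h
    · rw [pair_min' h, pair_max' h]
    · have e : ({a, b} : Finset ι) = ({b, a} : Finset ι) := Finset.pair_comm a b
      simp_rw [e]
      rw [pair_min' h, pair_max' h]
  · intro p hp
    simp only [Finset.mem_filter, Finset.mem_product] at hp
    exact (Finset.prod_pair (ne_of_lt hp.2)).symm

variable {F : Type*} [Field F] {ι : Type*} [DecidableEq ι]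

lemma coeffP (T : Finset ι) (f : ι → F) {e : ℕ} (he : e ≤ T.card) :
    (∏ i ∈ T, (X - C (f i))).coeff e
      = (-1) ^ (T.card - e) * ∑ u ∈ T.powersetCard (T.card - e), ∏ i ∈ u, f i := by
  have h1 : (∏ i ∈ T, (X - C (f i))) = ((T.val.map f).map (fun t => X - C t)).prod := by
    rw [Multiset.map_map]
    rfl
  have hc : Multiset.card (T.val.map f) = T.card := by rw [Multiset.card_map]; rfl
  rw [h1, Multiset.prod_X_sub_C_coeff _ (by rw [hc]; exact he), hc,
    Finset.esymm_map_val]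

lemma coeffP_top (T : Finset ι) (f : ι → F) :
    (∏ i ∈ T, (X - C (f i))).coeff T.card = 1 := by
  rw [coeffP T f le_rfl]
  simp

lemma coeffP_one (T : Finset ι) (f : ι → F) (h : 1 ≤ T.card) :
    (∏ i ∈ T, (X - C (f i))).coeff (T.card - 1) = -∑ i ∈ T, f i := by
  rw [coeffP T f (Nat.sub_le _ _)]
  have : T.card - (T.card - 1) = 1 := by omega
  rw [this]
  rw [Finset.powersetCard_one, Finset.sum_map]
  simp

lemma coeffP_two [LinearOrder ι] (T : Finset ι) (f : ι → F) (h : 2 ≤ T.card) :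
    (∏ i ∈ T, (X - C (f i))).coeff (T.card - 2)
      = ∑ i ∈ T, ∑ j ∈ T.filter (fun j => i < j), f i * f j := by
  rw [coeffP T f (Nat.sub_le _ _)]
  have : T.card - (T.card - 2) = 2 := by omega
  rw [this, psum2]
  simp



lemma degP (T : Finset ι) (f : ι → F) :
    (∏ i ∈ T, (X - C (f i))).natDegree = T.card := by
  rw [Polynomial.natDegree_prod_of_monic _ _ (fun i _ => monic_X_sub_C (f i))]
  simp

lemma vanish (f : ι → F) (hf : Function.Injective f) (T : Finset ι) (c : ι → F) (m : ℕ)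
    (hT : T.card ≤ m) (h : ∀ e < m, ∑ j ∈ T, c j * f j ^ e = 0) : ∀ j ∈ T, c j = 0 := by
  intro j0 hj0
  set q : F[X] := ∏ i ∈ T.erase j0, (X - C (f i)) with hq
  have hdeg : q.natDegree = T.card - 1 := by
    rw [hq, degP]; rw [Finset.card_erase_of_mem hj0]
  have hcard : 1 ≤ T.card := Finset.card_pos.mpr ⟨j0, hj0⟩
  have hlt : q.natDegree < m := by omega
  have key : (0 : F) = c j0 * q.eval (f j0) := by
    have h0 : (0 : F) = ∑ e ∈ Finset.range m, q.coeff e * (∑ j ∈ T, c j * f j ^ e) := by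
      rw [Finset.sum_congr rfl (fun e he => by rw [h e (Finset.mem_range.mp he), mul_zero])]
      simp
    rw [h0]
    have h1 : ∀ e, q.coeff e * (∑ j ∈ T, c j * f j ^ e)
        = ∑ j ∈ T, c j * (q.coeff e * f j ^ e) := by
      intro e; rw [Finset.mul_sum]; exact Finset.sum_congr rfl fun j _ => by ring
    simp_rw [h1]
    rw [Finset.sum_comm]
    have h2 : ∀ j ∈ T, ∑ e ∈ Finset.range m, c j * (q.coeff e * f j ^ e)
        = c j * q.eval (f j) := by
      intro j _
      rw [← Finset.mul_sum, Polynomial.eval_eq_sum_range' hlt]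
    rw [Finset.sum_congr rfl h2]
    apply Finset.sum_eq_single
    · intro j hj hne
      have : q.eval (f j) = 0 := by
        rw [hq, Polynomial.eval_prod]
        exact Finset.prod_eq_zero (Finset.mem_erase.mpr ⟨hne, hj⟩)
          (by simp)
      rw [this, mul_zero]
    · intro hj; exact absurd hj0 hj
  have hne : q.eval (f j0) ≠ 0 := by
    rw [hq, Polynomial.eval_prod]
    apply Finset.prod_ne_zero_iff.mpr
    intro i hi
    have : f j0 ≠ f i := fun hvv => (Finset.mem_erase.mp hi).1 (hf hvv).symm
    simp [sub_ne_zero.mpr this]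
  rcases mul_eq_zero.mp key.symm with h' | h'
  · exact h'
  · exact absurd h' hne

lemma recur (f : ι → F) (T : Finset ι) (c : ι → F) (s : ℕ) :
    ∑ e ∈ Finset.range (T.card + 1),
      (∏ i ∈ T, (X - C (f i))).coeff e * (∑ j ∈ T, c j * f j ^ (e + s)) = 0 := by
  set P : F[X] := ∏ i ∈ T, (X - C (f i)) with hP
  have hdeg : P.natDegree < T.card + 1 := by rw [hP, degP]; omega
  have h1 : ∀ e, P.coeff e * (∑ j ∈ T, c j * f j ^ (e + s))
      = ∑ j ∈ T, c j * f j ^ s * (P.coeff e * f j ^ e) := by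
    intro e; rw [Finset.mul_sum]; exact Finset.sum_congr rfl fun j _ => by
      rw [pow_add]; ring
  simp_rw [h1]
  rw [Finset.sum_comm]
  apply Finset.sum_eq_zero
  intro j hj
  rw [← Finset.mul_sum, ← Polynomial.eval_eq_sum_range' hdeg]
  have : P.eval (f j) = 0 := by
    rw [hP, Polynomial.eval_prod]
    exact Finset.prod_eq_zero hj (by simp)
  rw [this, mul_zero]



lemma exists_moments (f : ι → F) (hf : Function.Injective f) (T : Finset ι) (b : ℕ → F) :
    ∃ c : ι → F, (∀ j ∉ T, c j = 0) ∧ ∀ e, e < T.card → ∑ j ∈ T, c j * f j ^ e = b e := by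
  classical
  set t := T.card with ht
  set eqv : {x // x ∈ T} ≃ Fin t := T.equivFin with heqv
  set g : Fin t → ι := fun i => (eqv.symm i : ι) with hg
  have hginj : Function.Injective g := by
    intro i j hij
    have : eqv.symm i = eqv.symm j := Subtype.ext hij
    simpa using congrArg eqv this
  set A : Matrix (Fin t) (Fin t) F := (Matrix.vandermonde (f ∘ g)).transpose with hA
  have hdet : A.det ≠ 0 := by
    rw [hA, Matrix.det_transpose, Matrix.det_vandermonde]
    apply Finset.prod_ne_zero_iff.mpr
    intro i _
    apply Finset.prod_ne_zero_iff.mpr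
    intro j hj
    have hij : i ≠ j := fun h => by subst h; simp at hj
    exact sub_ne_zero.mpr fun h => hij (hginj (hf h)).symm
  have hunit : IsUnit A.det := isUnit_iff_ne_zero.mpr hdet
  set w : Fin t → F := A⁻¹.mulVec (fun e : Fin t => b (e : ℕ)) with hw
  have hAw : A.mulVec w = fun e : Fin t => b (e : ℕ) := by
    rw [hw, Matrix.mulVec_mulVec, Matrix.mul_nonsing_inv _ hunit, Matrix.one_mulVec]
  refine ⟨fun j => if h : j ∈ T then w (eqv ⟨j, h⟩) else 0, fun j hj => dif_neg hj, ?_⟩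
  intro e he
  have step1 : ∑ j ∈ T, (if h : j ∈ T then w (eqv ⟨j, h⟩) else 0) * f j ^ e
      = ∑ x : {x // x ∈ T}, w (eqv x) * f (x : ι) ^ e := by
    rw [← Finset.sum_coe_sort T (fun j => (if h : j ∈ T then w (eqv ⟨j, h⟩) else 0) * f j ^ e)]
    apply Finset.sum_congr rfl
    intro x _
    rw [dif_pos x.2]
  have step2 : ∑ x : {x // x ∈ T}, w (eqv x) * f (x : ι) ^ e
      = ∑ i : Fin t, w i * f (g i) ^ e := by
    apply Fintype.sum_equiv eqv
    intro x
    simp [hg]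
  have step3 : ∑ i : Fin t, w i * f (g i) ^ e = A.mulVec w ⟨e, he⟩ := by
    simp only [hA, Matrix.mulVec, dotProduct, Matrix.transpose_apply,
      Matrix.vandermonde, Function.comp_apply]
    apply Finset.sum_congr rfl
    intro i _
    show w i * f (g i) ^ e = f (g i) ^ e * w i
    ring
  rw [step1, step2, step3, hAw]

end Poly

section Main
variable {F : Type*} [Field F] [DecidableEq F] {n k : ℕ} {α v : Fin n → F} {δ : F}

lemma sum_T_eq (y : Fin (n + 2) → F) (e : ℕ) :
    ∑ j ∈ Finset.univ.filter (fun j : Fin n => y (embJ n j) ≠ 0),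
        (v j * y (embJ n j)) * α j ^ e
      = ∑ j : Fin n, (v j * y (embJ n j)) * α j ^ e := by
  apply Finset.sum_subset (Finset.subset_univ _)
  intro j _ hj
  simp only [Finset.mem_filter, Finset.mem_univ, true_and, not_not] at hj
  rw [hj, mul_zero, zero_mul]

lemma lower_bound (hk : 3 ≤ k) (hα : Function.Injective α) (hv : ∀ i, v i ≠ 0) :
    ∀ y ∈ dualCode (Submodule.span F (Set.range (Gkmat F n k α v δ))),
      y ≠ 0 → k ≤ hammingNorm y := by
  intro y hy hne
  by_contra hlt
  push_neg at hlt
  rw [memD_iff hk] at hy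
  obtain ⟨h1, h2, h3⟩ := hy
  rw [norm_split] at hlt
  set T := Finset.univ.filter (fun j : Fin n => y (embJ n j) ≠ 0) with hT
  have hzero_of : (∀ j ∈ T, v j * y (embJ n j) = 0) → ∀ j : Fin n, y (embJ n j) = 0 := by
    intro hz j
    by_contra hne'
    have hjT : j ∈ T := by rw [hT]; simp [hne']
    exact hne' (by
      have := hz j hjT
      rcases mul_eq_zero.mp this with h | h
      · exact absurd h (hv j)
      · exact h)
  rcases eq_or_ne (y (colB n)) 0 with hB | hB
  · have hcard : T.card ≤ k - 1 := by
      by_contra hc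
      simp only [hB, ne_eq, not_true_eq_false, if_false] at hlt
      omega
    have hz := vanish α hα T (fun j => v j * y (embJ n j)) (k - 1) hcard ?_
    · have hembz := hzero_of hz
      have hsumz : ∀ e : ℕ, ∑ j : Fin n, (v j * y (embJ n j)) * α j ^ e = 0 := by
        intro e
        apply Finset.sum_eq_zero
        intro j _
        rw [hembz j, mul_zero, zero_mul]
      have hA : y (colA n) = 0 := by
        have := h3
        rw [hsumz k, hB] at this
        simpa using this
      exact hne (eq_zero_of_parts y hembz hA hB)
    · intro e he
      rw [sum_T_eq]
      rcases lt_or_ge e (k - 2) with h' | h'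
      · exact h1 e h'
      · have : e = k - 2 := by omega
        subst this
        rw [hB, add_zero] at h2
        exact h2
  · have hcard : T.card ≤ k - 2 := by
      simp only [hB, ne_eq, not_false_eq_true, if_true] at hlt
      omega
    have hz := vanish α hα T (fun j => v j * y (embJ n j)) (k - 2) hcard ?_
    · have hembz := hzero_of hz
      have hsumz : ∑ j : Fin n, (v j * y (embJ n j)) * α j ^ (k - 2) = 0 := by
        apply Finset.sum_eq_zero
        intro j _
        rw [hembz j, mul_zero, zero_mul]
      rw [hsumz, zero_add] at h2
      exact hB h2
    · intro e he
      rw [sum_T_eq]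
      exact h1 e he


def buildY {F : Type*} [Field F] {n : ℕ} (v c : Fin n → F) (a b : F) : Fin (n + 2) → F :=
  fun x => if h : (x : ℕ) < n then c ⟨(x : ℕ), h⟩ / v ⟨(x : ℕ), h⟩
    else if (x : ℕ) = n then a else b

lemma buildY_emb {F : Type*} [Field F] {n : ℕ} (v c : Fin n → F) (a b : F) (j : Fin n) :
    buildY v c a b (embJ n j) = c j / v j := by
  have hj : ((embJ n j : Fin (n+2)) : ℕ) < n := j.isLt
  rw [buildY, dif_pos hj]
  rfl

lemma buildY_cA {F : Type*} [Field F] {n : ℕ} (v c : Fin n → F) (a b : F) :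
    buildY v c a b (colA n) = a := by
  have h : ((colA n : Fin (n+2)) : ℕ) = n := rfl
  rw [buildY, h, dif_neg (lt_irrefl n), if_pos rfl]

lemma buildY_cB {F : Type*} [Field F] {n : ℕ} (v c : Fin n → F) (a b : F) :
    buildY v c a b (colB n) = b := by
  have h1 : ((colB n : Fin (n+2)) : ℕ) = n + 1 := rfl
  rw [buildY, h1, dif_neg (by omega : ¬ n + 1 < n), if_neg (by omega : ¬ n + 1 = n)]

lemma sum_range_split2 {M : Type*} [AddCommMonoid M] (f : ℕ → M) (m : ℕ) :
    ∑ e ∈ Finset.range (m + 2), f e = (∑ e ∈ Finset.range m, f e) + f m + f (m + 1) := by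
  rw [Finset.sum_range_succ, Finset.sum_range_succ]

lemma sum_range_split3 {M : Type*} [AddCommMonoid M] (f : ℕ → M) (m : ℕ) :
    ∑ e ∈ Finset.range (m + 3), f e
      = (∑ e ∈ Finset.range m, f e) + f m + f (m + 1) + f (m + 2) := by
  rw [Finset.sum_range_succ, Finset.sum_range_succ, Finset.sum_range_succ]

lemma exists_word_L (hk : 3 ≤ k) (hα : Function.Injective α) (hv : ∀ i, v i ≠ 0)
    (L : Finset (Fin n)) (hL : L.card = k) (hsum : ∑ i ∈ L, α i = 0) :
    ∃ y ∈ dualCode (Submodule.span F (Set.range (Gkmat F n k α v δ))),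
      y ≠ 0 ∧ hammingNorm y ≤ k := by
  obtain ⟨c, hsupp, hmom⟩ :=
    exists_moments α hα L (fun e => if e = k - 1 then 1 else 0)
  rw [hL] at hmom
  set y : Fin (n + 2) → F := buildY v c 0 0 with hy
  have hvyc : ∀ j, v j * y (embJ n j) = c j := by
    intro j
    rw [hy, buildY_emb, mul_comm, div_mul_cancel₀ _ (hv j)]
  have hmo : ∀ e : ℕ, ∑ j : Fin n, (v j * y (embJ n j)) * α j ^ e
      = ∑ j ∈ L, c j * α j ^ e := by
    intro e
    simp_rw [hvyc]
    exact (Finset.sum_subset (Finset.subset_univ L)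
      (fun j _ hj => by rw [hsupp j hj, zero_mul])).symm
  have hmk : ∑ j ∈ L, c j * α j ^ k = 0 := by
    have hr := recur α L c 0
    simp only [Nat.add_zero] at hr
    rw [hL] at hr
    rw [show k + 1 = (k - 1) + 2 by omega, sum_range_split2, show k - 1 + 1 = k by omega] at hr
    have hz1 : ∑ e ∈ Finset.range (k - 1),
        (∏ i ∈ L, (X - C (α i))).coeff e * (∑ j ∈ L, c j * α j ^ e) = 0 := by
      apply Finset.sum_eq_zero
      intro e he
      rw [Finset.mem_range] at he
      rw [hmom e (by omega), if_neg (by omega), mul_zero]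
    have hz2 : (∏ i ∈ L, (X - C (α i))).coeff (k - 1) = 0 := by
      have := coeffP_one L α (by omega : 1 ≤ L.card)
      rw [hL] at this
      rw [this, hsum, neg_zero]
    have hz3 : (∏ i ∈ L, (X - C (α i))).coeff k = 1 := by
      have := coeffP_top L α
      rwa [hL] at this
    rw [hz1, hz2, hz3, zero_mul, one_mul, zero_add, zero_add] at hr
    exact hr
  refine ⟨y, ?_, ?_, ?_⟩
  · rw [memD_iff hk]
    refine ⟨?_, ?_, ?_⟩
    · intro e he
      rw [hmo, hmom e (by omega), if_neg (by omega)]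
    · rw [hmo, hmom (k - 2) (by omega), if_neg (by omega), hy, buildY_cB, add_zero]
    · rw [hmo, hmk, hy, buildY_cA, buildY_cB, mul_zero, add_zero, add_zero]
  · intro h0
    have h1 : ∑ j ∈ L, c j * α j ^ (k - 1) = 1 := by
      rw [hmom (k - 1) (by omega), if_pos rfl]
    have h2 : ∑ j ∈ L, c j * α j ^ (k - 1) = 0 := by
      rw [← hmo (k - 1)]
      apply Finset.sum_eq_zero
      intro j _
      rw [h0]
      simp
    rw [h1] at h2
    exact one_ne_zero h2
  · rw [norm_split, hy, buildY_cA, buildY_cB]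
    simp only [ne_eq, not_true_eq_false, if_false, add_zero]
    have hsub : Finset.univ.filter (fun j : Fin n => buildY v c 0 0 (embJ n j) ≠ 0) ⊆ L := by
      intro j hj
      simp only [Finset.mem_filter, Finset.mem_univ, true_and] at hj
      by_contra hjL
      exact hj (by rw [buildY_emb, hsupp j hjL, zero_div])
    calc (Finset.univ.filter (fun j : Fin n => buildY v c 0 0 (embJ n j) ≠ 0)).card
        ≤ L.card := Finset.card_le_card hsub
      _ = k := hL

lemma exists_word_M (hk : 3 ≤ k) (hα : Function.Injective α) (hv : ∀ i, v i ≠ 0)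
    (M : Finset (Fin n)) (hM : M.card = k - 1)
    (hδ : δ = (∑ i ∈ M, α i) ^ 2 - ∑ i ∈ M, ∑ j ∈ M.filter (fun j => i < j), α i * α j) :
    ∃ y ∈ dualCode (Submodule.span F (Set.range (Gkmat F n k α v δ))),
      y ≠ 0 ∧ hammingNorm y ≤ k := by
  obtain ⟨c, hsupp, hmom⟩ :=
    exists_moments α hα M (fun e => if e = k - 2 then 1 else 0)
  rw [hM] at hmom
  have ctop : (∏ i ∈ M, (X - C (α i))).coeff (k - 1) = 1 := by
    have := coeffP_top M α; rwa [hM] at this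
  have cone : (∏ i ∈ M, (X - C (α i))).coeff (k - 2) = -∑ i ∈ M, α i := by
    have := coeffP_one M α (by omega : 1 ≤ M.card)
    rwa [hM, show k - 1 - 1 = k - 2 by omega] at this
  have ctwo : (∏ i ∈ M, (X - C (α i))).coeff (k - 3)
      = ∑ i ∈ M, ∑ j ∈ M.filter (fun j => i < j), α i * α j := by
    have := coeffP_two M α (by omega : 2 ≤ M.card)
    rwa [hM, show k - 1 - 2 = k - 3 by omega] at this
  have hmok2 : ∑ j ∈ M, c j * α j ^ (k - 2) = 1 := by
    rw [hmom (k - 2) (by omega), if_pos rfl]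
  have hmok1 : ∑ j ∈ M, c j * α j ^ (k - 1) = ∑ i ∈ M, α i := by
    have hr := recur α M c 0
    simp only [Nat.add_zero] at hr
    rw [hM, show k - 1 + 1 = (k - 2) + 2 by omega, sum_range_split2,
      show k - 2 + 1 = k - 1 by omega] at hr
    have hz1 : ∑ e ∈ Finset.range (k - 2),
        (∏ i ∈ M, (X - C (α i))).coeff e * (∑ j ∈ M, c j * α j ^ e) = 0 := by
      apply Finset.sum_eq_zero
      intro e he
      rw [Finset.mem_range] at he
      rw [hmom e (by omega), if_neg (by omega), mul_zero]
    rw [hz1, cone, ctop, hmok2, mul_one, one_mul, zero_add] at hr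
    linear_combination hr
  have hmok : ∑ j ∈ M, c j * α j ^ k = δ := by
    have hr := recur α M c 1
    rw [hM, show k - 1 + 1 = (k - 3) + 3 by omega, sum_range_split3] at hr
    rw [show k - 3 + 1 = k - 2 by omega, show k - 3 + 2 = k - 1 by omega,
      show k - 2 + 1 = k - 1 by omega, show k - 1 + 1 = k by omega] at hr
    have hz1 : ∑ e ∈ Finset.range (k - 3),
        (∏ i ∈ M, (X - C (α i))).coeff e * (∑ j ∈ M, c j * α j ^ (e + 1)) = 0 := by
      apply Finset.sum_eq_zero
      intro e he
      rw [Finset.mem_range] at he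
      rw [hmom (e + 1) (by omega), if_neg (by omega), mul_zero]
    rw [hz1, ctwo, cone, ctop, hmok2, hmok1, mul_one, one_mul, zero_add] at hr
    rw [hδ]
    linear_combination hr
  set y : Fin (n + 2) → F := buildY v c 0 (-1) with hy
  have hvyc : ∀ j, v j * y (embJ n j) = c j := by
    intro j
    rw [hy, buildY_emb, mul_comm, div_mul_cancel₀ _ (hv j)]
  have hmo : ∀ e : ℕ, ∑ j : Fin n, (v j * y (embJ n j)) * α j ^ e
      = ∑ j ∈ M, c j * α j ^ e := by
    intro e
    simp_rw [hvyc]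
    exact (Finset.sum_subset (Finset.subset_univ M)
      (fun j _ hj => by rw [hsupp j hj, zero_mul])).symm
  refine ⟨y, ?_, ?_, ?_⟩
  · rw [memD_iff hk]
    refine ⟨?_, ?_, ?_⟩
    · intro e he
      rw [hmo, hmom e (by omega), if_neg (by omega)]
    · rw [hmo, hmok2, hy, buildY_cB]
      ring
    · rw [hmo, hmok, hy, buildY_cA, buildY_cB]
      ring
  · intro h0
    have : y (colB n) = -1 := by rw [hy, buildY_cB]
    rw [h0] at this
    simp only [Pi.zero_apply] at this
    exact one_ne_zero (neg_eq_zero.mp this.symm)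
  · rw [norm_split, hy, buildY_cA, buildY_cB]
    have h1 : (if (0:F) ≠ 0 then 1 else 0) = 0 := by simp
    have h2 : (if (-1:F) ≠ 0 then 1 else 0) = 1 := by simp
    rw [h1, h2, add_zero]
    have hsub : Finset.univ.filter (fun j : Fin n => buildY v c 0 (-1) (embJ n j) ≠ 0) ⊆ M := by
      intro j hj
      simp only [Finset.mem_filter, Finset.mem_univ, true_and] at hj
      by_contra hjM
      exact hj (by rw [buildY_emb, hsupp j hjM, zero_div])
    have := Finset.card_le_card hsub
    rw [hM] at this
    omega

lemma forward_dir (hk : 3 ≤ k) (hα : Function.Injective α) (hv : ∀ i, v i ≠ 0)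
    (y : Fin (n + 2) → F)
    (hy : y ∈ dualCode (Submodule.span F (Set.range (Gkmat F n k α v δ))))
    (hne : y ≠ 0) (hnorm : hammingNorm y = k) :
    (∃ L : Finset (Fin n), L.card = k ∧ ∑ i ∈ L, α i = 0) ∨
      (∃ M : Finset (Fin n), M.card = k - 1 ∧
        δ = (∑ i ∈ M, α i) ^ 2 - ∑ i ∈ M, ∑ j ∈ M.filter (fun j => i < j), α i * α j) := by
  rw [memD_iff hk] at hy
  obtain ⟨h1, h2, h3⟩ := hy
  rw [norm_split] at hnorm
  set T := Finset.univ.filter (fun j : Fin n => y (embJ n j) ≠ 0) with hT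
  have hcne : ∀ j ∈ T, v j * y (embJ n j) ≠ 0 := by
    intro j hj
    rw [hT, Finset.mem_filter] at hj
    exact mul_ne_zero (hv j) hj.2
  have hTsum : ∀ e : ℕ, ∑ j ∈ T, (v j * y (embJ n j)) * α j ^ e
      = ∑ j : Fin n, (v j * y (embJ n j)) * α j ^ e := fun e => sum_T_eq y e
  have hmoT : ∀ e, e < k - 2 → ∑ j ∈ T, (v j * y (embJ n j)) * α j ^ e = 0 := by
    intro e he
    rw [hTsum]
    exact h1 e he
  have hTne : ∀ m : ℕ, T.card ≤ m →
      (∀ e, e < m → ∑ j ∈ T, (v j * y (embJ n j)) * α j ^ e = 0) → T = ∅ := by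
    intro m hm hmom
    have := vanish α hα T (fun j => v j * y (embJ n j)) m hm hmom
    rw [Finset.eq_empty_iff_forall_notMem]
    intro j hj
    exact hcne j hj (this j hj)
  rcases eq_or_ne (y (colB n)) 0 with hB | hB
  · have iB : (if y (colB n) ≠ 0 then 1 else 0) = 0 := by simp [hB]
    rw [iB, add_zero] at hnorm
    have hmoT' : ∀ e, e < k - 1 → ∑ j ∈ T, (v j * y (embJ n j)) * α j ^ e = 0 := by
      intro e he
      rcases lt_or_ge e (k - 2) with h' | h'
      · exact hmoT e h'
      · have : e = k - 2 := by omega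
        subst this
        rw [hTsum]
        rw [hB, add_zero] at h2
        exact h2
    rcases eq_or_ne (y (colA n)) 0 with hA | hA
    · -- T.card = k
      have iA : (if y (colA n) ≠ 0 then 1 else 0) = 0 := by simp [hA]
      rw [iA, add_zero] at hnorm
      have hmoTk : ∑ j ∈ T, (v j * y (embJ n j)) * α j ^ k = 0 := by
        rw [hTsum]
        rw [hA, hB, add_zero, mul_zero, add_zero] at h3
        exact h3
      by_cases hk1 : ∑ j ∈ T, (v j * y (embJ n j)) * α j ^ (k - 1) = 0
      · exfalso
        have hemp := hTne k (by omega) ?_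
        · rw [hemp] at hnorm
          simp at hnorm
          omega
        · intro e he
          rcases lt_or_ge e (k - 1) with h' | h'
          · exact hmoT' e h'
          · have : e = k - 1 := by omega
            subst this
            exact hk1
      · left
        refine ⟨T, hnorm, ?_⟩
        have hr := recur α T (fun j => v j * y (embJ n j)) 0
        simp only [Nat.add_zero] at hr
        rw [hnorm, show k + 1 = (k - 1) + 2 by omega, sum_range_split2,
          show k - 1 + 1 = k by omega] at hr
        have hz1 : ∑ e ∈ Finset.range (k - 1),
            (∏ i ∈ T, (X - C (α i))).coeff e * (∑ j ∈ T, (v j * y (embJ n j)) * α j ^ e) = 0 := by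
          apply Finset.sum_eq_zero
          intro e he
          rw [Finset.mem_range] at he
          rw [hmoT' e (by omega), mul_zero]
        have ctop : (∏ i ∈ T, (X - C (α i))).coeff k = 1 := by
          have := coeffP_top T α; rwa [hnorm] at this
        have cone : (∏ i ∈ T, (X - C (α i))).coeff (k - 1) = -∑ i ∈ T, α i := by
          have := coeffP_one T α (by omega : 1 ≤ T.card)
          rwa [hnorm] at this
        rw [hz1, ctop, cone, hmoTk] at hr
        have hfin : (∑ i ∈ T, α i) * (∑ j ∈ T, (v j * y (embJ n j)) * α j ^ (k - 1)) = 0 := by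
          linear_combination -hr
        rcases mul_eq_zero.mp hfin with h' | h'
        · exact h'
        · exact absurd h' hk1
    · -- T.card = k - 1, vanish contradiction
      exfalso
      have iA : (if y (colA n) ≠ 0 then 1 else 0) = 1 := by simp [hA]
      rw [iA] at hnorm
      have hemp := hTne (k - 1) (by omega) hmoT'
      rw [hemp] at hnorm
      simp at hnorm
      omega
  · have iB : (if y (colB n) ≠ 0 then 1 else 0) = 1 := by simp [hB]
    rw [iB] at hnorm
    rcases eq_or_ne (y (colA n)) 0 with hA | hA
    · -- T.card = k - 1, condition (2)
      have iA : (if y (colA n) ≠ 0 then 1 else 0) = 0 := by simp [hA]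
      rw [iA, add_zero] at hnorm
      have hTcard : T.card = k - 1 := by omega
      right
      refine ⟨T, hTcard, ?_⟩
      have hmoTk2 : ∑ j ∈ T, (v j * y (embJ n j)) * α j ^ (k - 2) = -y (colB n) := by
        rw [hTsum]
        linear_combination h2
      have hmoTk : ∑ j ∈ T, (v j * y (embJ n j)) * α j ^ k = -(δ * y (colB n)) := by
        rw [hTsum]
        rw [hA, add_zero] at h3
        linear_combination h3
      have ctop : (∏ i ∈ T, (X - C (α i))).coeff (k - 1) = 1 := by
        have := coeffP_top T α; rwa [hTcard] at this
      have cone : (∏ i ∈ T, (X - C (α i))).coeff (k - 2) = -∑ i ∈ T, α i := by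
        have := coeffP_one T α (by omega : 1 ≤ T.card)
        rwa [hTcard, show k - 1 - 1 = k - 2 by omega] at this
      have ctwo : (∏ i ∈ T, (X - C (α i))).coeff (k - 3)
          = ∑ i ∈ T, ∑ j ∈ T.filter (fun j => i < j), α i * α j := by
        have := coeffP_two T α (by omega : 2 ≤ T.card)
        rwa [hTcard, show k - 1 - 2 = k - 3 by omega] at this
      -- first recurrence
      have hr0 := recur α T (fun j => v j * y (embJ n j)) 0
      simp only [Nat.add_zero] at hr0
      rw [hTcard, show k - 1 + 1 = (k - 2) + 2 by omega, sum_range_split2,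
        show k - 2 + 1 = k - 1 by omega] at hr0
      have hz0 : ∑ e ∈ Finset.range (k - 2),
          (∏ i ∈ T, (X - C (α i))).coeff e * (∑ j ∈ T, (v j * y (embJ n j)) * α j ^ e) = 0 := by
        apply Finset.sum_eq_zero
        intro e he
        rw [Finset.mem_range] at he
        rw [hmoT e (by omega), mul_zero]
      rw [hz0, cone, ctop, hmoTk2, one_mul, zero_add] at hr0
      -- hr0 : (-∑ α) * (-y colB) + moT (k-1) = 0
      have hmoTk1 : ∑ j ∈ T, (v j * y (embJ n j)) * α j ^ (k - 1)
          = -((∑ i ∈ T, α i) * y (colB n)) := by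
        linear_combination hr0
      -- second recurrence
      have hr1 := recur α T (fun j => v j * y (embJ n j)) 1
      rw [hTcard, show k - 1 + 1 = (k - 3) + 3 by omega, sum_range_split3] at hr1
      rw [show k - 3 + 1 = k - 2 by omega, show k - 3 + 2 = k - 1 by omega,
        show k - 2 + 1 = k - 1 by omega, show k - 1 + 1 = k by omega] at hr1
      have hz1 : ∑ e ∈ Finset.range (k - 3),
          (∏ i ∈ T, (X - C (α i))).coeff e * (∑ j ∈ T, (v j * y (embJ n j)) * α j ^ (e + 1)) = 0 := by
        apply Finset.sum_eq_zero
        intro e he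
        rw [Finset.mem_range] at he
        rw [hmoT (e + 1) (by omega), mul_zero]
      rw [hz1, ctwo, cone, ctop, hmoTk2, hmoTk1, hmoTk, one_mul, zero_add] at hr1
      have hfin : (δ - ((∑ i ∈ T, α i) ^ 2
          - ∑ i ∈ T, ∑ j ∈ T.filter (fun j => i < j), α i * α j)) * y (colB n) = 0 := by
        linear_combination -hr1
      rcases mul_eq_zero.mp hfin with h' | h'
      · exact sub_eq_zero.mp h'
      · exact absurd h' hB
    · -- T.card = k - 2, vanish contradiction
      exfalso
      have iA : (if y (colA n) ≠ 0 then 1 else 0) = 1 := by simp [hA]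
      rw [iA] at hnorm
      have hemp := hTne (k - 2) (by omega) hmoT
      rw [hemp] at hnorm
      simp at hnorm
      omega

end Main


/-- `C_k(A,v)^⊥` (of length `n+2` and dimension `n+2-k`) is AMDS, i.e. its minimum
Hamming distance equals `k`, iff (1) some `k` of the `α_i` sum to `0`, or
(2) there is a `(k-1)`-subset `M` with `δ = (∑_{i∈M} α_i)² - ∑_{i<j∈M} α_i α_j`. -/
theorem stmt_8 (F : Type*) [Field F] [Fintype F] [DecidableEq F] (n k : ℕ)
    (hk : 3 ≤ k) (hkn : k ≤ n) (hnq : n ≤ Fintype.card F)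
    (α v : Fin n → F) (hα : Function.Injective α) (hv : ∀ i, v i ≠ 0) (δ : F) :
    minDist (dualCode (Submodule.span F (Set.range (Gkmat F n k α v δ)))) k ↔
      ((∃ L : Finset (Fin n), L.card = k ∧ ∑ i ∈ L, α i = 0) ∨
        (∃ M : Finset (Fin n), M.card = k - 1 ∧
          δ = (∑ i ∈ M, α i) ^ 2 - ∑ i ∈ M, ∑ j ∈ M.filter (fun j => i < j), α i * α j)) := by
  constructor
  · rintro ⟨⟨y, hy, hne, hnorm⟩, _⟩
    exact forward_dir hk hα hv y hy hne hnorm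
  · intro hcond
    constructor
    · rcases hcond with ⟨L, hL, hsum⟩ | ⟨M, hM, hδ⟩
      · obtain ⟨y, hy, hne, hle⟩ := exists_word_L hk hα hv L hL hsum
        exact ⟨y, hy, hne, le_antisymm hle (lower_bound hk hα hv y hy hne)⟩
      · obtain ⟨y, hy, hne, hle⟩ := exists_word_M hk hα hv M hM hδ
        exact ⟨y, hy, hne, le_antisymm hle (lower_bound hk hα hv y hy hne)⟩
    · exact fun c hc hcne => lower_bound hk hα hv c hc hcne
end

section
/- The code C_k(A,v) is NMDS (i.e., both C_k(A,v) and its Euclidean dual are AMDS) if and only if the following three conditions hold: (a) for every subset I ⊆ {1,…,n} of size k+1 there exists a subset J ⊆ I of size k with Σ_{i∈J} α_i ≠ 0; (b) for every subset I' ⊆ {1,…,n} of size k there exists a subset J' ⊆ I' of size k−1 with δ − (Σ_{i∈J'} α_i)^2 + Σ_{i<j, i,j∈J'} α_i α_j ≠ 0; and (c) either there exists a subset L ⊆ {1,…,n} of size k with Σ_{i∈L} α_i = 0, or there exists a subset M ⊆ {1,…,n} of size k−1 with δ = (Σ_{i∈M} α_i)^2 − Σ_{i<j, i,j∈M} α_i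 α_j. -/
open Polynomial Finset


set_option linter.unusedSectionVars false
set_option maxHeartbeats 1000000

namespace TGRS

variable {F : Type*} [Field F] [DecidableEq F] {n k : ℕ}


def E2' (α : Fin n → F) (J : Finset (Fin n)) : F :=
  ∑ i ∈ J, ∑ j ∈ J.filter (fun j => i < j), α i * α j

lemma E2'_insert (α : Fin n → F) {a : Fin n} {J : Finset (Fin n)} (ha : a ∉ J) :
    E2' α (insert a J) = E2' α J + α a * ∑ j ∈ J, α j := by
  classical
  unfold E2'
  rw [Finset.sum_insert ha]
  have h1 : (insert a J).filter (fun j => a < j) = J.filter (fun j => a < j) := by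
    rw [Finset.filter_insert]; simp [lt_irrefl]
  have h2 : ∀ i ∈ J, ∑ j ∈ (insert a J).filter (fun j => i < j), α i * α j
      = (if i < a then α i * α a else 0) + ∑ j ∈ J.filter (fun j => i < j), α i * α j := by
    intro i _
    rw [Finset.filter_insert]
    by_cases h : i < a
    · rw [if_pos h, Finset.sum_insert (by simp [ha]), if_pos h]
    · rw [if_neg h, if_neg h, zero_add]
  rw [h1, Finset.sum_congr rfl h2, Finset.sum_add_distrib]
  have h3 : ∑ i ∈ J, (if i < a then α i * α a else 0) = ∑ i ∈ J.filter (fun i => i < a), α i * α a := by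
    rw [Finset.sum_filter]
  have h4 : J.filter (fun j => ¬ a < j) = J.filter (fun j => j < a) := by
    apply Finset.filter_congr
    intro x hx
    have : x ≠ a := by rintro rfl; exact ha hx
    simp only [not_lt, eq_iff_iff]
    exact ⟨fun h => lt_of_le_of_ne h this, le_of_lt⟩
  have h5 : α a * ∑ j ∈ J, α j
      = ∑ j ∈ J.filter (fun j => a < j), α a * α j + ∑ i ∈ J.filter (fun i => i < a), α i * α a := by
    rw [← Finset.sum_filter_add_sum_filter_not J (fun j => a < j), mul_add, Finset.mul_sum, h4,
      Finset.mul_sum]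
    congr 1
    exact Finset.sum_congr rfl fun x _ => mul_comm _ _
  rw [h3, h5]; ring

lemma E2'_erase (α : Fin n → F) {a : Fin n} {J : Finset (Fin n)} (ha : a ∈ J) :
    E2' α J = E2' α (J.erase a) + α a * ∑ j ∈ J.erase a, α j := by
  conv_lhs => rw [← Finset.insert_erase ha]
  exact E2'_insert α (Finset.notMem_erase a J)

lemma sum_erase' (α : Fin n → F) {a : Fin n} {J : Finset (Fin n)} (ha : a ∈ J) :
    ∑ j ∈ J, α j = α a + ∑ j ∈ J.erase a, α j := by
  conv_lhs => rw [← Finset.insert_erase ha]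
  exact Finset.sum_insert (Finset.notMem_erase a J)

noncomputable def PP (α : Fin n → F) (J : Finset (Fin n)) : F[X] :=
  ∏ i ∈ J, (X - C (α i))

lemma PP_monic (α : Fin n → F) (J : Finset (Fin n)) : (PP α J).Monic :=
  monic_prod_of_monic _ _ fun i _ => monic_X_sub_C (α i)

lemma PP_ne_zero (α : Fin n → F) (J : Finset (Fin n)) : PP α J ≠ 0 :=
  (PP_monic α J).ne_zero

lemma PP_natDegree (α : Fin n → F) (J : Finset (Fin n)) : (PP α J).natDegree = J.card := by
  unfold PP
  rw [natDegree_prod _ _ (fun i _ => X_sub_C_ne_zero (α i))]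
  simp [natDegree_X_sub_C]

lemma PP_coeff_card (α : Fin n → F) (J : Finset (Fin n)) : (PP α J).coeff J.card = 1 := by
  have := (PP_monic α J).coeff_natDegree
  rwa [PP_natDegree] at this

lemma PP_coeff_gt (α : Fin n → F) (J : Finset (Fin n)) {m : ℕ} (hm : J.card < m) :
    (PP α J).coeff m = 0 :=
  coeff_eq_zero_of_natDegree_lt (by rw [PP_natDegree]; exact hm)

lemma PP_eval_mem (α : Fin n → F) {J : Finset (Fin n)} {j : Fin n} (hj : j ∈ J) :
    (PP α J).eval (α j) = 0 := by
  unfold PP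
  rw [eval_prod]
  exact Finset.prod_eq_zero hj (by simp)

lemma PP_erase (α : Fin n → F) {a : Fin n} {J : Finset (Fin n)} (ha : a ∈ J) :
    PP α J = PP α (J.erase a) * (X - C (α a)) := by
  unfold PP
  rw [mul_comm]
  exact (Finset.mul_prod_erase J _ ha).symm

lemma PP_coeff_top1 (α : Fin n → F) : ∀ (c : ℕ) (J : Finset (Fin n)), J.card = c + 1 →
    (PP α J).coeff c = -∑ i ∈ J, α i := by
  intro c
  induction c with
  | zero =>
    intro J hJ
    obtain ⟨a, rfl⟩ := Finset.card_eq_one.mp hJ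
    simp [PP]
  | succ c ih =>
    intro J hJ
    have hne : J.Nonempty := Finset.card_pos.mp (by omega)
    obtain ⟨a, ha⟩ := hne
    have hJ' : (J.erase a).card = c + 1 := by
      rw [Finset.card_erase_of_mem ha]; omega
    rw [PP_erase α ha, coeff_mul_X_sub_C, ih _ hJ', ← hJ', PP_coeff_card,
      sum_erase' α ha]
    ring

lemma E2'_singleton (α : Fin n → F) (a : Fin n) : E2' α {a} = 0 := by
  unfold E2'
  rw [Finset.sum_singleton]
  have : ({a} : Finset (Fin n)).filter (fun j => a < j) = ∅ := by
    ext x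
    simp only [Finset.mem_filter, Finset.mem_singleton, Finset.notMem_empty, iff_false,
      not_and]
    rintro rfl; exact lt_irrefl _
  simp [this]

lemma PP_coeff_top2 (α : Fin n → F) : ∀ (c : ℕ) (J : Finset (Fin n)), J.card = c + 2 →
    (PP α J).coeff c = E2' α J := by
  intro c
  induction c with
  | zero =>
    intro J hJ
    obtain ⟨a, b, hab, rfl⟩ := Finset.card_eq_two.mp hJ
    have h1 : E2' α ({a, b} : Finset (Fin n)) = α a * α b := by
      have : ({a, b} : Finset (Fin n)) = insert a {b} := rfl
      rw [this, E2'_insert α (by simp [hab]), E2'_singleton, Finset.sum_singleton, zero_add]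
    rw [h1]
    unfold PP
    rw [Finset.prod_insert (by simp [hab]), Finset.prod_singleton, coeff_zero_eq_eval_zero]
    simp
  | succ c ih =>
    intro J hJ
    have hne : J.Nonempty := Finset.card_pos.mp (by omega)
    obtain ⟨a, ha⟩ := hne
    have hJ' : (J.erase a).card = c + 2 := by
      rw [Finset.card_erase_of_mem ha]; omega
    rw [PP_erase α ha, coeff_mul_X_sub_C, ih _ hJ', PP_coeff_top1 α (c+1) _ (by omega),
      E2'_erase α ha]
    ring


variable {α : Fin n → F}

lemma PP_eval (α : Fin n → F) (J : Finset (Fin n)) (x : F) :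
    (PP α J).eval x = ∏ i ∈ J, (x - α i) := by
  unfold PP; rw [eval_prod]; simp

/-- Lagrange denominator -/
noncomputable def ww (α : Fin n → F) (J : Finset (Fin n)) (j : Fin n) : F :=
  ∏ i ∈ J.erase j, (α j - α i)

lemma ww_ne_zero (hα : Function.Injective α) (J : Finset (Fin n)) (j : Fin n) :
    ww α J j ≠ 0 := by
  unfold ww
  apply Finset.prod_ne_zero_iff.mpr
  intro i hi
  have : i ≠ j := Finset.ne_of_mem_erase hi
  exact sub_ne_zero_of_ne fun h => this (hα h.symm)

lemma ww_eq_eval (α : Fin n → F) (J : Finset (Fin n)) (j : Fin n) :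
    ww α J j = (PP α (J.erase j)).eval (α j) := by
  rw [PP_eval]; rfl

lemma interp_sum (hα : Function.Injective α) {J : Finset (Fin n)} (hJ : J.Nonempty)
    (p : F[X]) (hdeg : p.natDegree ≤ J.card - 1) :
    ∑ j ∈ J, p.eval (α j) * (ww α J j)⁻¹ = p.coeff (J.card - 1) := by
  classical
  set R : F[X] := ∑ j ∈ J, C (p.eval (α j) * (ww α J j)⁻¹) * PP α (J.erase j) with hR
  have heval : ∀ m ∈ J, R.eval (α m) = p.eval (α m) := by
    intro m hm
    rw [hR, eval_finset_sum]
    rw [Finset.sum_eq_single m]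
    · rw [eval_mul, eval_C, ← ww_eq_eval, mul_assoc,
        inv_mul_cancel₀ (ww_ne_zero hα J m), mul_one]
    · intro j hj hjm
      rw [eval_mul, PP_eval_mem α (Finset.mem_erase.mpr ⟨hjm.symm, hm⟩), mul_zero]
    · intro h; exact absurd hm h
  have hdegR : R.natDegree ≤ J.card - 1 := by
    apply Polynomial.natDegree_sum_le_of_forall_le
    intro j hj
    calc (C (p.eval (α j) * (ww α J j)⁻¹) * PP α (J.erase j)).natDegree
        ≤ (PP α (J.erase j)).natDegree := natDegree_C_mul_le _ _
      _ = (J.erase j).card := PP_natDegree α _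
      _ ≤ J.card - 1 := by rw [Finset.card_erase_of_mem hj]
  have hzero : R - p = 0 := by
    apply eq_zero_of_natDegree_lt_card_of_eval_eq_zero' (R - p) (J.image α)
    · intro x hx
      obtain ⟨j, hj, rfl⟩ := Finset.mem_image.mp hx
      rw [eval_sub, heval j hj, sub_self]
    · rw [Finset.card_image_of_injective J hα]
      calc (R - p).natDegree ≤ max R.natDegree p.natDegree := natDegree_sub_le _ _
        _ ≤ J.card - 1 := max_le hdegR hdeg
        _ < J.card := Nat.sub_lt (Finset.card_pos.mpr hJ) one_pos
  have hRp : R = p := sub_eq_zero.mp hzero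
  calc ∑ j ∈ J, p.eval (α j) * (ww α J j)⁻¹
      = ∑ j ∈ J, (C (p.eval (α j) * (ww α J j)⁻¹) * PP α (J.erase j)).coeff (J.card - 1) := by
        apply Finset.sum_congr rfl
        intro j hj
        rw [coeff_C_mul]
        have h1 : (PP α (J.erase j)).coeff (J.card - 1) = 1 := by
          have := PP_coeff_card α (J.erase j)
          rwa [Finset.card_erase_of_mem hj] at this
        rw [h1, mul_one]
    _ = R.coeff (J.card - 1) := by rw [hR, finset_sum_coeff]
    _ = p.coeff (J.card - 1) := by rw [hRp]

lemma vand_zero (hα : Function.Injective α) {J : Finset (Fin n)} (c : Fin n → F) {m : ℕ}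
    (hcard : J.card ≤ m) (h : ∀ e, e < m → ∑ j ∈ J, c j * α j ^ e = 0) :
    ∀ j ∈ J, c j = 0 := by
  intro j0 hj0
  have hJpos : 0 < J.card := Finset.card_pos.mpr ⟨j0, hj0⟩
  set P := PP α (J.erase j0) with hP
  have hdeg : P.natDegree < m := by
    rw [hP, PP_natDegree, Finset.card_erase_of_mem hj0]; omega
  have key : ∑ j ∈ J, c j * P.eval (α j) = 0 := by
    have heval : ∀ x : F, P.eval x = ∑ e ∈ Finset.range m, P.coeff e * x ^ e := fun x =>
      eval_eq_sum_range' hdeg x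
    calc ∑ j ∈ J, c j * P.eval (α j)
        = ∑ j ∈ J, ∑ e ∈ Finset.range m, P.coeff e * (c j * α j ^ e) := by
          apply Finset.sum_congr rfl; intro j _
          rw [heval, Finset.mul_sum]
          apply Finset.sum_congr rfl; intro e _; ring
      _ = ∑ e ∈ Finset.range m, P.coeff e * ∑ j ∈ J, c j * α j ^ e := by
          rw [Finset.sum_comm]
          apply Finset.sum_congr rfl; intro e _
          rw [Finset.mul_sum]
      _ = 0 := by
          apply Finset.sum_eq_zero; intro e he
          rw [h e (Finset.mem_range.mp he), mul_zero]
  have hsingle : ∑ j ∈ J, c j * P.eval (α j) = c j0 * ww α J j0 := by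
    rw [Finset.sum_eq_single j0]
    · rw [ww_eq_eval]
    · intro j hj hjne
      rw [hP, PP_eval_mem α (Finset.mem_erase.mpr ⟨hjne, hj⟩), mul_zero]
    · intro hn; exact absurd hj0 hn
  have := hsingle.symm.trans key
  exact (mul_eq_zero.mp this).resolve_right (ww_ne_zero hα J j0)

lemma vand_prop (hα : Function.Injective α) {J : Finset (Fin n)} (c : Fin n → F) {m : ℕ}
    (hcard : J.card = m + 1) (h : ∀ e, e < m → ∑ j ∈ J, c j * α j ^ e = 0)
    {j0 j1 : Fin n} (hj0 : j0 ∈ J) (hj1 : j1 ∈ J) :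
    c j0 * ww α J j0 = c j1 * ww α J j1 := by
  by_cases hne : j0 = j1
  · rw [hne]
  have hj1' : j1 ∈ J.erase j0 := Finset.mem_erase.mpr ⟨fun h => hne h.symm, hj1⟩
  have hj0' : j0 ∈ J.erase j1 := Finset.mem_erase.mpr ⟨hne, hj0⟩
  have hm1 : 1 ≤ m := by
    have : 2 ≤ J.card := Finset.one_lt_card.mpr ⟨j0, hj0, j1, hj1, hne⟩
    omega
  set P := PP α ((J.erase j0).erase j1) with hP
  have hdeg : P.natDegree < m := by
    rw [hP, PP_natDegree, Finset.card_erase_of_mem hj1', Finset.card_erase_of_mem hj0, hcard]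
    omega
  have key : ∑ j ∈ J, c j * P.eval (α j) = 0 := by
    have heval : ∀ x : F, P.eval x = ∑ e ∈ Finset.range m, P.coeff e * x ^ e := fun x =>
      eval_eq_sum_range' hdeg x
    calc ∑ j ∈ J, c j * P.eval (α j)
        = ∑ j ∈ J, ∑ e ∈ Finset.range m, P.coeff e * (c j * α j ^ e) := by
          apply Finset.sum_congr rfl; intro j _
          rw [heval, Finset.mul_sum]
          apply Finset.sum_congr rfl; intro e _; ring
      _ = ∑ e ∈ Finset.range m, P.coeff e * ∑ j ∈ J, c j * α j ^ e := by
          rw [Finset.sum_comm]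
          apply Finset.sum_congr rfl; intro e _
          rw [Finset.mul_sum]
      _ = 0 := by
          apply Finset.sum_eq_zero; intro e he
          rw [h e (Finset.mem_range.mp he), mul_zero]
  have hsplit : ∑ j ∈ J, c j * P.eval (α j)
      = c j0 * P.eval (α j0) + c j1 * P.eval (α j1) := by
    rw [← Finset.add_sum_erase J _ hj0, ← Finset.add_sum_erase (J.erase j0) _ hj1']
    have : ∑ j ∈ (J.erase j0).erase j1, c j * P.eval (α j) = 0 := by
      apply Finset.sum_eq_zero
      intro j hj
      rw [hP, PP_eval_mem α hj, mul_zero]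
    rw [this, add_zero]
  have key2 : c j0 * P.eval (α j0) + c j1 * P.eval (α j1) = 0 := hsplit.symm.trans key
  have hw0 : ww α J j0 = (α j0 - α j1) * P.eval (α j0) := by
    rw [ww, hP, PP_eval, ← Finset.mul_prod_erase (J.erase j0) _ hj1']
  have hw1 : ww α J j1 = (α j1 - α j0) * P.eval (α j1) := by
    rw [ww, hP, PP_eval, ← Finset.mul_prod_erase (J.erase j1) _ hj0', Finset.erase_right_comm]
  rw [hw0, hw1]
  linear_combination (α j0 - α j1) * key2



lemma sum_pow_w_lt (hα : Function.Injective α) {J : Finset (Fin n)} {c : ℕ}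
    (hc : J.card = c + 1) {m : ℕ} (hm : m ≤ c) :
    ∑ j ∈ J, α j ^ m * (ww α J j)⁻¹ = if m = c then 1 else 0 := by
  have hJ : J.Nonempty := Finset.card_pos.mp (by omega)
  have h := interp_sum hα hJ (X ^ m : F[X]) (by rw [natDegree_X_pow]; omega)
  simp only [eval_pow, eval_X, coeff_X_pow, hc, Nat.add_sub_cancel] at h
  rw [h]
  by_cases hmc : m = c <;> simp [hmc]
  exact fun h => absurd h.symm hmc

lemma sum_pow_w_card (hα : Function.Injective α) {J : Finset (Fin n)} {c : ℕ}
    (hc : J.card = c + 1) :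
    ∑ j ∈ J, α j ^ (c + 1) * (ww α J j)⁻¹ = ∑ i ∈ J, α i := by
  have hJ : J.Nonempty := Finset.card_pos.mp (by omega)
  set p : F[X] := X ^ (c + 1) - PP α J with hp
  have hdeg : p.natDegree ≤ c := by
    apply natDegree_le_iff_coeff_eq_zero.mpr
    intro N hN
    rw [hp, coeff_sub, coeff_X_pow]
    rcases Nat.lt_or_ge (c + 1) N with h | h
    · rw [PP_coeff_gt α J (by omega), if_neg (by omega), sub_zero]
    · have hNc : N = c + 1 := by omega
      rw [hNc, if_pos rfl, ← hc, PP_coeff_card, sub_self]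
  have h := interp_sum hα hJ p (by rw [hc, Nat.add_sub_cancel]; exact hdeg)
  rw [hc, Nat.add_sub_cancel] at h
  have heval : ∀ j ∈ J, p.eval (α j) = α j ^ (c + 1) := by
    intro j hj
    rw [hp, eval_sub, eval_pow, eval_X, PP_eval_mem α hj, sub_zero]
  rw [← Finset.sum_congr rfl (fun j hj => by rw [heval j hj])] at h
  rw [h, hp, coeff_sub, coeff_X_pow, if_neg (by omega), PP_coeff_top1 α c J hc]
  ring

lemma sum_pow_w_card1 (hα : Function.Injective α) {J : Finset (Fin n)} {c : ℕ}
    (hc : J.card = c + 2) :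
    ∑ j ∈ J, α j ^ (c + 3) * (ww α J j)⁻¹ = (∑ i ∈ J, α i) ^ 2 - E2' α J := by
  have hJ : J.Nonempty := Finset.card_pos.mp (by omega)
  set S : F := ∑ i ∈ J, α i with hS
  set q : F[X] := PP α J * (X - C (-S)) with hq
  have hq3 : q.coeff (c + 3) = 1 := by
    rw [hq, coeff_mul_X_sub_C, ← hc, PP_coeff_card, PP_coeff_gt α J (by omega)]
    ring
  have hq2 : q.coeff (c + 2) = 0 := by
    rw [hq, coeff_mul_X_sub_C, PP_coeff_top1 α (c+1) J (by omega), ← hc, PP_coeff_card]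
    ring
  have hq1 : q.coeff (c + 1) = E2' α J - S ^ 2 := by
    rw [hq, coeff_mul_X_sub_C, PP_coeff_top2 α c J hc, PP_coeff_top1 α (c+1) J (by omega)]
    ring
  have hqgt : ∀ N, c + 3 < N → q.coeff N = 0 := by
    intro N hN
    apply coeff_eq_zero_of_natDegree_lt
    rw [hq, natDegree_mul (PP_ne_zero α J) (X_sub_C_ne_zero _), PP_natDegree, natDegree_X_sub_C,
      hc]
    omega
  set p : F[X] := X ^ (c + 3) - q with hp
  have hdeg : p.natDegree ≤ c + 1 := by
    apply natDegree_le_iff_coeff_eq_zero.mpr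
    intro N hN
    rw [hp, coeff_sub, coeff_X_pow]
    rcases Nat.lt_or_ge (c + 3) N with h | h
    · rw [hqgt N h, if_neg (by omega), sub_zero]
    · have : N = c + 2 ∨ N = c + 3 := by omega
      rcases this with rfl | rfl
      · rw [hq2, if_neg (by omega), sub_zero]
      · rw [hq3, if_pos rfl, sub_self]
  have h := interp_sum hα hJ p (by rw [hc]; simpa using hdeg)
  rw [hc] at h
  have heval : ∀ j ∈ J, p.eval (α j) = α j ^ (c + 3) := by
    intro j hj
    rw [hp, eval_sub, hq, eval_mul, PP_eval_mem α hj, zero_mul, sub_zero, eval_pow, eval_X]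
  rw [← Finset.sum_congr rfl (fun j hj => by rw [heval j hj])] at h
  have hc1 : c + 2 - 1 = c + 1 := rfl
  rw [hc1] at h
  rw [h, hp, coeff_sub, coeff_X_pow, if_neg (by omega), hq1]
  ring


def expo (k : ℕ) (i : Fin k) : ℕ := if (i : ℕ) = k - 1 then k else (i : ℕ)

lemma expo_le (i : Fin k) : expo k i ≤ k := by
  unfold expo; split
  · exact le_refl k
  · exact le_of_lt i.isLt

lemma expo_injective {i i' : Fin k} (h : expo k i = expo k i') : i = i' := by
  apply Fin.ext
  unfold expo at h
  split at h <;> split at h <;> omega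

noncomputable def pol (k : ℕ) (a : Fin k → F) : F[X] := ∑ i, C (a i) * X ^ expo k i

lemma pol_eval (k : ℕ) (a : Fin k → F) (x : F) :
    (pol k a).eval x = ∑ i, a i * x ^ expo k i := by
  unfold pol
  rw [eval_finset_sum]
  simp

lemma pol_coeff (k : ℕ) (a : Fin k → F) (i : Fin k) :
    (pol k a).coeff (expo k i) = a i := by
  unfold pol
  rw [finset_sum_coeff]
  rw [Finset.sum_eq_single i]
  · simp [coeff_X_pow]
  · intro i' _ hne
    rw [coeff_C_mul, coeff_X_pow, if_neg, mul_zero]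
    exact fun h => hne (expo_injective h.symm)
  · simp

lemma pol_coeff_k1 (hk3 : 3 ≤ k) (a : Fin k → F) : (pol k a).coeff (k - 1) = 0 := by
  unfold pol
  rw [finset_sum_coeff]
  apply Finset.sum_eq_zero
  intro i _
  rw [coeff_C_mul, coeff_X_pow, if_neg, mul_zero]
  unfold expo; split <;> omega

lemma pol_natDegree_le (k : ℕ) (a : Fin k → F) : (pol k a).natDegree ≤ k := by
  apply Polynomial.natDegree_sum_le_of_forall_le
  intro i _
  calc (C (a i) * X ^ expo k i).natDegree ≤ (X ^ expo k i : F[X]).natDegree :=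
      natDegree_C_mul_le _ _
    _ = expo k i := natDegree_X_pow _
    _ ≤ k := expo_le i

lemma pol_natDegree_le' (hk3 : 3 ≤ k) (a : Fin k → F) (h : a ⟨k - 1, by omega⟩ = 0) :
    (pol k a).natDegree ≤ k - 2 := by
  apply Polynomial.natDegree_sum_le_of_forall_le
  intro i _
  by_cases hi : (i : ℕ) = k - 1
  · have : i = ⟨k - 1, by omega⟩ := Fin.ext hi
    rw [this, h]
    simp
  · calc (C (a i) * X ^ expo k i).natDegree ≤ (X ^ expo k i : F[X]).natDegree :=
        natDegree_C_mul_le _ _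
      _ = expo k i := natDegree_X_pow _
      _ ≤ k - 2 := by unfold expo; rw [if_neg hi]; have := i.isLt; omega

lemma pol_zero_imp (k : ℕ) (a : Fin k → F) (h : pol k a = 0) : a = 0 := by
  funext i
  have := pol_coeff k a i
  rw [h] at this
  simpa using this.symm

def emb (j : Fin n) : Fin (n + 2) := ⟨j, by omega⟩
def sN : Fin (n + 2) := ⟨n, by omega⟩
def sN1 : Fin (n + 2) := ⟨n + 1, by omega⟩

noncomputable def enc (k : ℕ) (hk3 : 3 ≤ k) (α v : Fin n → F) (δ : F) (a : Fin k → F) :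
    Fin (n + 2) → F := fun j =>
  if hj : (j : ℕ) < n then v ⟨j, hj⟩ * (pol k a).eval (α ⟨j, hj⟩)
  else if (j : ℕ) = n then a ⟨k - 1, by omega⟩
  else a ⟨k - 2, by omega⟩ + δ * a ⟨k - 1, by omega⟩

variable {α v : Fin n → F} {δ : F}

lemma enc_emb (hk3 : 3 ≤ k) (a : Fin k → F) (j : Fin n) :
    enc k hk3 α v δ a (emb j) = v j * (pol k a).eval (α j) := by
  unfold enc emb
  rw [dif_pos j.isLt]

lemma enc_sN (hk3 : 3 ≤ k) (a : Fin k → F) :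
    enc k hk3 α v δ a sN = a ⟨k - 1, by omega⟩ := by
  unfold enc sN
  rw [dif_neg (show ¬ (n < n) by omega), if_pos rfl]

lemma enc_sN1 (hk3 : 3 ≤ k) (a : Fin k → F) :
    enc k hk3 α v δ a sN1 = a ⟨k - 2, by omega⟩ + δ * a ⟨k - 1, by omega⟩ := by
  unfold enc sN1
  rw [dif_neg (show ¬ (n + 1 < n) by omega), if_neg (show ¬ (n + 1 = n) by omega)]

lemma G_emb (i : Fin k) (j : Fin n) :
    Gkmat F n k α v δ i (emb j) = v j * α j ^ expo k i := by
  unfold Gkmat emb expo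
  rw [dif_pos j.isLt]

lemma G_sN (i : Fin k) :
    Gkmat F n k α v δ i sN = if (i : ℕ) = k - 1 then 1 else 0 := by
  unfold Gkmat sN
  rw [dif_neg (show ¬ (n < n) by omega), if_pos rfl]

lemma G_sN1 (i : Fin k) :
    Gkmat F n k α v δ i sN1
      = if (i : ℕ) = k - 2 then 1 else if (i : ℕ) = k - 1 then δ else 0 := by
  unfold Gkmat sN1
  rw [dif_neg (show ¬ (n + 1 < n) by omega), if_neg (show ¬ (n + 1 = n) by omega)]

lemma sum_split {M : Type*} [AddCommMonoid M] (f : Fin (n + 2) → M) :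
    ∑ j, f j = (∑ j : Fin n, f (emb j)) + f sN + f sN1 := by
  rw [Fin.sum_univ_castSucc (n := n + 1), Fin.sum_univ_castSucc (n := n)]
  have h1 : ∀ j : Fin n, (j.castSucc).castSucc = emb j := fun j => Fin.ext (by simp [emb])
  have h2 : ((Fin.last n).castSucc : Fin (n + 2)) = sN := Fin.ext (by simp [sN])
  have h3 : (Fin.last (n + 1) : Fin (n + 2)) = sN1 := Fin.ext (by simp [sN1])
  rw [h2, h3]
  have h4 : ∑ j : Fin n, f ((j.castSucc).castSucc) = ∑ j : Fin n, f (emb j) :=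
    Finset.sum_congr rfl fun j _ => by rw [h1]
  rw [h4]

lemma hammingNorm_split (c : Fin (n + 2) → F) :
    hammingNorm c = (univ.filter fun j : Fin n => c (emb j) ≠ 0).card
      + (if c sN ≠ 0 then 1 else 0) + (if c sN1 ≠ 0 then 1 else 0) := by
  classical
  have h0 : hammingNorm c = ∑ j : Fin (n + 2), if c j ≠ 0 then 1 else 0 := by
    rw [hammingNorm, Finset.card_filter]
  rw [h0, sum_split (fun j => if c j ≠ 0 then 1 else 0), Finset.card_filter]

lemma sum_ite_k1 (hk3 : 3 ≤ k) (f : Fin k → F) :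
    ∑ i : Fin k, (if (i : ℕ) = k - 1 then f i else 0) = f ⟨k - 1, by omega⟩ := by
  rw [Finset.sum_eq_single (⟨k - 1, by omega⟩ : Fin k)]
  · rw [if_pos rfl]
  · intro i _ hne
    rw [if_neg (fun h => hne (Fin.ext h))]
  · simp

lemma sum_ite_k2 (hk3 : 3 ≤ k) (f : Fin k → F) :
    ∑ i : Fin k, (if (i : ℕ) = k - 2 then f i else 0) = f ⟨k - 2, by omega⟩ := by
  rw [Finset.sum_eq_single (⟨k - 2, by omega⟩ : Fin k)]
  · rw [if_pos rfl]
  · intro i _ hne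
    rw [if_neg (fun h => hne (Fin.ext h))]
  · simp

lemma enc_spec (hk3 : 3 ≤ k) (a : Fin k → F) :
    ∑ i, a i • Gkmat F n k α v δ i = enc k hk3 α v δ a := by
  funext j
  have hsum : (∑ i, a i • Gkmat F n k α v δ i) j = ∑ i, a i * Gkmat F n k α v δ i j := by
    simp [Finset.sum_apply]
  rw [hsum]
  unfold enc
  by_cases hj : (j : ℕ) < n
  · rw [dif_pos hj]
    have hG : ∀ i, Gkmat F n k α v δ i j = v ⟨j, hj⟩ * α ⟨j, hj⟩ ^ expo k i := by
      intro i; unfold Gkmat expo; rw [dif_pos hj]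
    rw [Finset.sum_congr rfl fun i _ => by rw [hG i]]
    rw [pol_eval, Finset.mul_sum]
    exact Finset.sum_congr rfl fun i _ => by ring
  · rw [dif_neg hj]
    by_cases hj2 : (j : ℕ) = n
    · rw [if_pos hj2]
      have hG : ∀ i, Gkmat F n k α v δ i j = if (i : ℕ) = k - 1 then 1 else 0 := by
        intro i; unfold Gkmat; rw [dif_neg hj, if_pos hj2]
      rw [Finset.sum_congr rfl fun i _ => by rw [hG i]]
      rw [← sum_ite_k1 hk3 a]
      exact Finset.sum_congr rfl fun i _ => by split <;> simp
    · rw [if_neg hj2]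
      have hG : ∀ i, Gkmat F n k α v δ i j
          = if (i : ℕ) = k - 2 then 1 else if (i : ℕ) = k - 1 then δ else 0 := by
        intro i; unfold Gkmat; rw [dif_neg hj, if_neg hj2]
      rw [Finset.sum_congr rfl fun i _ => by rw [hG i]]
      have hptwise : ∀ i : Fin k, a i * (if (i : ℕ) = k - 2 then (1:F) else if (i : ℕ) = k - 1 then δ else 0)
          = (if (i : ℕ) = k - 2 then a i else 0) + (if (i : ℕ) = k - 1 then δ * a i else 0) := by
        intro i
        by_cases h2 : (i : ℕ) = k - 2
        · rw [if_pos h2, if_pos h2, if_neg (by omega), mul_one, add_zero]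
        · rw [if_neg h2, if_neg h2, zero_add]
          by_cases h1 : (i : ℕ) = k - 1
          · rw [if_pos h1, if_pos h1, mul_comm]
          · rw [if_neg h1, if_neg h1, mul_zero]
      rw [Finset.sum_congr rfl fun i _ => hptwise i, Finset.sum_add_distrib,
        sum_ite_k1 hk3 (fun i => δ * a i), sum_ite_k2 hk3 a]

lemma mem_span_iff (hk3 : 3 ≤ k) (c : Fin (n + 2) → F) :
    c ∈ Submodule.span F (Set.range (Gkmat F n k α v δ))
      ↔ ∃ a : Fin k → F, enc k hk3 α v δ a = c := by
  rw [Submodule.mem_span_range_iff_exists_fun F]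
  exact exists_congr fun a => by rw [enc_spec hk3 a]

lemma mem_dual_iff (y : Fin (n + 2) → F) :
    y ∈ dualCode (Submodule.span F (Set.range (Gkmat F n k α v δ)))
      ↔ ∀ i : Fin k, ∑ j, Gkmat F n k α v δ i j * y j = 0 := by
  constructor
  · intro hy i
    exact hy (Gkmat F n k α v δ i) (Submodule.subset_span ⟨i, rfl⟩)
  · intro h x hx
    obtain ⟨a, ha⟩ := (Submodule.mem_span_range_iff_exists_fun F).mp hx
    rw [← ha]
    have hx' : ∀ j, (∑ i, a i • Gkmat F n k α v δ i) j = ∑ i, a i * Gkmat F n k α v δ i j := by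
      intro j; simp [Finset.sum_apply]
    calc ∑ j, (∑ i, a i • Gkmat F n k α v δ i) j * y j
        = ∑ j, ∑ i, a i * (Gkmat F n k α v δ i j * y j) := by
          apply Finset.sum_congr rfl; intro j _
          rw [hx', Finset.sum_mul]
          apply Finset.sum_congr rfl; intro i _; ring
      _ = ∑ i, a i * ∑ j, Gkmat F n k α v δ i j * y j := by
          rw [Finset.sum_comm]
          apply Finset.sum_congr rfl; intro i _
          rw [Finset.mul_sum]
      _ = 0 := by
          apply Finset.sum_eq_zero; intro i _
          rw [h i, mul_zero]

lemma row_eq {y : Fin (n + 2) → F}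
    (hy : ∀ i : Fin k, ∑ j, Gkmat F n k α v δ i j * y j = 0) (i : Fin k) :
    (∑ j : Fin n, v j * α j ^ expo k i * y (emb j))
      + (if (i : ℕ) = k - 1 then y sN else 0)
      + ((if (i : ℕ) = k - 2 then 1 else if (i : ℕ) = k - 1 then δ else 0) * y sN1) = 0 := by
  have h := hy i
  rw [sum_split (fun j => Gkmat F n k α v δ i j * y j)] at h
  simp only [G_emb, G_sN, G_sN1] at h
  have hsn : (if (i : ℕ) = k - 1 then (1:F) else 0) * y sN
      = if (i : ℕ) = k - 1 then y sN else 0 := by split <;> simp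
  rw [hsn] at h
  exact h




variable {F : Type*} [Field F] [DecidableEq F] {n k : ℕ}
variable {α v : Fin n → F} {δ : F}

lemma root_bound (hα : Function.Injective α) {p : F[X]} (hp : p ≠ 0) :
    (univ.filter fun j : Fin n => p.eval (α j) = 0).card ≤ p.natDegree := by
  classical
  calc (univ.filter fun j : Fin n => p.eval (α j) = 0).card
      ≤ p.roots.toFinset.card := by
        apply Finset.card_le_card_of_injOn α
        · intro j hj
          rw [Finset.mem_coe, Multiset.mem_toFinset, mem_roots hp]
          exact (Finset.mem_filter.mp hj).2
        · exact Function.Injective.injOn hα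
    _ ≤ Multiset.card p.roots := Multiset.toFinset_card_le _
    _ ≤ p.natDegree := Polynomial.card_roots' p

/-- the zero set of the evaluation polynomial -/
noncomputable def Zset (k : ℕ) (α : Fin n → F) (a : Fin k → F) : Finset (Fin n) :=
  univ.filter fun j => (pol k a).eval (α j) = 0

lemma expo_top (hk3 : 3 ≤ k) : expo k (⟨k - 1, by omega⟩ : Fin k) = k := by
  unfold expo; rw [if_pos rfl]

lemma expo_sub2 (hk3 : 3 ≤ k) : expo k (⟨k - 2, by omega⟩ : Fin k) = k - 2 := by
  unfold expo; rw [if_neg (show ¬(k - 2 = k - 1) by omega)]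

lemma pol_coeff_k (hk3 : 3 ≤ k) (a : Fin k → F) :
    (pol k a).coeff k = a ⟨k - 1, by omega⟩ := by
  have := pol_coeff k a ⟨k - 1, by omega⟩
  rwa [expo_top hk3] at this

lemma pol_coeff_k2 (hk3 : 3 ≤ k) (a : Fin k → F) :
    (pol k a).coeff (k - 2) = a ⟨k - 2, by omega⟩ := by
  have := pol_coeff k a ⟨k - 2, by omega⟩
  rwa [expo_sub2 hk3] at this

lemma weight_formula (hk3 : 3 ≤ k) (hv : ∀ i, v i ≠ 0) (a : Fin k → F) :
    hammingNorm (enc k hk3 α v δ a)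
      = (n - (Zset k α a).card) + (if a ⟨k - 1, by omega⟩ ≠ 0 then 1 else 0)
        + (if a ⟨k - 2, by omega⟩ + δ * a ⟨k - 1, by omega⟩ ≠ 0 then 1 else 0) := by
  rw [hammingNorm_split, enc_sN, enc_sN1]
  congr 1
  congr 1
  have hfilter : (univ.filter fun j : Fin n => enc k hk3 α v δ a (emb j) ≠ 0)
      = univ.filter fun j : Fin n => ¬ (pol k a).eval (α j) = 0 := by
    apply Finset.filter_congr
    intro j _
    rw [enc_emb]
    constructor
    · intro h h'; exact h (by rw [h', mul_zero])
    · intro h h'; exact h ((mul_eq_zero.mp h').resolve_left (hv j))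
  rw [hfilter]
  have := Finset.card_filter_add_card_filter_not
    (s := (univ : Finset (Fin n))) (p := fun j => (pol k a).eval (α j) = 0)
  rw [Finset.card_univ, Fintype.card_fin] at this
  unfold Zset
  omega

lemma pol_ne_zero_of_top (hk3 : 3 ≤ k) {a : Fin k → F} (h : a ⟨k - 1, by omega⟩ ≠ 0) :
    pol k a ≠ 0 := by
  intro hz
  exact h (by rw [← pol_coeff_k hk3 a, hz, coeff_zero])

lemma factor (hk3 : 3 ≤ k) (hα : Function.Injective α) (a : Fin k → F)
    (h1 : a ⟨k - 1, by omega⟩ ≠ 0) (hcard : k ≤ (Zset k α a).card) :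
    (Zset k α a).card = k ∧ (∑ i ∈ Zset k α a, α i) = 0
      ∧ a ⟨k - 2, by omega⟩ = a ⟨k - 1, by omega⟩ * E2' α (Zset k α a) := by
  set Z := Zset k α a with hZ
  have hpne : pol k a ≠ 0 := pol_ne_zero_of_top hk3 h1
  have hle : Z.card ≤ k := le_trans (root_bound hα hpne) (pol_natDegree_le k a)
  have hcardZ : Z.card = k := le_antisymm hle hcard
  have hevalZ : ∀ j ∈ Z, (pol k a).eval (α j) = 0 := by
    intro j hj; exact (Finset.mem_filter.mp hj).2
  set g : F[X] := pol k a - C (a ⟨k - 1, by omega⟩) * PP α Z with hg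
  have hdegg : g.natDegree ≤ k - 1 := by
    apply natDegree_le_iff_coeff_eq_zero.mpr
    intro N hN
    rw [hg, coeff_sub, coeff_C_mul]
    rcases Nat.lt_or_ge k N with h | h
    · rw [coeff_eq_zero_of_natDegree_lt (lt_of_le_of_lt (pol_natDegree_le k a) h),
        PP_coeff_gt α Z (by omega), mul_zero, sub_zero]
    · have hNk : N = k := by omega
      have hPc : (PP α Z).coeff k = 1 := by
        rw [← hcardZ]; exact PP_coeff_card α Z
      rw [hNk, pol_coeff_k hk3, hPc, mul_one, sub_self]
  have hgzero : g = 0 := by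
    apply eq_zero_of_natDegree_lt_card_of_eval_eq_zero' g (Z.image α)
    · intro x hx
      obtain ⟨j, hj, rfl⟩ := Finset.mem_image.mp hx
      rw [hg, eval_sub, eval_mul, eval_C, hevalZ j hj, PP_eval_mem α hj, mul_zero, sub_self]
    · rw [Finset.card_image_of_injective Z hα, hcardZ]
      omega
  have hfac : pol k a = C (a ⟨k - 1, by omega⟩) * PP α Z := by
    have := sub_eq_zero.mp hgzero
    exact this
  have hsum : (∑ i ∈ Z, α i) = 0 := by
    have hc := pol_coeff_k1 hk3 a
    rw [hfac, coeff_C_mul, PP_coeff_top1 α (k - 1) Z (by omega)] at hc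
    rcases mul_eq_zero.mp hc with h | h
    · exact absurd h h1
    · exact neg_eq_zero.mp h
  have hc2 : a ⟨k - 2, by omega⟩ = a ⟨k - 1, by omega⟩ * E2' α Z := by
    have := pol_coeff_k2 hk3 a
    rw [hfac, coeff_C_mul, PP_coeff_top2 α (k - 2) Z (by omega)] at this
    exact this.symm
  exact ⟨hcardZ, hsum, hc2⟩

/-- condition (b') -/
def Bpr (k : ℕ) (α : Fin n → F) (δ : F) : Prop :=
  ¬ ∃ J : Finset (Fin n), J.card = k ∧ (∑ i ∈ J, α i) = 0 ∧ δ + E2' α J = 0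

lemma P1 (hk3 : 3 ≤ k) (hkn : k ≤ n) (hα : Function.Injective α) (hv : ∀ i, v i ≠ 0)
    (hB : Bpr k α δ) (a : Fin k → F) (ha : a ≠ 0) :
    n - k + 2 ≤ hammingNorm (enc k hk3 α v δ a) := by
  rw [weight_formula hk3 hv a]
  by_cases hA : a ⟨k - 1, by omega⟩ = 0
  · have hpne : pol k a ≠ 0 := fun hz => ha (pol_zero_imp k a hz)
    have hZ : (Zset k α a).card ≤ k - 2 :=
      le_trans (root_bound hα hpne) (pol_natDegree_le' hk3 a hA)
    omega
  · have hpne : pol k a ≠ 0 := pol_ne_zero_of_top hk3 hA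
    have hZk : (Zset k α a).card ≤ k := le_trans (root_bound hα hpne) (pol_natDegree_le k a)
    rw [if_pos hA]
    rcases Nat.lt_or_ge (Zset k α a).card k with hlt | hge
    · omega
    · obtain ⟨hcardZ, hsum, hc2⟩ := factor hk3 hα a hA hge
      have hne : a ⟨k - 2, by omega⟩ + δ * a ⟨k - 1, by omega⟩ ≠ 0 := by
        rw [hc2]
        intro h
        apply hB
        refine ⟨Zset k α a, hcardZ, hsum, ?_⟩
        have h2 : a ⟨k - 1, by omega⟩ * (E2' α (Zset k α a) + δ) = 0 := by
          rw [← h]; ring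
        have h3 := (mul_eq_zero.mp h2).resolve_left hA
        linear_combination h3
      rw [if_pos hne]
      omega


variable {F : Type*} [Field F] [DecidableEq F] {n k : ℕ}
variable {α v : Fin n → F} {δ : F}

lemma pol_of_poly (hk3 : 3 ≤ k) (p : F[X]) (hdeg : p.natDegree ≤ k)
    (h1 : p.coeff (k - 1) = 0) :
    pol k (fun i => p.coeff (expo k i)) = p := by
  apply Polynomial.ext
  intro N
  unfold pol
  rw [finset_sum_coeff]
  by_cases hN : ∃ i0 : Fin k, expo k i0 = N
  · obtain ⟨i0, hi0⟩ := hN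
    rw [Finset.sum_eq_single i0]
    · show (C (p.coeff (expo k i0)) * X ^ expo k i0).coeff N = p.coeff N
      rw [coeff_C_mul, coeff_X_pow, if_pos hi0.symm, mul_one, hi0]
    · intro i' _ hne
      rw [coeff_C_mul, coeff_X_pow, if_neg, mul_zero]
      intro h
      exact hne (expo_injective (by omega))
    · simp
  · rw [Finset.sum_eq_zero]
    · symm
      by_cases hN1 : N = k - 1
      · rw [hN1]; exact h1
      · have hNk : k < N := by
          by_contra hc
          push_neg at hc
          apply hN
          by_cases hNk' : N = k
          · exact ⟨⟨k - 1, by omega⟩, by rw [expo_top hk3, hNk']⟩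
          · exact ⟨⟨N, by omega⟩, by unfold expo; rw [if_neg (show ¬(N = k - 1) from hN1)]⟩
        exact coeff_eq_zero_of_natDegree_lt (lt_of_le_of_lt hdeg hNk)
    · intro i _
      rw [coeff_C_mul, coeff_X_pow, if_neg, mul_zero]
      intro h
      exact hN ⟨i, h.symm⟩

lemma Zset_of_PP (hk3 : 3 ≤ k) (hα : Function.Injective α) {J : Finset (Fin n)}
    {a : Fin k → F} (hpol : pol k a = PP α J) : Zset k α a = J := by
  unfold Zset
  ext j
  rw [Finset.mem_filter, hpol]
  constructor
  · rintro ⟨-, h⟩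
    rw [PP_eval α J] at h
    obtain ⟨i, hi, hzero⟩ := Finset.prod_eq_zero_iff.mp h
    have : j = i := hα (by linear_combination hzero)
    rwa [this]
  · intro hj
    exact ⟨Finset.mem_univ j, PP_eval_mem α hj⟩

lemma weight_of_PP (hk3 : 3 ≤ k) (hkn : k ≤ n) (hα : Function.Injective α)
    (hv : ∀ i, v i ≠ 0) {J : Finset (Fin n)} (hJk : J.card = k)
    (he1 : ∑ i ∈ J, α i = 0) :
    ∃ a : Fin k → F, a ≠ 0 ∧
      hammingNorm (enc k hk3 α v δ a)
        = (n - k + 1) + (if δ + E2' α J = 0 then 0 else 1) := by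
  set p : F[X] := PP α J with hp
  have hdeg : p.natDegree ≤ k := by rw [hp, PP_natDegree, hJk]
  have hc1 : p.coeff (k - 1) = 0 := by
    rw [hp, PP_coeff_top1 α (k - 1) J (by omega), he1, neg_zero]
  set a : Fin k → F := fun i => p.coeff (expo k i) with ha
  have hpol : pol k a = p := pol_of_poly hk3 p hdeg hc1
  have haK1 : a ⟨k - 1, by omega⟩ = 1 := by
    rw [ha]
    show p.coeff (expo k ⟨k - 1, by omega⟩) = 1
    rw [expo_top hk3, hp]
    have := PP_coeff_card α J
    rwa [hJk] at this
  have haK2 : a ⟨k - 2, by omega⟩ = E2' α J := by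
    rw [ha]
    show p.coeff (expo k ⟨k - 2, by omega⟩) = E2' α J
    rw [expo_sub2 hk3, hp, PP_coeff_top2 α (k - 2) J (by omega)]
  have hZ : Zset k α a = J := Zset_of_PP hk3 hα hpol
  have hane : a ≠ 0 := by
    intro h0
    rw [h0] at haK1
    exact one_ne_zero haK1.symm
  refine ⟨a, hane, ?_⟩
  have h2 : E2' α J + δ * 1 = δ + E2' α J := by ring
  rw [weight_formula hk3 hv a, hZ, hJk, haK1, haK2, h2, if_pos (one_ne_zero (α := F))]
  by_cases hd : δ + E2' α J = 0
  · rw [if_pos hd, if_neg (not_not_intro hd)]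
  · rw [if_neg hd, if_pos hd]

lemma P3 (hk3 : 3 ≤ k) (hkn : k ≤ n) (hα : Function.Injective α)
    (hv : ∀ i, v i ≠ 0) (h : ¬ Bpr k α δ) :
    ∃ a : Fin k → F, a ≠ 0 ∧ hammingNorm (enc k hk3 α v δ a) = n - k + 1 := by
  rw [Bpr, not_not] at h
  obtain ⟨J, hJk, he1, hd⟩ := h
  obtain ⟨a, hane, hw⟩ := weight_of_PP (δ := δ) hk3 hkn hα hv hJk he1
  rw [if_pos hd] at hw
  exact ⟨a, hane, by omega⟩

lemma P2L (hk3 : 3 ≤ k) (hkn : k ≤ n) (hα : Function.Injective α)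
    (hv : ∀ i, v i ≠ 0) (hB : Bpr k α δ) {L : Finset (Fin n)} (hLk : L.card = k)
    (he1 : ∑ i ∈ L, α i = 0) :
    ∃ a : Fin k → F, a ≠ 0 ∧ hammingNorm (enc k hk3 α v δ a) = n - k + 2 := by
  obtain ⟨a, hane, hw⟩ := weight_of_PP (δ := δ) hk3 hkn hα hv hLk he1
  have hd : ¬ (δ + E2' α L = 0) := fun h => hB ⟨L, hLk, he1, h⟩
  rw [if_neg hd] at hw
  exact ⟨a, hane, by omega⟩

lemma P2M (hk3 : 3 ≤ k) (hkn : k ≤ n) (hα : Function.Injective α)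
    (hv : ∀ i, v i ≠ 0) (hB : Bpr k α δ) {M : Finset (Fin n)} (hM : M.card = k - 1)
    (hδ : δ = (∑ i ∈ M, α i) ^ 2 - E2' α M) :
    ∃ a : Fin k → F, a ≠ 0 ∧ hammingNorm (enc k hk3 α v δ a) = n - k + 2 := by
  set S : F := ∑ i ∈ M, α i with hS
  set p : F[X] := PP α M * (X - C (-S)) with hp
  have hPP1 : (PP α M).coeff (k - 1) = 1 := by
    have := PP_coeff_card α M
    rwa [hM] at this
  have hPP2 : (PP α M).coeff (k - 2) = -S := by
    rw [PP_coeff_top1 α (k - 2) M (by omega)]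
  have hPP3 : (PP α M).coeff (k - 3) = E2' α M := by
    rw [PP_coeff_top2 α (k - 3) M (by omega)]
  have hPPk : (PP α M).coeff k = 0 := PP_coeff_gt α M (by omega)
  have hdeg : p.natDegree = k := by
    rw [hp, natDegree_mul (PP_ne_zero α M) (X_sub_C_ne_zero _), PP_natDegree, hM,
      natDegree_X_sub_C]
    omega
  have hck1 : p.coeff (k - 1) = 0 := by
    have e : k - 1 = (k - 2) + 1 := by omega
    rw [hp, e, coeff_mul_X_sub_C, ← e, hPP2, hPP1]
    ring
  have hck : p.coeff k = 1 := by
    have e : k = (k - 1) + 1 := by omega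
    rw [hp, e, coeff_mul_X_sub_C, ← e, hPP1, hPPk]
    ring
  have hck2 : p.coeff (k - 2) = E2' α M - S ^ 2 := by
    have e : k - 2 = (k - 3) + 1 := by omega
    have e2 : k - 3 + 1 = k - 2 := by omega
    rw [hp, e, coeff_mul_X_sub_C, e2, hPP3, hPP2]
    ring
  set a : Fin k → F := fun i => p.coeff (expo k i) with ha
  have hpol : pol k a = p := pol_of_poly hk3 p (le_of_eq hdeg) hck1
  have haK1 : a ⟨k - 1, by omega⟩ = 1 := by
    rw [ha]; show p.coeff (expo k ⟨k - 1, by omega⟩) = 1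
    rw [expo_top hk3]; exact hck
  have haK2 : a ⟨k - 2, by omega⟩ = E2' α M - S ^ 2 := by
    rw [ha]; show p.coeff (expo k ⟨k - 2, by omega⟩) = E2' α M - S ^ 2
    rw [expo_sub2 hk3]; exact hck2
  have hane : a ≠ 0 := by
    intro h0; rw [h0] at haK1; exact one_ne_zero haK1.symm
  refine ⟨a, hane, ?_⟩
  have hMsub : M ⊆ Zset k α a := by
    intro j hj
    unfold Zset
    rw [Finset.mem_filter]
    refine ⟨Finset.mem_univ j, ?_⟩
    rw [hpol, hp, eval_mul, PP_eval_mem α hj, zero_mul]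
  have hZge : k - 1 ≤ (Zset k α a).card := by
    rw [← hM]; exact Finset.card_le_card hMsub
  have hZle : (Zset k α a).card ≤ n := by
    calc (Zset k α a).card ≤ (univ : Finset (Fin n)).card := Finset.card_filter_le _ _
      _ = n := by rw [Finset.card_univ, Fintype.card_fin]
  have hlow := P1 hk3 hkn hα hv hB a hane
  rw [weight_formula hk3 hv a] at hlow ⊢
  rw [haK1, haK2] at hlow ⊢
  have hzero : E2' α M - S ^ 2 + δ * 1 = 0 := by
    rw [hδ]; ring
  rw [hzero] at hlow ⊢
  rw [if_pos one_ne_zero, if_neg (by simp)] at hlow ⊢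
  omega


variable {F : Type*} [Field F] [DecidableEq F] {n k : ℕ}
variable {α v : Fin n → F} {δ : F}

/-- support of y on the evaluation coordinates -/
def Jset (y : Fin (n + 2) → F) : Finset (Fin n) :=
  univ.filter fun j => y (emb j) ≠ 0

lemma sum_conv (y : Fin (n + 2) → F) {c : Fin n → F} (hc : ∀ j, c j = v j * y (emb j))
    (e : ℕ) :
    ∑ j : Fin n, v j * α j ^ e * y (emb j) = ∑ j ∈ Jset y, c j * α j ^ e := by
  have h1 : ∑ j : Fin n, v j * α j ^ e * y (emb j)
      = ∑ j : Fin n, c j * α j ^ e :=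
    Finset.sum_congr rfl fun j _ => by rw [hc]; ring
  rw [h1]
  symm
  apply Finset.sum_filter_of_ne
  intro j _ hne h0
  apply hne
  rw [hc, h0, mul_zero, zero_mul]

section Rows
variable {y : Fin (n + 2) → F} {c : Fin n → F}

lemma dual_sum_low (hk3 : 3 ≤ k)
    (hy : ∀ i : Fin k, ∑ j, Gkmat F n k α v δ i j * y j = 0)
    (hc : ∀ j, c j = v j * y (emb j)) {e : ℕ} (he : e ≤ k - 3) :
    ∑ j ∈ Jset y, c j * α j ^ e = 0 := by
  have h := row_eq hy ⟨e, by omega⟩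
  have hexpo : expo k (⟨e, by omega⟩ : Fin k) = e := by
    unfold expo; rw [if_neg (show ¬(e = k - 1) by omega)]
  rw [hexpo, if_neg (show ¬(e = k - 1) by omega), if_neg (show ¬(e = k - 2) by omega),
    if_neg (show ¬(e = k - 1) by omega), zero_mul, add_zero, add_zero,
    sum_conv y hc e] at h
  exact h

lemma dual_sum_k2 (hk3 : 3 ≤ k)
    (hy : ∀ i : Fin k, ∑ j, Gkmat F n k α v δ i j * y j = 0)
    (hc : ∀ j, c j = v j * y (emb j)) :
    (∑ j ∈ Jset y, c j * α j ^ (k - 2)) + y sN1 = 0 := by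
  have h := row_eq hy ⟨k - 2, by omega⟩
  have hexpo : expo k (⟨k - 2, by omega⟩ : Fin k) = k - 2 := by
    unfold expo; rw [if_neg (show ¬(k - 2 = k - 1) by omega)]
  rw [hexpo, if_neg (show ¬(k - 2 = k - 1) by omega), if_pos (show k - 2 = k - 2 from rfl),
    add_zero, one_mul, sum_conv y hc (k - 2)] at h
  exact h

lemma dual_sum_k (hk3 : 3 ≤ k)
    (hy : ∀ i : Fin k, ∑ j, Gkmat F n k α v δ i j * y j = 0)
    (hc : ∀ j, c j = v j * y (emb j)) :
    (∑ j ∈ Jset y, c j * α j ^ k) + y sN + δ * y sN1 = 0 := by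
  have h := row_eq hy ⟨k - 1, by omega⟩
  have hexpo : expo k (⟨k - 1, by omega⟩ : Fin k) = k := by
    unfold expo; rw [if_pos (show k - 1 = k - 1 from rfl)]
  rw [hexpo, if_pos (show k - 1 = k - 1 from rfl), if_neg (show ¬(k - 1 = k - 2) by omega),
    if_pos (show k - 1 = k - 1 from rfl), sum_conv y hc k] at h
  exact h

lemma dual_sum_lt_k1 (hk3 : 3 ≤ k)
    (hy : ∀ i : Fin k, ∑ j, Gkmat F n k α v δ i j * y j = 0)
    (hc : ∀ j, c j = v j * y (emb j)) (h1 : y sN1 = 0)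
    {e : ℕ} (he : e < k - 1) :
    ∑ j ∈ Jset y, c j * α j ^ e = 0 := by
  rcases Nat.lt_or_ge e (k - 2) with h | h
  · exact dual_sum_low hk3 hy hc (by omega)
  · have he2 : e = k - 2 := by omega
    have h3 := dual_sum_k2 hk3 hy hc
    rw [h1, add_zero] at h3
    rw [he2]
    exact h3

lemma norm_eq (y : Fin (n + 2) → F) :
    hammingNorm y = (Jset y).card + (if y sN ≠ 0 then 1 else 0)
      + (if y sN1 ≠ 0 then 1 else 0) :=
  hammingNorm_split y

lemma cne (hv : ∀ i, v i ≠ 0) (hc : ∀ j, c j = v j * y (emb j)) :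
    ∀ j ∈ Jset y, c j ≠ 0 := by
  intro j hj
  rw [hc]
  exact mul_ne_zero (hv j) (Finset.mem_filter.mp hj).2

end Rows

lemma fin_cases3 (j : Fin (n + 2)) : (∃ j' : Fin n, j = emb j') ∨ j = sN ∨ j = sN1 := by
  rcases Nat.lt_or_ge (j : ℕ) n with h | h
  · exact Or.inl ⟨⟨j, h⟩, Fin.ext rfl⟩
  · rcases Nat.lt_or_ge (j : ℕ) (n + 1) with h2 | h2
    · exact Or.inr (Or.inl (Fin.ext (by simp [sN]; omega)))
    · have : (j : ℕ) = n + 1 := by have := j.isLt; omega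
      exact Or.inr (Or.inr (Fin.ext (by simp [sN1]; omega)))

lemma P4 (hk3 : 3 ≤ k) (hα : Function.Injective α) (hv : ∀ i, v i ≠ 0)
    {y : Fin (n + 2) → F}
    (hy : ∀ i : Fin k, ∑ j, Gkmat F n k α v δ i j * y j = 0)
    (hnorm : hammingNorm y < k) : y = 0 := by
  obtain ⟨c, hc⟩ : ∃ c : Fin n → F, ∀ j, c j = v j * y (emb j) := ⟨_, fun _ => rfl⟩
  have hnorm' := norm_eq y
  have hcne := cne hv hc
  have h1 : y sN1 = 0 := by
    by_contra h1
    have hJcard : (Jset y).card ≤ k - 2 := by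
      rw [if_pos h1] at hnorm'
      omega
    have hz := vand_zero hα c (m := k - 2) hJcard fun e he => dual_sum_low hk3 hy hc (by omega)
    have hsum0 : ∑ j ∈ Jset y, c j * α j ^ (k - 2) = 0 :=
      Finset.sum_eq_zero fun j hj => by rw [hz j hj, zero_mul]
    have h3 := dual_sum_k2 hk3 hy hc
    rw [hsum0, zero_add] at h3
    exact h1 h3
  have h0 : y sN = 0 := by
    by_contra h0
    have hJcard : (Jset y).card ≤ k - 2 := by
      rw [if_pos h0] at hnorm'
      omega
    have hz := vand_zero hα c (m := k - 1) (by omega)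
      fun e he => dual_sum_lt_k1 hk3 hy hc h1 (by omega)
    have hsum0 : ∑ j ∈ Jset y, c j * α j ^ k = 0 :=
      Finset.sum_eq_zero fun j hj => by rw [hz j hj, zero_mul]
    have h3 := dual_sum_k hk3 hy hc
    rw [hsum0, zero_add, h1, mul_zero, add_zero] at h3
    exact h0 h3
  have hJcard : (Jset y).card ≤ k - 1 := by omega
  have hz := vand_zero hα c (m := k - 1) hJcard
    fun e he => dual_sum_lt_k1 hk3 hy hc h1 (by omega)
  have hemb : ∀ j : Fin n, y (emb j) = 0 := by
    intro j
    by_cases hj : j ∈ Jset y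
    · have h4 := hz j hj
      rw [hc] at h4
      exact (mul_eq_zero.mp h4).resolve_left (hv j)
    · rw [Jset, Finset.mem_filter] at hj
      push_neg at hj
      exact hj (Finset.mem_univ j)
  funext j
  rcases fin_cases3 j with ⟨j', rfl⟩ | rfl | rfl
  · exact hemb j'
  · exact h0
  · exact h1

lemma P6 (hk3 : 3 ≤ k) (hα : Function.Injective α) (hv : ∀ i, v i ≠ 0)
    {y : Fin (n + 2) → F}
    (hy : ∀ i : Fin k, ∑ j, Gkmat F n k α v δ i j * y j = 0)
    (hnorm : hammingNorm y = k) :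
    (∃ L : Finset (Fin n), L.card = k ∧ ∑ i ∈ L, α i = 0) ∨
    (∃ M : Finset (Fin n), M.card = k - 1 ∧ δ = (∑ i ∈ M, α i) ^ 2 - E2' α M) := by
  obtain ⟨c, hc⟩ : ∃ c : Fin n → F, ∀ j, c j = v j * y (emb j) := ⟨_, fun _ => rfl⟩
  have hnorm' := norm_eq y
  have hcne := cne hv hc
  by_cases h1 : y sN1 = 0
  · by_cases h0 : y sN = 0
    · left
      have hJcard : (Jset y).card = k := by
        rw [if_neg (not_not_intro h0), if_neg (not_not_intro h1)] at hnorm'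
        omega
      obtain ⟨j0, hj0⟩ : (Jset y).Nonempty := Finset.card_pos.mp (by omega)
      have htne : c j0 * ww α (Jset y) j0 ≠ 0 :=
        mul_ne_zero (hcne j0 hj0) (ww_ne_zero hα (Jset y) j0)
      have hprop : ∀ j ∈ Jset y, c j = (c j0 * ww α (Jset y) j0) * (ww α (Jset y) j)⁻¹ := by
        intro j hj
        have hp := vand_prop hα c (m := k - 1) (by omega)
          (fun e he => dual_sum_lt_k1 hk3 hy hc h1 (by omega)) hj hj0
        rw [← hp, mul_inv_cancel_right₀ (ww_ne_zero hα (Jset y) j)]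
      have hrow := dual_sum_k hk3 hy hc
      rw [h0, h1, mul_zero, add_zero, add_zero] at hrow
      have hsum : ∑ j ∈ Jset y, c j * α j ^ k
          = (c j0 * ww α (Jset y) j0) * ∑ j ∈ Jset y, α j ^ k * (ww α (Jset y) j)⁻¹ := by
        rw [Finset.mul_sum]
        exact Finset.sum_congr rfl fun j hj => by rw [hprop j hj]; ring
      rw [hsum] at hrow
      have hpow : ∑ j ∈ Jset y, α j ^ k * (ww α (Jset y) j)⁻¹ = ∑ i ∈ Jset y, α i := by
        have h5 := sum_pow_w_card hα (J := Jset y) (c := k - 1) (by omega)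
        rwa [show k - 1 + 1 = k by omega] at h5
      rw [hpow] at hrow
      exact ⟨Jset y, hJcard, (mul_eq_zero.mp hrow).resolve_left htne⟩
    · exfalso
      have hJcard : (Jset y).card = k - 1 := by
        rw [if_pos h0, if_neg (not_not_intro h1)] at hnorm'
        omega
      have hz := vand_zero hα c (m := k - 1) (by omega)
        fun e he => dual_sum_lt_k1 hk3 hy hc h1 (by omega)
      obtain ⟨j0, hj0⟩ : (Jset y).Nonempty := Finset.card_pos.mp (by omega)
      exact hcne j0 hj0 (hz j0 hj0)
  · by_cases h0 : y sN = 0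
    · right
      have hJcard : (Jset y).card = k - 1 := by
        rw [if_neg (not_not_intro h0), if_pos h1] at hnorm'
        omega
      obtain ⟨j0, hj0⟩ : (Jset y).Nonempty := Finset.card_pos.mp (by omega)
      have htne : c j0 * ww α (Jset y) j0 ≠ 0 :=
        mul_ne_zero (hcne j0 hj0) (ww_ne_zero hα (Jset y) j0)
      have hprop : ∀ j ∈ Jset y, c j = (c j0 * ww α (Jset y) j0) * (ww α (Jset y) j)⁻¹ := by
        intro j hj
        have hp := vand_prop hα c (m := k - 2) (by omega)
          (fun e he => dual_sum_low hk3 hy hc (by omega)) hj hj0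
        rw [← hp, mul_inv_cancel_right₀ (ww_ne_zero hα (Jset y) j)]
      have hsumgen : ∀ e : ℕ, ∑ j ∈ Jset y, c j * α j ^ e
          = (c j0 * ww α (Jset y) j0) * ∑ j ∈ Jset y, α j ^ e * (ww α (Jset y) j)⁻¹ := by
        intro e
        rw [Finset.mul_sum]
        exact Finset.sum_congr rfl fun j hj => by rw [hprop j hj]; ring
      have hrow2 := dual_sum_k2 hk3 hy hc
      rw [hsumgen (k - 2)] at hrow2
      have hpow2 : ∑ j ∈ Jset y, α j ^ (k - 2) * (ww α (Jset y) j)⁻¹ = 1 := by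
        have h5 := sum_pow_w_lt hα (J := Jset y) (c := k - 2) (by omega) (m := k - 2) (le_refl _)
        rwa [if_pos rfl] at h5
      rw [hpow2, mul_one] at hrow2
      have hrowk := dual_sum_k hk3 hy hc
      rw [hsumgen k, h0, add_zero] at hrowk
      have hpowk : ∑ j ∈ Jset y, α j ^ k * (ww α (Jset y) j)⁻¹
          = (∑ i ∈ Jset y, α i) ^ 2 - E2' α (Jset y) := by
        have h5 := sum_pow_w_card1 hα (J := Jset y) (c := k - 3) (by omega)
        rwa [show k - 3 + 3 = k by omega] at h5
      rw [hpowk] at hrowk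
      refine ⟨Jset y, hJcard, ?_⟩
      have hy1 : y sN1 = -(c j0 * ww α (Jset y) j0) := by linear_combination hrow2
      rw [hy1] at hrowk
      have h6 : (c j0 * ww α (Jset y) j0)
          * ((∑ i ∈ Jset y, α i) ^ 2 - E2' α (Jset y) - δ) = 0 := by
        linear_combination hrowk
      have h7 := (mul_eq_zero.mp h6).resolve_left htne
      linear_combination -h7
    · exfalso
      have hJcard : (Jset y).card = k - 2 := by
        rw [if_pos h0, if_pos h1] at hnorm'
        omega
      have hz := vand_zero hα c (m := k - 2) (by omega)
        fun e he => dual_sum_low hk3 hy hc (by omega)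
      obtain ⟨j0, hj0⟩ : (Jset y).Nonempty := Finset.card_pos.mp (by omega)
      exact hcne j0 hj0 (hz j0 hj0)


variable {F : Type*} [Field F] [DecidableEq F] {n k : ℕ}
variable {α v : Fin n → F} {δ : F}

lemma P5L (hk3 : 3 ≤ k) (hα : Function.Injective α) (hv : ∀ i, v i ≠ 0)
    {L : Finset (Fin n)} (hL : L.card = k) (he1 : ∑ i ∈ L, α i = 0) :
    ∃ y : Fin (n + 2) → F,
      (∀ i : Fin k, ∑ j, Gkmat F n k α v δ i j * y j = 0) ∧ hammingNorm y = k := by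
  classical
  set y : Fin (n + 2) → F := fun j =>
    if hj : (j : ℕ) < n then (if ⟨j, hj⟩ ∈ L then (v ⟨j, hj⟩ * ww α L ⟨j, hj⟩)⁻¹ else 0)
    else 0 with hy
  have hyemb : ∀ j : Fin n, y (emb j) = if j ∈ L then (v j * ww α L j)⁻¹ else 0 := by
    intro j; rw [hy]; exact dif_pos j.isLt
  have hysN : y sN = 0 := by rw [hy]; exact dif_neg (show ¬(n < n) by omega)
  have hysN1 : y sN1 = 0 := by rw [hy]; exact dif_neg (show ¬(n + 1 < n) by omega)
  have hterm : ∀ (i : Fin k) (j : Fin n), Gkmat F n k α v δ i (emb j) * y (emb j)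
      = if j ∈ L then α j ^ expo k i * (ww α L j)⁻¹ else 0 := by
    intro i j
    rw [G_emb, hyemb]
    by_cases hj : j ∈ L
    · rw [if_pos hj, if_pos hj, mul_inv]
      have h2 : v j * α j ^ expo k i * ((v j)⁻¹ * (ww α L j)⁻¹)
          = (v j * (v j)⁻¹) * (α j ^ expo k i * (ww α L j)⁻¹) := by ring
      rw [h2, mul_inv_cancel₀ (hv j), one_mul]
    · rw [if_neg hj, if_neg hj, mul_zero]
  have hmain : ∀ i : Fin k, ∑ j : Fin n, Gkmat F n k α v δ i (emb j) * y (emb j)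
      = ∑ j ∈ L, α j ^ expo k i * (ww α L j)⁻¹ := by
    intro i
    rw [Finset.sum_congr rfl fun j _ => hterm i j, Finset.sum_ite_mem, Finset.univ_inter]
  refine ⟨y, ?_, ?_⟩
  · intro i
    rw [sum_split (fun j => Gkmat F n k α v δ i j * y j), hmain i, hysN, hysN1, mul_zero,
      mul_zero, add_zero, add_zero]
    by_cases hi : (i : ℕ) = k - 1
    · have hexpo : expo k i = k := by unfold expo; rw [if_pos hi]
      rw [hexpo]
      have h3 := sum_pow_w_card hα (J := L) (c := k - 1) (by omega)
      rw [show k - 1 + 1 = k by omega] at h3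
      rw [h3, he1]
    · have hexpo : expo k i = (i : ℕ) := by unfold expo; rw [if_neg hi]
      rw [hexpo]
      have h3 := sum_pow_w_lt hα (J := L) (c := k - 1) (by omega) (m := (i : ℕ))
        (by have := i.isLt; omega)
      rw [h3, if_neg hi]
  · rw [hammingNorm_split y]
    have hJ : (univ.filter fun j : Fin n => y (emb j) ≠ 0) = L := by
      ext j
      rw [Finset.mem_filter, hyemb]
      constructor
      · rintro ⟨-, hne⟩
        by_contra hj
        rw [if_neg hj] at hne
        exact hne rfl
      · intro hj
        refine ⟨Finset.mem_univ j, ?_⟩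
        rw [if_pos hj]
        exact inv_ne_zero (mul_ne_zero (hv j) (ww_ne_zero hα L j))
    rw [hJ, hL, hysN, hysN1, if_neg (not_not_intro rfl)]
    omega

lemma P5M (hk3 : 3 ≤ k) (hα : Function.Injective α) (hv : ∀ i, v i ≠ 0)
    {M : Finset (Fin n)} (hM : M.card = k - 1)
    (hδ : δ = (∑ i ∈ M, α i) ^ 2 - E2' α M) :
    ∃ y : Fin (n + 2) → F,
      (∀ i : Fin k, ∑ j, Gkmat F n k α v δ i j * y j = 0) ∧ hammingNorm y = k := by
  classical
  set y : Fin (n + 2) → F := fun j =>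
    if hj : (j : ℕ) < n then (if ⟨j, hj⟩ ∈ M then (v ⟨j, hj⟩ * ww α M ⟨j, hj⟩)⁻¹ else 0)
    else if (j : ℕ) = n then 0 else -1 with hy
  have hyemb : ∀ j : Fin n, y (emb j) = if j ∈ M then (v j * ww α M j)⁻¹ else 0 := by
    intro j; rw [hy]; exact dif_pos j.isLt
  have hysN : y sN = 0 := by
    rw [hy]
    show (if hj : (n : ℕ) < n then _ else if (n : ℕ) = n then (0:F) else -1) = 0
    rw [dif_neg (show ¬(n < n) by omega), if_pos rfl]
  have hysN1 : y sN1 = -1 := by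
    rw [hy]
    show (if hj : (n + 1 : ℕ) < n then _ else if (n + 1 : ℕ) = n then (0:F) else -1) = -1
    rw [dif_neg (show ¬(n + 1 < n) by omega), if_neg (show ¬(n + 1 = n) by omega)]
  have hterm : ∀ (i : Fin k) (j : Fin n), Gkmat F n k α v δ i (emb j) * y (emb j)
      = if j ∈ M then α j ^ expo k i * (ww α M j)⁻¹ else 0 := by
    intro i j
    rw [G_emb, hyemb]
    by_cases hj : j ∈ M
    · rw [if_pos hj, if_pos hj, mul_inv]
      have h2 : v j * α j ^ expo k i * ((v j)⁻¹ * (ww α M j)⁻¹)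
          = (v j * (v j)⁻¹) * (α j ^ expo k i * (ww α M j)⁻¹) := by ring
      rw [h2, mul_inv_cancel₀ (hv j), one_mul]
    · rw [if_neg hj, if_neg hj, mul_zero]
  have hmain : ∀ i : Fin k, ∑ j : Fin n, Gkmat F n k α v δ i (emb j) * y (emb j)
      = ∑ j ∈ M, α j ^ expo k i * (ww α M j)⁻¹ := by
    intro i
    rw [Finset.sum_congr rfl fun j _ => hterm i j, Finset.sum_ite_mem, Finset.univ_inter]
  refine ⟨y, ?_, ?_⟩
  · intro i
    rw [sum_split (fun j => Gkmat F n k α v δ i j * y j), hmain i, hysN, hysN1, mul_zero,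
      add_zero, G_sN1]
    by_cases hi : (i : ℕ) = k - 1
    · have hexpo : expo k i = k := by unfold expo; rw [if_pos hi]
      rw [hexpo, if_neg (by omega), if_pos hi]
      have h3 := sum_pow_w_card1 hα (J := M) (c := k - 3) (by omega)
      rw [show k - 3 + 3 = k by omega] at h3
      rw [h3, ← hδ]
      ring
    · have hexpo : expo k i = (i : ℕ) := by unfold expo; rw [if_neg hi]
      rw [hexpo]
      by_cases hi2 : (i : ℕ) = k - 2
      · rw [if_pos hi2, hi2]
        have h3 := sum_pow_w_lt hα (J := M) (c := k - 2) (by omega) (m := k - 2) (le_refl _)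
        rw [h3, if_pos rfl]
        ring
      · rw [if_neg hi2, if_neg hi]
        have h3 := sum_pow_w_lt hα (J := M) (c := k - 2) (by omega) (m := (i : ℕ))
          (by have := i.isLt; omega)
        rw [h3, if_neg hi2]
        ring
  · rw [hammingNorm_split y]
    have hJ : (univ.filter fun j : Fin n => y (emb j) ≠ 0) = M := by
      ext j
      rw [Finset.mem_filter, hyemb]
      constructor
      · rintro ⟨-, hne⟩
        by_contra hj
        rw [if_neg hj] at hne
        exact hne rfl
      · intro hj
        refine ⟨Finset.mem_univ j, ?_⟩
        rw [if_pos hj]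
        exact inv_ne_zero (mul_ne_zero (hv j) (ww_ne_zero hα M j))
    rw [hJ, hM, hysN, hysN1, if_neg (not_not_intro rfl), if_pos (neg_ne_zero.mpr one_ne_zero)]
    omega

lemma enc_zero (hk3 : 3 ≤ k) : enc k hk3 α v δ (0 : Fin k → F) = 0 := by
  funext j
  unfold enc
  have hpol : pol k (0 : Fin k → F) = 0 := by
    unfold pol; simp
  split
  · rw [hpol]; simp
  · split <;> simp

lemma condA (hk3 : 3 ≤ k) (hα : Function.Injective α) :
    ∀ I : Finset (Fin n), I.card = k + 1 →
      ∃ J ⊆ I, J.card = k ∧ ∑ i ∈ J, α i ≠ 0 := by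
  intro I hI
  by_contra hcon
  push_neg at hcon
  obtain ⟨a, ha, b, hb, hab⟩ := Finset.one_lt_card.mp (show 1 < I.card by omega)
  have hJa : (I.erase a).card = k := by rw [Finset.card_erase_of_mem ha]; omega
  have hJb : (I.erase b).card = k := by rw [Finset.card_erase_of_mem hb]; omega
  have h1 := hcon (I.erase a) (Finset.erase_subset a I) hJa
  have h2 := hcon (I.erase b) (Finset.erase_subset b I) hJb
  rw [Finset.sum_erase_eq_sub ha] at h1
  rw [Finset.sum_erase_eq_sub hb] at h2
  exact hab (hα (by linear_combination h2 - h1))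

lemma h2_erase {I : Finset (Fin n)} {i : Fin n} (hi : i ∈ I) :
    (∑ x ∈ I.erase i, α x) ^ 2 - E2' α (I.erase i)
      = (∑ x ∈ I, α x) ^ 2 - E2' α I - α i * ∑ x ∈ I, α x := by
  have h := E2'_erase α hi
  rw [Finset.sum_erase_eq_sub hi] at h ⊢
  linear_combination h

lemma eq_erase {I J' : Finset (Fin n)} (hsub : J' ⊆ I) (hI : I.card = k)
    (hJ' : J'.card = k - 1) (hk3 : 3 ≤ k) : ∃ i ∈ I, J' = I.erase i := by
  have hd : (I \ J').card = 1 := by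
    rw [Finset.card_sdiff_of_subset hsub]
    omega
  obtain ⟨i, hi⟩ := Finset.card_eq_one.mp hd
  have hiI : i ∈ I ∧ i ∉ J' := by
    have : i ∈ I \ J' := by rw [hi]; exact Finset.mem_singleton_self i
    exact ⟨(Finset.mem_sdiff.mp this).1, (Finset.mem_sdiff.mp this).2⟩
  refine ⟨i, hiI.1, ?_⟩
  have hsub2 : J' ⊆ I.erase i := by
    intro j hj
    rw [Finset.mem_erase]
    exact ⟨fun h => hiI.2 (h ▸ hj), hsub hj⟩
  apply Finset.eq_of_subset_of_card_le hsub2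
  rw [Finset.card_erase_of_mem hiI.1, hI, hJ']

lemma condB_iff (hk3 : 3 ≤ k) (hα : Function.Injective α) :
    Bpr k α δ ↔ (∀ I' : Finset (Fin n), I'.card = k →
      ∃ J' ⊆ I', J'.card = k - 1 ∧
        δ - (∑ i ∈ J', α i) ^ 2 + E2' α J' ≠ 0) := by
  constructor
  · intro hB I' hI'
    by_contra hcon
    push_neg at hcon
    obtain ⟨a, ha, b, hb, hab⟩ := Finset.one_lt_card.mp (show 1 < I'.card by omega)
    have key : ∀ i ∈ I', δ = (∑ x ∈ I', α x) ^ 2 - E2' α I' - α i * ∑ x ∈ I', α x := by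
      intro i hi
      have hJc : (I'.erase i).card = k - 1 := by rw [Finset.card_erase_of_mem hi]; omega
      have h1 := hcon (I'.erase i) (Finset.erase_subset i I') hJc
      have h2 := h2_erase (α := α) hi
      linear_combination h1 + h2
    have hS : (α a - α b) * ∑ x ∈ I', α x = 0 := by
      linear_combination key a ha - key b hb
    have hS0 : ∑ x ∈ I', α x = 0 :=
      (mul_eq_zero.mp hS).resolve_left (sub_ne_zero_of_ne fun h => hab (hα h))
    apply hB
    refine ⟨I', hI', hS0, ?_⟩
    have := key a ha
    rw [hS0] at this
    linear_combination this
  · intro hb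
    rintro ⟨J, hJk, hS, hdelta⟩
    obtain ⟨J', hsub, hcard, hne⟩ := hb J hJk
    obtain ⟨i, hi, rfl⟩ := eq_erase hsub hJk hcard hk3
    apply hne
    have h2 := h2_erase (α := α) hi
    rw [hS] at h2
    linear_combination hdelta - h2


end TGRS

/-- `C_k(A,v)` is NMDS (both it, of length `n+2` and dimension `k`, and its dual,
of dimension `n+2-k`, are AMDS: their minimum distances are `n-k+2` and `k`
respectively) iff conditions (a), (b) and (c) hold. -/
theorem stmt_10 (F : Type*) [Field F] [Fintype F] [DecidableEq F] (n k : ℕ)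
    (hk : 3 ≤ k) (hkn : k ≤ n) (hnq : n ≤ Fintype.card F)
    (α v : Fin n → F) (hα : Function.Injective α) (hv : ∀ i, v i ≠ 0) (δ : F) :
    (minDist (Submodule.span F (Set.range (Gkmat F n k α v δ))) (n - k + 2) ∧
        minDist (dualCode (Submodule.span F (Set.range (Gkmat F n k α v δ)))) k) ↔
      ((∀ I : Finset (Fin n), I.card = k + 1 →
          ∃ J ⊆ I, J.card = k ∧ ∑ i ∈ J, α i ≠ 0) ∧
        (∀ I' : Finset (Fin n), I'.card = k →
          ∃ J' ⊆ I', J'.card = k - 1 ∧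
            δ - (∑ i ∈ J', α i) ^ 2 +
              (∑ i ∈ J', ∑ j ∈ J'.filter (fun j => i < j), α i * α j) ≠ 0) ∧
        ((∃ L : Finset (Fin n), L.card = k ∧ ∑ i ∈ L, α i = 0) ∨
          (∃ M : Finset (Fin n), M.card = k - 1 ∧
            δ = (∑ i ∈ M, α i) ^ 2 -
              ∑ i ∈ M, ∑ j ∈ M.filter (fun j => i < j), α i * α j))) := by
  classical
  constructor
  · rintro ⟨hprim, hdual⟩
    have hB : TGRS.Bpr k α δ := by
      by_contra hnB
      obtain ⟨a, hane, hw⟩ := TGRS.P3 hk hkn hα hv hnB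
      have hmem : TGRS.enc k hk α v δ a ∈ Submodule.span F (Set.range (Gkmat F n k α v δ)) :=
        (TGRS.mem_span_iff hk _).mpr ⟨a, rfl⟩
      have hne0 : TGRS.enc k hk α v δ a ≠ 0 := by
        intro h0
        rw [h0, hammingNorm_zero] at hw
        omega
      have hge := hprim.2 _ hmem hne0
      rw [hw] at hge
      omega
    refine ⟨TGRS.condA hk hα, (TGRS.condB_iff hk hα).mp hB, ?_⟩
    obtain ⟨yd, hydmem, hydne, hydnorm⟩ := hdual.1
    exact TGRS.P6 hk hα hv ((TGRS.mem_dual_iff yd).mp hydmem) hydnorm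
  · rintro ⟨hA, hb, hc⟩
    have hB : TGRS.Bpr k α δ := (TGRS.condB_iff hk hα).mpr hb
    constructor
    · constructor
      · rcases hc with ⟨L, hLk, hLs⟩ | ⟨M, hMk, hMd⟩
        · obtain ⟨a, hane, hw⟩ := TGRS.P2L (δ := δ) hk hkn hα hv hB hLk hLs
          refine ⟨_, (TGRS.mem_span_iff hk _).mpr ⟨a, rfl⟩, ?_, hw⟩
          intro h0
          rw [h0, hammingNorm_zero] at hw
          omega
        · obtain ⟨a, hane, hw⟩ := TGRS.P2M hk hkn hα hv hB hMk hMd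
          refine ⟨_, (TGRS.mem_span_iff hk _).mpr ⟨a, rfl⟩, ?_, hw⟩
          intro h0
          rw [h0, hammingNorm_zero] at hw
          omega
      · intro c hmem hne
        obtain ⟨a, ha⟩ := (TGRS.mem_span_iff hk c).mp hmem
        rw [← ha]
        apply TGRS.P1 hk hkn hα hv hB
        intro h0
        apply hne
        rw [← ha, h0, TGRS.enc_zero hk]
    · constructor
      · rcases hc with ⟨L, hLk, hLs⟩ | ⟨M, hMk, hMd⟩
        · obtain ⟨y, hyrow, hynorm⟩ := TGRS.P5L (δ := δ) hk hα hv hLk hLs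
          refine ⟨y, (TGRS.mem_dual_iff y).mpr hyrow, ?_, hynorm⟩
          intro h0
          rw [h0, hammingNorm_zero] at hynorm
          omega
        · obtain ⟨y, hyrow, hynorm⟩ := TGRS.P5M hk hα hv hMk hMd
          refine ⟨y, (TGRS.mem_dual_iff y).mpr hyrow, ?_, hynorm⟩
          intro h0
          rw [h0, hammingNorm_zero] at hynorm
          omega
      · intro y hymem hyne
        by_contra hlt
        push_neg at hlt
        exact hyne (TGRS.P4 hk hα hv ((TGRS.mem_dual_iff y).mp hymem) hlt)
end
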